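/- arXiv:2605.01082 — 5 statements merged into one kernel-verified Lean document; each statement's English description precedes it below -/
import Mathlib

section
/- (Loss decomposition.) Let 𝒟 be a probability distribution over pairs (x,y) ∈ ℝ^d × {0,1} with E[‖x‖] < ∞, let V ⊆ ℝ^d be a linear subspace, and let θ* ∈ V minimize the expected BCE loss L over V. Then for every θ ∈ V, with p*(x) = σ(θ*ᵀx) and q(x) = σ(θᵀx), the loss decomposes exactly as L(θ) = L(θ*) + D(p* ‖ q), where D denotes the expected Bernoulli KL divergence. -/
open MeasureTheory ProbabilityTheory

/-- The sigmoid (logistic) function `σ(z) = 1 / (1 + e^{-z})`. -/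
noncomputable def sigmoid (z : ℝ) : ℝ := 1 / (1 + Real.exp (-z))

/-- The expected BCE loss `L(θ) = E[log(1+e^{θᵀx}) − y·θᵀx]`. -/
noncomputable def bceLoss {d : ℕ} (μ : Measure ((Fin d → ℝ) × ℝ)) (θ : Fin d → ℝ) : ℝ :=
  ∫ q, (Real.log (1 + Real.exp (∑ i, θ i * q.1 i)) - q.2 * (∑ i, θ i * q.1 i)) ∂μ

/-- Pointwise Bernoulli Kullback–Leibler divergence. -/
noncomputable def klBernoulli (p q : ℝ) : ℝ :=
  p * Real.log (p / q) + (1 - p) * Real.log ((1 - p) / (1 - q))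

/-! ### Auxiliary lemmas -/

lemma one_add_exp_pos (z : ℝ) : 0 < 1 + Real.exp z := by positivity

lemma sigmoid_eq (z : ℝ) : sigmoid z = Real.exp z / (1 + Real.exp z) := by
  unfold sigmoid
  rw [Real.exp_neg]
  rw [div_eq_div_iff (by positivity) (one_add_exp_pos z).ne']
  field_simp
  ring

lemma one_sub_sigmoid (z : ℝ) : 1 - sigmoid z = 1 / (1 + Real.exp z) := by
  rw [sigmoid_eq]; field_simp; ring

lemma sigmoid_pos (z : ℝ) : 0 < sigmoid z := by
  rw [sigmoid_eq]; positivity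

lemma sigmoid_lt_one (z : ℝ) : sigmoid z < 1 := by
  have h := one_sub_sigmoid z
  have h2 : 0 < 1 / (1 + Real.exp z) := by positivity
  linarith

lemma abs_sigmoid_le_one (z : ℝ) : |sigmoid z| ≤ 1 := by
  rw [abs_of_pos (sigmoid_pos z)]; exact (sigmoid_lt_one z).le

lemma continuous_sigmoid' : Continuous sigmoid :=
  continuous_const.div (continuous_const.add (Real.continuous_exp.comp continuous_neg))
    fun z => (one_add_exp_pos (-z)).ne'

lemma kl_sigmoid (a b : ℝ) :
    klBernoulli (sigmoid a) (sigmoid b)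
      = sigmoid a * (a - b) + (Real.log (1 + Real.exp b) - Real.log (1 + Real.exp a)) := by
  have h1 : Real.log (sigmoid a / sigmoid b)
      = (a - Real.log (1 + Real.exp a)) - (b - Real.log (1 + Real.exp b)) := by
    rw [Real.log_div (sigmoid_pos a).ne' (sigmoid_pos b).ne', sigmoid_eq, sigmoid_eq,
      Real.log_div (Real.exp_pos a).ne' (one_add_exp_pos a).ne',
      Real.log_div (Real.exp_pos b).ne' (one_add_exp_pos b).ne', Real.log_exp, Real.log_exp]
  have h2 : Real.log ((1 - sigmoid a) / (1 - sigmoid b))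
      = Real.log (1 + Real.exp b) - Real.log (1 + Real.exp a) := by
    rw [one_sub_sigmoid, one_sub_sigmoid,
      Real.log_div (by positivity) (by positivity),
      Real.log_div one_ne_zero (one_add_exp_pos a).ne',
      Real.log_div one_ne_zero (one_add_exp_pos b).ne', Real.log_one]
    ring
  unfold klBernoulli
  rw [h1, h2]; ring

lemma log_one_add_exp_nonneg (z : ℝ) : 0 ≤ Real.log (1 + Real.exp z) :=
  Real.log_nonneg (by linarith [Real.exp_pos z])

lemma log_one_add_exp_le (z : ℝ) : Real.log (1 + Real.exp z) ≤ Real.log 2 + |z| := by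
  have h0 : (1:ℝ) ≤ Real.exp |z| := Real.one_le_exp (abs_nonneg z)
  have hz : Real.exp z ≤ Real.exp |z| := Real.exp_le_exp.2 (le_abs_self z)
  calc Real.log (1 + Real.exp z) ≤ Real.log (2 * Real.exp |z|) :=
        Real.log_le_log (by positivity) (by nlinarith)
    _ = Real.log 2 + |z| := by
        rw [Real.log_mul two_ne_zero (Real.exp_pos _).ne', Real.log_exp]

lemma hasDerivAt_bce_point (a b y t : ℝ) :
    HasDerivAt (fun t => Real.log (1 + Real.exp (a + t * b)) - y * (a + t * b))
      ((sigmoid (a + t * b) - y) * b) t := by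
  have h0 : HasDerivAt (fun t : ℝ => a + t * b) b t := by
    simpa using ((hasDerivAt_id t).mul_const b).const_add a
  have h1 : HasDerivAt (fun t => Real.log (1 + Real.exp (a + t * b)))
      (sigmoid (a + t * b) * b) t := by
    have he : HasDerivAt (fun t => 1 + Real.exp (a + t * b)) (Real.exp (a + t * b) * b) t :=
      ((Real.hasDerivAt_exp _).comp t h0).const_add 1
    have := he.log (one_add_exp_pos _).ne'
    convert this using 1
    rw [sigmoid_eq]; ring
  have h2 : HasDerivAt (fun t => y * (a + t * b)) (y * b) t := h0.const_mul y
  simpa [sub_mul] using h1.fun_sub h2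

section integrability
variable {d : ℕ} {μ : Measure ((Fin d → ℝ) × ℝ)} [IsProbabilityMeasure μ]

lemma meas_lin (c : Fin d → ℝ) : Measurable (fun q : (Fin d → ℝ) × ℝ => ∑ i, c i * q.1 i) :=
  Finset.measurable_sum Finset.univ
    (fun i _ => by fun_prop)

lemma int_lin (hx : Integrable (fun q : (Fin d → ℝ) × ℝ => ‖q.1‖) μ) (c : Fin d → ℝ) :
    Integrable (fun q : (Fin d → ℝ) × ℝ => ∑ i, c i * q.1 i) μ := by
  refine (hx.const_mul (∑ i, |c i|)).mono' (meas_lin c).aestronglyMeasurable ?_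
  filter_upwards with q
  calc ‖∑ i, c i * q.1 i‖ ≤ ∑ i, ‖c i * q.1 i‖ := norm_sum_le _ _
    _ ≤ ∑ i, |c i| * ‖q.1‖ := by
        refine Finset.sum_le_sum fun i _ => ?_
        rw [norm_mul, Real.norm_eq_abs, Real.norm_eq_abs]
        exact mul_le_mul_of_nonneg_left (norm_le_pi_norm q.1 i) (abs_nonneg _)
    _ = (∑ i, |c i|) * ‖q.1‖ := by rw [Finset.sum_mul]

lemma int_log_term {S : (Fin d → ℝ) × ℝ → ℝ} (hSm : Measurable S) (hS : Integrable S μ) :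
    Integrable (fun q => Real.log (1 + Real.exp (S q))) μ := by
  refine ((integrable_const (Real.log 2)).add hS.abs).mono'
    ((Real.measurable_log.comp
      (measurable_const.add (Real.measurable_exp.comp hSm))).aestronglyMeasurable) ?_
  filter_upwards with q
  rw [Real.norm_eq_abs, abs_of_nonneg (log_one_add_exp_nonneg _)]
  exact log_one_add_exp_le _

lemma int_mul_bdd {S c : (Fin d → ℝ) × ℝ → ℝ} (hS : Integrable S μ)
    (hm : AEStronglyMeasurable (fun q => c q * S q) μ)
    (hc : ∀ᵐ q ∂μ, |c q| ≤ 1) :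
    Integrable (fun q => c q * S q) μ := by
  refine hS.abs.mono' hm ?_
  filter_upwards [hc] with q hq
  rw [Real.norm_eq_abs, abs_mul]
  nlinarith [abs_nonneg (S q), abs_nonneg (c q)]

end integrability

/-! ### Main theorem -/

/-- Loss decomposition: if `θ*` minimizes the expected BCE loss over a linear subspace `V`,
then for every `θ ∈ V`, `L(θ) = L(θ*) + D(p* ‖ q)`, where `p*(x) = σ(θ*ᵀx)`,
`q(x) = σ(θᵀx)`, and `D` is the expected Bernoulli KL divergence. -/
theorem bce_loss_decomposition
    {d : ℕ} (μ : Measure ((Fin d → ℝ) × ℝ)) [IsProbabilityMeasure μ]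
    (hy : ∀ᵐ q ∂μ, q.2 = 0 ∨ q.2 = 1)
    (hx : Integrable (fun q : (Fin d → ℝ) × ℝ => ‖q.1‖) μ)
    (V : Submodule ℝ (Fin d → ℝ))
    (θs : Fin d → ℝ) (hθsV : θs ∈ V)
    (hmin : ∀ θ ∈ V, bceLoss μ θs ≤ bceLoss μ θ)
    (θ : Fin d → ℝ) (hθV : θ ∈ V) :
    bceLoss μ θ = bceLoss μ θs
      + ∫ q, klBernoulli (sigmoid (∑ i, θs i * q.1 i)) (sigmoid (∑ i, θ i * q.1 i)) ∂μ := by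
  classical
  -- notation
  set v : Fin d → ℝ := θ - θs with hv
  have hy1 : ∀ᵐ q ∂μ, |q.2| ≤ 1 := by
    filter_upwards [hy] with q hq
    rcases hq with h | h <;> simp [h]
  -- abbreviations (as plain functions)
  let A : (Fin d → ℝ) × ℝ → ℝ := fun q => ∑ i, θs i * q.1 i
  let B : (Fin d → ℝ) × ℝ → ℝ := fun q => ∑ i, v i * q.1 i
  have mA : Measurable A := meas_lin θs
  have mB : Measurable B := meas_lin v
  have iA : Integrable A μ := int_lin hx θs
  have iB : Integrable B μ := int_lin hx v
  -- pointwise sum identities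
  have hAB : ∀ (t : ℝ) (q : (Fin d → ℝ) × ℝ),
      A q + t * B q = ∑ i, (θs + t • v) i * q.1 i := by
    intro t q
    simp only [A, B, Pi.add_apply, Pi.smul_apply, smul_eq_mul, add_mul,
      Finset.sum_add_distrib, Finset.mul_sum, mul_assoc]
  have hSθ : ∀ q : (Fin d → ℝ) × ℝ, ∑ i, θ i * q.1 i = A q + B q := by
    intro q
    simp only [A, B, hv, Pi.sub_apply, sub_mul, Finset.sum_sub_distrib]
    ring
  -- integrability of y-linear terms
  have int_ymul : ∀ c : Fin d → ℝ,
      Integrable (fun q : (Fin d → ℝ) × ℝ => q.2 * (∑ i, c i * q.1 i)) μ := by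
    intro c
    exact int_mul_bdd (int_lin hx c)
      ((measurable_snd.mul (meas_lin c)).aestronglyMeasurable) hy1
  -- the key first-order condition
  have key : (∫ q, (sigmoid (A q) - q.2) * B q ∂μ) = 0 := by
    set F : ℝ → (Fin d → ℝ) × ℝ → ℝ := fun t q =>
      Real.log (1 + Real.exp (A q + t * B q)) - q.2 * (A q + t * B q) with hF
    set F' : ℝ → (Fin d → ℝ) × ℝ → ℝ := fun t q =>
      (sigmoid (A q + t * B q) - q.2) * B q with hF'
    have mlin : ∀ t : ℝ, Measurable (fun q => A q + t * B q) :=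
      fun t => mA.add (mB.const_mul t)
    have ilin : ∀ t : ℝ, Integrable (fun q => A q + t * B q) μ :=
      fun t => iA.add (iB.const_mul t)
    have hF_meas : ∀ t : ℝ, AEStronglyMeasurable (F t) μ := by
      intro t
      exact ((Real.measurable_log.comp
        (measurable_const.add (Real.measurable_exp.comp (mlin t)))).sub
        (measurable_snd.mul (mlin t))).aestronglyMeasurable
    have hF_int : ∀ t : ℝ, Integrable (F t) μ := by
      intro t
      exact (int_log_term (mlin t) (ilin t)).sub
        (int_mul_bdd (ilin t) ((measurable_snd.mul (mlin t)).aestronglyMeasurable) hy1)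
    have hF'_meas : AEStronglyMeasurable (F' 0) μ := by
      exact (((continuous_sigmoid'.measurable.comp (mlin 0)).sub measurable_snd).mul
        mB).aestronglyMeasurable
    have h_bound : ∀ᵐ q ∂μ, ∀ t ∈ Metric.ball (0:ℝ) 1, ‖F' t q‖ ≤ 2 * |B q| := by
      filter_upwards [hy1] with q hq
      intro t _
      rw [hF']
      rw [Real.norm_eq_abs, abs_mul]
      have h1 : |sigmoid (A q + t * B q) - q.2| ≤ 2 := by
        have := abs_sigmoid_le_one (A q + t * B q)
        calc |sigmoid (A q + t * B q) - q.2| ≤ |sigmoid (A q + t * B q)| + |q.2| := abs_sub _ _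
          _ ≤ 2 := by linarith
      nlinarith [abs_nonneg (B q)]
    have bound_int : Integrable (fun q => 2 * |B q|) μ := iB.abs.const_mul 2
    have h_diff : ∀ᵐ q ∂μ, ∀ t ∈ Metric.ball (0:ℝ) 1,
        HasDerivAt (fun t => F t q) (F' t q) t := by
      filter_upwards with q
      intro t _
      exact hasDerivAt_bce_point (A q) (B q) q.2 t
    have hder := (hasDerivAt_integral_of_dominated_loc_of_deriv_le (Metric.ball_mem_nhds 0 one_pos)
      (Filter.Eventually.of_forall hF_meas) (hF_int 0) hF'_meas h_bound bound_int h_diff).2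
    -- the integral of F t is the loss at θs + t • v
    have hgt : ∀ t : ℝ, (∫ q, F t q ∂μ) = bceLoss μ (θs + t • v) := by
      intro t
      unfold bceLoss
      refine integral_congr_ae (Filter.Eventually.of_forall fun q => ?_)
      rw [hF]
      simp only [hAB t q]
    have hmem : ∀ t : ℝ, θs + t • v ∈ V :=
      fun t => V.add_mem hθsV (V.smul_mem t (by rw [hv]; exact V.sub_mem hθV hθsV))
    have hlocmin : IsLocalMin (fun t => ∫ q, F t q ∂μ) 0 := by
      refine Filter.Eventually.of_forall fun t => ?_
      simp only
      rw [hgt t, hgt 0]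
      have h0 : θs + (0:ℝ) • v = θs := by simp
      rw [h0]
      exact hmin _ (hmem t)
    have hzero : (∫ q, F' 0 q ∂μ) = 0 := hlocmin.hasDerivAt_eq_zero hder
    rw [← hzero]
    refine integral_congr_ae (Filter.Eventually.of_forall fun q => ?_)
    rw [hF']
    norm_num
  -- integrability of the three integrands
  have hint1 : Integrable (fun q : (Fin d → ℝ) × ℝ =>
      Real.log (1 + Real.exp (∑ i, θ i * q.1 i)) - q.2 * (∑ i, θ i * q.1 i)) μ :=
    (int_log_term (meas_lin θ) (int_lin hx θ)).sub (int_ymul θ)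
  have hint0 : Integrable (fun q : (Fin d → ℝ) × ℝ =>
      Real.log (1 + Real.exp (∑ i, θs i * q.1 i)) - q.2 * (∑ i, θs i * q.1 i)) μ :=
    (int_log_term (meas_lin θs) (int_lin hx θs)).sub (int_ymul θs)
  have hintK : Integrable (fun q : (Fin d → ℝ) × ℝ =>
      klBernoulli (sigmoid (∑ i, θs i * q.1 i)) (sigmoid (∑ i, θ i * q.1 i))) μ := by
    have t1 : Integrable (fun q : (Fin d → ℝ) × ℝ =>
        sigmoid (A q) * ((∑ i, θs i * q.1 i) - (∑ i, θ i * q.1 i))) μ :=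
      int_mul_bdd (iA.sub (int_lin hx θ))
        (((continuous_sigmoid'.measurable.comp mA).mul
          (mA.sub (meas_lin θ))).aestronglyMeasurable)
        (Filter.Eventually.of_forall fun q => abs_sigmoid_le_one _)
    have t2 : Integrable (fun q : (Fin d → ℝ) × ℝ =>
        Real.log (1 + Real.exp (∑ i, θ i * q.1 i))
          - Real.log (1 + Real.exp (∑ i, θs i * q.1 i))) μ :=
      (int_log_term (meas_lin θ) (int_lin hx θ)).sub
        (int_log_term (meas_lin θs) (int_lin hx θs))
    refine (t1.add t2).congr (Filter.Eventually.of_forall fun q => ?_)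
    exact (kl_sigmoid _ _).symm
  -- assemble
  have hsplit : bceLoss μ θ - bceLoss μ θs
      - (∫ q, klBernoulli (sigmoid (∑ i, θs i * q.1 i)) (sigmoid (∑ i, θ i * q.1 i)) ∂μ)
      = ∫ q, (sigmoid (A q) - q.2) * B q ∂μ := by
    unfold bceLoss
    have hint10 : Integrable (fun q : (Fin d → ℝ) × ℝ =>
        Real.log (1 + Real.exp (∑ i, θ i * q.1 i)) - q.2 * (∑ i, θ i * q.1 i)
          - (Real.log (1 + Real.exp (∑ i, θs i * q.1 i)) - q.2 * (∑ i, θs i * q.1 i))) μ :=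
      hint1.sub hint0
    rw [← integral_sub hint1 hint0, ← integral_sub hint10 hintK]
    refine integral_congr_ae (Filter.Eventually.of_forall fun q => ?_)
    simp only [kl_sigmoid, hSθ q]
    ring
  rw [key] at hsplit
  linarith
end

section
/- Let 𝒟 be a probability distribution over pairs (x,y) ∈ ℝ^d × {0,1} with E[‖x‖] < ∞, let V ⊆ ℝ^d be a linear subspace, and let θ_p ∈ V minimize the expected BCE loss over V; write p(x) = σ(θ_pᵀx) and z_p(x) = θ_pᵀx. Then for any measurable function z_g : ℝ^d → ℝ (with g = σ∘z_g and all expectations below finite), L(p) ≤ L(g) + |E[(p(x) − y) z_g(x)]|, where L(h) = E[l(logit of h, y)] denotes expected BCE loss. -/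
open MeasureTheory ProbabilityTheory

section helpers
variable {d : ℕ}

lemma lin_continuous (θ : Fin d → ℝ) :
    Continuous (fun q : (Fin d → ℝ) × ℝ => ∑ i, θ i * q.1 i) :=
  continuous_finset_sum _ fun i _ =>
    continuous_const.mul ((continuous_apply i).comp continuous_fst)

lemma lin_abs_le (θ : Fin d → ℝ) (q : (Fin d → ℝ) × ℝ) :
    |∑ i, θ i * q.1 i| ≤ (∑ i, |θ i|) * ‖q.1‖ := by
  calc |∑ i, θ i * q.1 i| ≤ ∑ i, |θ i * q.1 i| := Finset.abs_sum_le_sum_abs _ _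
    _ ≤ ∑ i : Fin d, |θ i| * ‖q.1‖ := by
        refine Finset.sum_le_sum fun i _ => ?_
        rw [abs_mul]
        exact mul_le_mul_of_nonneg_left
          ((Real.norm_eq_abs (q.1 i)) ▸ norm_le_pi_norm q.1 i) (abs_nonneg _)
    _ = (∑ i, |θ i|) * ‖q.1‖ := by rw [Finset.sum_mul]

lemma lin_integrable (μ : Measure ((Fin d → ℝ) × ℝ))
    (hx : Integrable (fun q : (Fin d → ℝ) × ℝ => ‖q.1‖) μ) (θ : Fin d → ℝ) :
    Integrable (fun q : (Fin d → ℝ) × ℝ => ∑ i, θ i * q.1 i) μ := by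
  refine (hx.const_mul (∑ i, |θ i|)).mono'
    (lin_continuous θ).aestronglyMeasurable
    (Filter.Eventually.of_forall fun q => ?_)
  rw [Real.norm_eq_abs]
  exact lin_abs_le θ q

lemma log1pexp_nonneg (u : ℝ) : 0 ≤ Real.log (1 + Real.exp u) :=
  Real.log_nonneg (by linarith [Real.exp_pos u])

lemma log1pexp_le (u : ℝ) : Real.log (1 + Real.exp u) ≤ Real.log 2 + |u| := by
  have h1 : (1:ℝ) + Real.exp u ≤ 2 * Real.exp |u| := by
    have h2 : Real.exp u ≤ Real.exp |u| := Real.exp_le_exp.2 (le_abs_self u)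
    have h3 : (1:ℝ) ≤ Real.exp |u| := Real.one_le_exp (abs_nonneg u)
    linarith
  calc Real.log (1 + Real.exp u) ≤ Real.log (2 * Real.exp |u|) :=
        Real.log_le_log (by positivity) h1
    _ = Real.log 2 + |u| := by rw [Real.log_mul (by norm_num) (Real.exp_ne_zero _), Real.log_exp]

lemma loss_integrable (μ : Measure ((Fin d → ℝ) × ℝ)) [IsProbabilityMeasure μ]
    (hy : ∀ᵐ q ∂μ, q.2 = 0 ∨ q.2 = 1)
    (hx : Integrable (fun q : (Fin d → ℝ) × ℝ => ‖q.1‖) μ) (θ : Fin d → ℝ) :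
    Integrable (fun q : (Fin d → ℝ) × ℝ =>
      Real.log (1 + Real.exp (∑ i, θ i * q.1 i)) - q.2 * (∑ i, θ i * q.1 i)) μ := by
  have hlin := lin_integrable μ hx θ
  have h1 : Integrable (fun q : (Fin d → ℝ) × ℝ =>
      Real.log (1 + Real.exp (∑ i, θ i * q.1 i))) μ := by
    refine ((integrable_const (Real.log 2)).add hlin.abs).mono'
      ((Continuous.aestronglyMeasurable
        (((continuous_const.add Real.continuous_exp).comp (lin_continuous θ)).log
          (fun q => by simp only [Function.comp_apply, Pi.add_apply]; positivity))))
      (Filter.Eventually.of_forall fun q => ?_)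
    rw [Real.norm_eq_abs, abs_of_nonneg (log1pexp_nonneg _)]
    exact log1pexp_le _
  have h2 : Integrable (fun q : (Fin d → ℝ) × ℝ => q.2 * (∑ i, θ i * q.1 i)) μ := by
    refine hlin.abs.mono'
      ((measurable_snd.mul (lin_continuous θ).measurable).aestronglyMeasurable) ?_
    filter_upwards [hy] with q hq
    rw [Real.norm_eq_abs, abs_mul]
    rcases hq with h | h <;> rw [h] <;> simp
  exact h1.sub h2

lemma res_integrable (μ : Measure ((Fin d → ℝ) × ℝ))
    (hy : ∀ᵐ q ∂μ, q.2 = 0 ∨ q.2 = 1) (v w : (Fin d → ℝ) × ℝ → ℝ)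
    (hv : Measurable v) (hw : Measurable w)
    (hwInt : Integrable w μ) :
    Integrable (fun q => (sigmoid (v q) - q.2) * w q) μ := by
  refine hwInt.abs.mono'
    (((continuous_sigmoid'.measurable.comp hv).sub measurable_snd).mul hw).aestronglyMeasurable ?_
  filter_upwards [hy] with q hq
  rw [Real.norm_eq_abs, abs_mul]
  have h1 : |sigmoid (v q) - q.2| ≤ 1 := by
    have := sigmoid_pos (v q); have := sigmoid_lt_one (v q)
    rcases hq with h | h <;> rw [h, abs_le] <;> constructor <;> linarith
  calc |sigmoid (v q) - q.2| * |w q| ≤ 1 * |w q| :=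
        mul_le_mul_of_nonneg_right h1 (abs_nonneg _)
    _ = |w q| := one_mul _

end helpers

lemma hasDerivAt_log1pexp (z : ℝ) :
    HasDerivAt (fun u => Real.log (1 + Real.exp u)) (sigmoid z) z := by
  have h1 : HasDerivAt (fun u : ℝ => 1 + Real.exp u) (Real.exp z) z :=
    (Real.hasDerivAt_exp z).const_add 1
  have h2 := h1.log (by positivity)
  convert h2 using 1
  unfold sigmoid
  rw [Real.exp_neg]
  field_simp
  ring

lemma sigmoid_monotone : Monotone sigmoid := by
  intro a b hab
  unfold sigmoid
  apply one_div_le_one_div_of_le (by positivity)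
  have := Real.exp_le_exp.2 (neg_le_neg hab)
  linarith

lemma convexOn_log1pexp : ConvexOn ℝ Set.univ (fun u => Real.log (1 + Real.exp u)) := by
  apply Monotone.convexOn_univ_of_deriv
  · exact fun z => (hasDerivAt_log1pexp z).differentiableAt
  · have : deriv (fun u => Real.log (1 + Real.exp u)) = sigmoid :=
      funext fun z => (hasDerivAt_log1pexp z).deriv
    rw [this]; exact sigmoid_monotone

/-- Subgradient inequality for `log(1+exp)`. -/
lemma log1pexp_subgrad (z w : ℝ) :
    Real.log (1 + Real.exp z) + sigmoid z * (w - z) ≤ Real.log (1 + Real.exp w) := by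
  rcases lt_trichotomy z w with h | h | h
  · have := convexOn_log1pexp.le_slope_of_hasDerivAt (Set.mem_univ z) (Set.mem_univ w) h
      (hasDerivAt_log1pexp z)
    rw [slope_def_field] at this
    have hw : 0 < w - z := by linarith
    have := (le_div_iff₀ hw).mp this
    linarith
  · subst h; simp
  · have := convexOn_log1pexp.slope_le_of_hasDerivAt (Set.mem_univ w) (Set.mem_univ z) h
      (hasDerivAt_log1pexp z)
    rw [slope_def_field] at this
    have hw : 0 < z - w := by linarith
    have := (div_le_iff₀ hw).mp this
    nlinarith

/-- Pointwise convexity lower bound for BCE loss. -/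
lemma bce_pointwise (z w y : ℝ) :
    (Real.log (1 + Real.exp z) - y * z) + (sigmoid z - y) * (w - z)
      ≤ Real.log (1 + Real.exp w) - y * w := by
  have := log1pexp_subgrad z w
  nlinarith


/-- If `θ_p` minimizes expected BCE loss over a linear subspace `V` (with predictor
`p = σ∘z_p`, `z_p(x) = θ_pᵀx`), then for any measurable logit `z_g` (with the relevant
expectations finite), `L(p) ≤ L(g) + |E[(p(x) − y) z_g(x)]|`. -/
theorem bceLoss_le_of_subspace_min
    {d : ℕ} (μ : Measure ((Fin d → ℝ) × ℝ)) [IsProbabilityMeasure μ]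
    (hy : ∀ᵐ q ∂μ, q.2 = 0 ∨ q.2 = 1)
    (hx : Integrable (fun q : (Fin d → ℝ) × ℝ => ‖q.1‖) μ)
    (V : Submodule ℝ (Fin d → ℝ))
    (θp : Fin d → ℝ) (hθpV : θp ∈ V)
    (hmin : ∀ θ ∈ V, bceLoss μ θp ≤ bceLoss μ θ)
    (zg : (Fin d → ℝ) → ℝ) (hzg : Measurable zg)
    (hgInt : Integrable (fun q : (Fin d → ℝ) × ℝ =>
      Real.log (1 + Real.exp (zg q.1)) - q.2 * zg q.1) μ)
    (hresInt : Integrable (fun q : (Fin d → ℝ) × ℝ =>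
      (sigmoid (∑ i, θp i * q.1 i) - q.2) * zg q.1) μ) :
    bceLoss μ θp
      ≤ (∫ q, (Real.log (1 + Real.exp (zg q.1)) - q.2 * zg q.1) ∂μ)
        + |∫ q, (sigmoid (∑ i, θp i * q.1 i) - q.2) * zg q.1 ∂μ| := by
  set zp : (Fin d → ℝ) × ℝ → ℝ := fun q => ∑ i, θp i * q.1 i with hzp
  -- first-order condition: the residual is orthogonal to its own logit
  have hFOC : (∫ q, (sigmoid (zp q) - q.2) * zp q ∂μ) = 0 := by
    set w : (Fin d → ℝ) × ℝ → ℝ := fun q => ∑ i, θp i * q.1 i with hw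
    have hwInt : Integrable w μ := lin_integrable μ hx θp
    set Φ : ℝ → ℝ := fun t => ∫ q, (sigmoid (zp q + t * w q) - q.2) * w q ∂μ with hΦ
    have hsum : ∀ (t : ℝ) (q : (Fin d → ℝ) × ℝ),
        (∑ i, (θp + t • θp) i * q.1 i) = zp q + t * w q := by
      intro t q
      simp only [Pi.add_apply, Pi.smul_apply, smul_eq_mul, add_mul, hzp, hw]
      rw [Finset.sum_add_distrib, Finset.mul_sum]
      ring_nf
    -- Step 1: t * Φ t ≥ 0 for all t
    have hstep : ∀ t : ℝ, 0 ≤ t * Φ t := by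
      intro t
      have hmem : θp + t • θp ∈ V := V.add_mem hθpV (V.smul_mem t hθpV)
      have hmin' := hmin _ hmem
      have hA : Integrable (fun q => Real.log (1 + Real.exp (zp q + t * w q))
          - q.2 * (zp q + t * w q)) μ := by
        have := loss_integrable μ hy hx (θp + t • θp)
        simpa only [hsum] using this
      have hB : Integrable (fun q => (sigmoid (zp q + t * w q) - q.2) * w q) μ :=
        res_integrable μ hy _ w
          (((lin_continuous θp).measurable.comp measurable_id).add_const 0 |> fun _ => by
            exact ((lin_continuous θp).measurable.add
              (((lin_continuous θp).measurable).const_mul t))) (lin_continuous θp).measurable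
          hwInt
      have hC : Integrable (fun q => Real.log (1 + Real.exp (zp q)) - q.2 * zp q) μ :=
        loss_integrable μ hy hx θp
      have hpt : ∀ q : (Fin d → ℝ) × ℝ,
          (Real.log (1 + Real.exp (zp q + t * w q)) - q.2 * (zp q + t * w q))
            - t * ((sigmoid (zp q + t * w q) - q.2) * w q)
          ≤ Real.log (1 + Real.exp (zp q)) - q.2 * zp q := by
        intro q
        have := bce_pointwise (zp q + t * w q) (zp q) q.2
        nlinarith [this]
      have hIneq := integral_mono (hA.sub (hB.const_mul t)) hC hpt
      simp only [Pi.sub_apply] at hIneq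
      rw [integral_sub hA (hB.const_mul t), integral_const_mul] at hIneq
      have hL' : bceLoss μ (θp + t • θp)
          = ∫ q, (Real.log (1 + Real.exp (zp q + t * w q)) - q.2 * (zp q + t * w q)) ∂μ := by
        unfold bceLoss; congr 1; funext q; rw [hsum]
      have hLp : bceLoss μ θp = ∫ q, (Real.log (1 + Real.exp (zp q)) - q.2 * zp q) ∂μ := rfl
      rw [hL'] at hmin'; rw [hLp] at hmin'
      have : Φ t = ∫ q, (sigmoid (zp q + t * w q) - q.2) * w q ∂μ := rfl
      linarith [hIneq, hmin']
    -- Step 2: Φ is continuous at 0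
    have hcont : ContinuousAt Φ 0 := by
      apply continuousAt_of_dominated (bound := fun q => |w q|)
      · refine Filter.Eventually.of_forall fun t => ?_
        exact (((continuous_sigmoid'.measurable.comp
          ((lin_continuous θp).measurable.add
            ((lin_continuous θp).measurable.const_mul t))).sub measurable_snd).mul
          (lin_continuous θp).measurable).aestronglyMeasurable
      · refine Filter.Eventually.of_forall fun t => ?_
        filter_upwards [hy] with q hq
        rw [Real.norm_eq_abs, abs_mul]
        have h1 : |sigmoid (zp q + t * w q) - q.2| ≤ 1 := by
          have := sigmoid_pos (zp q + t * w q); have := sigmoid_lt_one (zp q + t * w q)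
          rcases hq with h | h <;> rw [h, abs_le] <;> constructor <;> linarith
        calc |sigmoid (zp q + t * w q) - q.2| * |w q| ≤ 1 * |w q| :=
              mul_le_mul_of_nonneg_right h1 (abs_nonneg _)
          _ = |w q| := one_mul _
      · exact hwInt.abs
      · refine Filter.Eventually.of_forall fun q => ?_
        exact (((continuous_sigmoid'.comp
          (continuous_const.add (continuous_id.mul continuous_const))).sub
          continuous_const).mul continuous_const).continuousAt
    -- Step 3: Φ 0 = 0
    have hge : 0 ≤ Φ 0 := by
      refine ge_of_tendsto (hcont.tendsto.mono_left nhdsWithin_le_nhds :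
        Filter.Tendsto Φ (nhdsWithin 0 (Set.Ioi 0)) (nhds (Φ 0))) ?_
      filter_upwards [self_mem_nhdsWithin] with t (ht : (0:ℝ) < t)
      nlinarith [hstep t]
    have hle : Φ 0 ≤ 0 := by
      refine le_of_tendsto (hcont.tendsto.mono_left nhdsWithin_le_nhds :
        Filter.Tendsto Φ (nhdsWithin 0 (Set.Iio 0)) (nhds (Φ 0))) ?_
      filter_upwards [self_mem_nhdsWithin] with t (ht : t < (0:ℝ))
      nlinarith [hstep t]
    have h0 : Φ 0 = 0 := le_antisymm hle hge
    have : Φ 0 = ∫ q, (sigmoid (zp q) - q.2) * zp q ∂μ := by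
      simp only [hΦ, zero_mul, add_zero]
      rfl
    rw [← this]; exact h0
  -- final assembly via convexity
  have hresp : Integrable (fun q => (sigmoid (zp q) - q.2) * zp q) μ :=
    res_integrable μ hy zp zp (lin_continuous θp).measurable (lin_continuous θp).measurable
      (lin_integrable μ hx θp)
  have hLp : Integrable (fun q => Real.log (1 + Real.exp (zp q)) - q.2 * zp q) μ :=
    loss_integrable μ hy hx θp
  have hpt : ∀ q : (Fin d → ℝ) × ℝ,
      (Real.log (1 + Real.exp (zp q)) - q.2 * zp q)
        + ((sigmoid (zp q) - q.2) * zg q.1 - (sigmoid (zp q) - q.2) * zp q)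
      ≤ Real.log (1 + Real.exp (zg q.1)) - q.2 * zg q.1 := by
    intro q
    have := bce_pointwise (zp q) (zg q.1) q.2
    nlinarith [this]
  have hInt1 : Integrable (fun q : (Fin d → ℝ) × ℝ =>
      (sigmoid (zp q) - q.2) * zg q.1 - (sigmoid (zp q) - q.2) * zp q) μ := hresInt.sub hresp
  have hInt2 : Integrable (fun q : (Fin d → ℝ) × ℝ =>
      (Real.log (1 + Real.exp (zp q)) - q.2 * zp q)
        + ((sigmoid (zp q) - q.2) * zg q.1 - (sigmoid (zp q) - q.2) * zp q)) μ := hLp.add hInt1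
  have hIneq := integral_mono hInt2 hgInt hpt
  rw [integral_add hLp hInt1, integral_sub hresInt hresp, hFOC] at hIneq
  have hLp' : bceLoss μ θp = ∫ q, (Real.log (1 + Real.exp (zp q)) - q.2 * zp q) ∂μ := rfl
  have habs : -(∫ q, (sigmoid (zp q) - q.2) * zg q.1 ∂μ)
      ≤ |∫ q, (sigmoid (zp q) - q.2) * zg q.1 ∂μ| := neg_le_abs _
  rw [hLp']
  linarith [hIneq, habs]
end

section
/- (Residual bound via path coverage.) Let 𝒟 be a probability distribution over (x,y) ∈ ℝ^d × {0,1} with E[x_l²] ≤ B_X² for all coordinates l. Let S_1, …, S_k ⊆ {1,…,d} be feature subsets with ∪_{i=1}^k S_i = {1,…,d}, and let p_1, …, p_k (with logits z_1, …, z_k) be produced by the sequential logit-passing protocol, each agent's minimizer assumed to exist. Let z_g(x) = Σ_{l=1}^d α_l x_l with Σ_{l=1}^d |α_l| ≤ B_g, and let ε ≥ L(p_1) − L(p_k), where L denotes expected BCE loss. Then |E[(p_k(x) − y) z_g(x)]| ≤ B_g · B_X · √(kε/2). -/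
open MeasureTheory ProbabilityTheory

/-- The expected BCE loss `L(σ∘z) = E[log(1+e^{z(x)}) − y·z(x)]` of a logit function `z`. -/
noncomputable def bceLossFn {d : ℕ} (μ : Measure ((Fin d → ℝ) × ℝ))
    (z : (Fin d → ℝ) → ℝ) : ℝ :=
  ∫ q, (Real.log (1 + Real.exp (z q.1)) - q.2 * z q.1) ∂μ

/-- The logits of the sequential logit-passing protocol: `z_0 ≡ 0` and
`z_{i+1}(x) = w_iᵀ x + v_i z_i(x)`. -/
noncomputable def seqLogit {d : ℕ} (w : ℕ → Fin d → ℝ) (v : ℕ → ℝ) :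
    ℕ → (Fin d → ℝ) → ℝ
  | 0 => fun _ => 0
  | (i + 1) => fun x => (∑ l, w i l * x l) + v i * seqLogit w v i x

namespace RBPC


noncomputable def lf (z : ℝ) : ℝ := Real.log (1 + Real.exp z)

lemma one_add_exp_pos (z : ℝ) : 0 < 1 + Real.exp z := by positivity

lemma sigmoid_eq (z : ℝ) : sigmoid z = Real.exp z / (1 + Real.exp z) := by
  unfold sigmoid
  rw [Real.exp_neg]
  rw [div_eq_div_iff (by positivity) (ne_of_gt (one_add_exp_pos z))]
  field_simp
  ring

lemma sigmoid_pos (z : ℝ) : 0 < sigmoid z := by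
  rw [sigmoid_eq]; positivity

lemma sigmoid_lt_one (z : ℝ) : sigmoid z < 1 := by
  rw [sigmoid_eq]
  rw [div_lt_one (one_add_exp_pos z)]
  linarith

lemma abs_sigmoid_sub_le (a b : ℝ) : |sigmoid a - sigmoid b| ≤ 1 := by
  have := sigmoid_pos a; have := sigmoid_lt_one a
  have := sigmoid_pos b; have := sigmoid_lt_one b
  rw [abs_le]; constructor <;> linarith

lemma continuous_sigmoid : Continuous sigmoid := by
  unfold sigmoid
  exact continuous_const.div (by continuity) (fun z => ne_of_gt (by positivity))

lemma hasDerivAt_lf (z : ℝ) : HasDerivAt lf (sigmoid z) z := by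
  have h : HasDerivAt (fun z : ℝ => 1 + Real.exp z) (Real.exp z) z :=
    (Real.hasDerivAt_exp z).const_add 1
  have := (h.log (ne_of_gt (one_add_exp_pos z)))
  rw [sigmoid_eq]; exact this

lemma hasDerivAt_sigmoid (z : ℝ) :
    HasDerivAt sigmoid (sigmoid z * (1 - sigmoid z)) z := by
  have h : HasDerivAt (fun z : ℝ => 1 + Real.exp z) (Real.exp z) z :=
    (Real.hasDerivAt_exp z).const_add 1
  have h2 : HasDerivAt (fun z : ℝ => Real.exp z / (1 + Real.exp z))
      ((Real.exp z * (1 + Real.exp z) - Real.exp z * Real.exp z)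
        / (1 + Real.exp z)^2) z :=
    (Real.hasDerivAt_exp z).div h (ne_of_gt (one_add_exp_pos z))
  have hfun : sigmoid = fun z : ℝ => Real.exp z / (1 + Real.exp z) := funext sigmoid_eq
  rw [hfun]
  convert h2 using 1
  simp only []
  field_simp

/-- If `φ a = 0` and `φ' ≥ 0` on `[a,b]` with `a ≤ b`, then `0 ≤ φ b`. -/
lemma nonneg_of_deriv {a b : ℝ} (hab : a ≤ b) (φ φ' : ℝ → ℝ)
    (hd : ∀ x, HasDerivAt φ (φ' x) x) (h0 : φ a = 0)
    (hs : ∀ x ∈ Set.Icc a b, 0 ≤ φ' x) : 0 ≤ φ b := by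
  have hdiff : Differentiable ℝ φ := fun x => (hd x).differentiableAt
  have hmono : MonotoneOn φ (Set.Icc a b) := by
    apply monotoneOn_of_deriv_nonneg (convex_Icc a b)
      hdiff.continuous.continuousOn hdiff.differentiableOn
    intro x hx
    rw [(hd x).deriv]
    exact hs x (Set.mem_of_mem_of_subset hx interior_subset)
  have := hmono (Set.left_mem_Icc.2 hab) (Set.right_mem_Icc.2 hab) hab
  linarith [h0 ▸ this]

/-- If `φ a = 0` and `φ' ≤ 0` on `[b,a]` with `b ≤ a`, then `0 ≤ φ b`. -/
lemma nonneg_of_deriv' {a b : ℝ} (hab : b ≤ a) (φ φ' : ℝ → ℝ)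
    (hd : ∀ x, HasDerivAt φ (φ' x) x) (h0 : φ a = 0)
    (hs : ∀ x ∈ Set.Icc b a, φ' x ≤ 0) : 0 ≤ φ b := by
  have hdiff : Differentiable ℝ φ := fun x => (hd x).differentiableAt
  have hmono : AntitoneOn φ (Set.Icc b a) := by
    apply antitoneOn_of_deriv_nonpos (convex_Icc b a)
      hdiff.continuous.continuousOn hdiff.differentiableOn
    intro x hx
    rw [(hd x).deriv]
    exact hs x (Set.mem_of_mem_of_subset hx interior_subset)
  have := hmono (Set.left_mem_Icc.2 hab) (Set.right_mem_Icc.2 hab) hab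
  linarith [h0 ▸ this]

lemma sigmoid_mono {a b : ℝ} (hab : a ≤ b) : sigmoid a ≤ sigmoid b := by
  have := nonneg_of_deriv hab (fun x => sigmoid x - sigmoid a)
    (fun x => sigmoid x * (1 - sigmoid x))
    (fun x => (hasDerivAt_sigmoid x).sub_const _) (by simp)
    (fun x _ => by nlinarith [sigmoid_pos x, sigmoid_lt_one x, sq_nonneg (sigmoid x - 1/2)])
  linarith

lemma sigmoid_lip {a b : ℝ} (hab : a ≤ b) : sigmoid b - sigmoid a ≤ (b - a) / 4 := by
  have := nonneg_of_deriv hab (fun x => (x - a) / 4 - (sigmoid x - sigmoid a))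
    (fun x => 1 / 4 - sigmoid x * (1 - sigmoid x))
    (fun x => ((hasDerivAt_id' x).sub_const a |>.div_const 4).sub
      ((hasDerivAt_sigmoid x).sub_const _) |>.congr_deriv (by ring)) (by simp)
    (fun x _ => by nlinarith [sigmoid_pos x, sigmoid_lt_one x, sq_nonneg (sigmoid x - 1/2)])
  linarith

lemma lf_convex (a b : ℝ) : lf a + sigmoid a * (b - a) ≤ lf b := by
  rcases le_total a b with hab | hab
  · have := nonneg_of_deriv hab (fun x => lf x - lf a - sigmoid a * (x - a))
      (fun x => sigmoid x - sigmoid a)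
      (fun x => ((hasDerivAt_lf x).sub_const _).sub
        (((hasDerivAt_id' x).sub_const a).const_mul (sigmoid a)) |>.congr_deriv (by ring))
      (by simp)
      (fun x hx => by linarith [sigmoid_mono hx.1])
    linarith
  · have := nonneg_of_deriv' hab (fun x => lf x - lf a - sigmoid a * (x - a))
      (fun x => sigmoid x - sigmoid a)
      (fun x => ((hasDerivAt_lf x).sub_const _).sub
        (((hasDerivAt_id' x).sub_const a).const_mul (sigmoid a)) |>.congr_deriv (by ring))
      (by simp)
      (fun x hx => by linarith [sigmoid_mono hx.2])
    linarith

lemma lf_smooth (a b : ℝ) : lf b ≤ lf a + sigmoid a * (b - a) + (b - a) ^ 2 / 8 := by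
  rcases le_total a b with hab | hab
  · have := nonneg_of_deriv hab
      (fun x => lf a + sigmoid a * (x - a) + (x - a) ^ 2 / 8 - lf x)
      (fun x => sigmoid a + (x - a) / 4 - sigmoid x)
      (fun x => ((((hasDerivAt_id' x).sub_const a).const_mul (sigmoid a)).const_add
          (lf a)).add ((((hasDerivAt_id' x).sub_const a).pow 2).div_const 8) |>.sub
          (hasDerivAt_lf x) |>.congr_deriv (by ring))
      (by simp)
      (fun x hx => by linarith [sigmoid_lip hx.1])
    linarith
  · have := nonneg_of_deriv' hab
      (fun x => lf a + sigmoid a * (x - a) + (x - a) ^ 2 / 8 - lf x)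
      (fun x => sigmoid a + (x - a) / 4 - sigmoid x)
      (fun x => ((((hasDerivAt_id' x).sub_const a).const_mul (sigmoid a)).const_add
          (lf a)).add ((((hasDerivAt_id' x).sub_const a).pow 2).div_const 8) |>.sub
          (hasDerivAt_lf x) |>.congr_deriv (by ring))
      (by simp)
      (fun x hx => by linarith [sigmoid_lip hx.2])
    linarith

lemma lf_coco (a b : ℝ) :
    2 * (sigmoid b - sigmoid a) ^ 2 ≤ lf b - lf a - sigmoid a * (b - a) := by
  have h1 := lf_smooth b (b + -(4 * (sigmoid b - sigmoid a)))
  have h2 := lf_convex a (b + -(4 * (sigmoid b - sigmoid a)))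
  nlinarith [h1, h2]


section
lemma continuous_lf : Continuous lf :=
  ((continuous_const.add Real.continuous_exp).log (fun z => ne_of_gt (one_add_exp_pos z)))

lemma abs_lf_le (z : ℝ) : |lf z| ≤ Real.log 2 + |z| := by
  have h0 : (0:ℝ) ≤ lf z := Real.log_nonneg (by nlinarith [Real.exp_pos z])
  rw [abs_of_nonneg h0]
  rcases le_total z 0 with hz | hz
  · have : lf z ≤ Real.log 2 := by
      apply Real.log_le_log (by positivity)
      have := Real.exp_le_one_iff.2 hz
      linarith
    have := abs_nonneg z
    linarith
  · have : lf z ≤ Real.log 2 + z := by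
      have h1 : (1:ℝ) + Real.exp z ≤ 2 * Real.exp z := by
        nlinarith [Real.one_le_exp hz]
      calc lf z ≤ Real.log (2 * Real.exp z) := Real.log_le_log (one_add_exp_pos z) h1
        _ = Real.log 2 + z := by rw [Real.log_mul (by norm_num) (Real.exp_ne_zero z), Real.log_exp]
    rwa [abs_of_nonneg hz]

variable {d : ℕ} (μ : Measure ((Fin d → ℝ) × ℝ)) [IsProbabilityMeasure μ]

/-- linear functional of the features -/
def lin (c : Fin d → ℝ) (q : (Fin d → ℝ) × ℝ) : ℝ := ∑ l, c l * q.1 l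

lemma continuous_lin (c : Fin d → ℝ) : Continuous (lin c) := by
  unfold lin
  exact continuous_finset_sum _ (fun l _ => continuous_const.mul ((continuous_apply l).comp continuous_fst))

variable (hX2int : ∀ l : Fin d, Integrable (fun q : (Fin d → ℝ) × ℝ => (q.1 l) ^ 2) μ)
include hX2int

lemma integrable_X (l : Fin d) : Integrable (fun q : (Fin d → ℝ) × ℝ => q.1 l) μ := by
  apply Integrable.mono' (((hX2int l).add (integrable_const 1)).div_const 2)
    (((continuous_apply l).comp continuous_fst).aestronglyMeasurable)
  filter_upwards with q
  simp only [Pi.add_apply, Function.comp_apply, Real.norm_eq_abs]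
  nlinarith [sq_nonneg (|q.1 l| - 1), sq_abs (q.1 l)]

lemma integrable_lin (c : Fin d → ℝ) : Integrable (lin c) μ := by
  unfold lin
  exact integrable_finset_sum _ (fun l _ => ((integrable_X μ hX2int l).const_mul (c l)))

lemma integrable_lin_sq (c : Fin d → ℝ) :
    Integrable (fun q => (lin c q) ^ 2) μ := by
  have hg : Integrable (fun q : (Fin d → ℝ) × ℝ => (d : ℝ) * ∑ l, (c l)^2 * (q.1 l)^2) μ := by
    apply Integrable.const_mul
    exact integrable_finset_sum _ (fun l _ => (hX2int l).const_mul ((c l)^2))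
  apply Integrable.mono' hg (((continuous_lin c).pow 2).aestronglyMeasurable)
  filter_upwards with q
  rw [Real.norm_eq_abs, abs_of_nonneg (sq_nonneg _)]
  unfold lin
  calc (∑ l, c l * q.1 l)^2 ≤ (Finset.univ.card : ℝ) * ∑ l, (c l * q.1 l)^2 :=
        sq_sum_le_card_mul_sum_sq
    _ = (d:ℝ) * ∑ l, (c l)^2 * (q.1 l)^2 := by
        simp [Finset.card_univ, mul_pow]

/-- a function of `q` bounded a.e. by 1 times a linear functional is integrable -/
lemma integrable_bdd_mul {F : (Fin d → ℝ) × ℝ → ℝ}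
    (hF : AEStronglyMeasurable F μ) (hb : ∀ᵐ q ∂μ, |F q| ≤ 1) (c : Fin d → ℝ) :
    Integrable (fun q => F q * lin c q) μ := by
  apply Integrable.mono' ((integrable_lin μ hX2int c).abs)
    (hF.mul (continuous_lin c).aestronglyMeasurable)
  filter_upwards [hb] with q hq
  simp only [Pi.mul_apply, Real.norm_eq_abs, abs_mul]
  exact mul_le_of_le_one_left (abs_nonneg _) hq

variable (hy : ∀ᵐ q ∂μ, q.2 = 0 ∨ q.2 = 1)
include hy

lemma resid_bdd (c : Fin d → ℝ) :
    ∀ᵐ q ∂μ, |sigmoid (lin c q) - q.2| ≤ 1 := by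
  filter_upwards [hy] with q hq
  have h1 := sigmoid_pos (lin c q)
  have h2 := sigmoid_lt_one (lin c q)
  rcases hq with h | h <;> rw [h] <;> rw [abs_le] <;> constructor <;> linarith

lemma integrable_resid_mul (c c' : Fin d → ℝ) :
    Integrable (fun q => (sigmoid (lin c q) - q.2) * lin c' q) μ := by
  apply integrable_bdd_mul μ hX2int
    (((continuous_sigmoid.comp (continuous_lin c)).aestronglyMeasurable).sub
      (continuous_snd.aestronglyMeasurable))
    (resid_bdd μ hX2int hy c) c'

/-- integrability of the BCE loss integrand for a linear logit -/
lemma integrable_loss (c : Fin d → ℝ) :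
    Integrable (fun q => lf (lin c q) - q.2 * lin c q) μ := by
  apply Integrable.mono'
    (g := fun q => Real.log 2 + 2 * |lin c q|)
    ((integrable_const (Real.log 2)).add (((integrable_lin μ hX2int c).abs).const_mul 2))
    (((continuous_lf.comp (continuous_lin c)).sub
      (continuous_snd.mul (continuous_lin c))).aestronglyMeasurable)
  filter_upwards [hy] with q hq
  rw [Real.norm_eq_abs]
  have h1 := abs_lf_le (lin c q)
  have h2 : |q.2 * lin c q| ≤ |lin c q| := by
    rcases hq with h | h <;> rw [h] <;> simp
  calc |lf (lin c q) - q.2 * lin c q| ≤ |lf (lin c q)| + |q.2 * lin c q| := abs_sub _ _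
    _ ≤ Real.log 2 + 2 * |lin c q| := by linarith


end
section
variable {α : Type*} [MeasurableSpace α] (μ : Measure α) [IsProbabilityMeasure μ]

/-- Cauchy–Schwarz for integrals. -/
lemma cs_integral {f g : α → ℝ}
    (hf2 : Integrable (fun q => f q ^ 2) μ) (hg2 : Integrable (fun q => g q ^ 2) μ)
    (hfg : Integrable (fun q => f q * g q) μ) :
    |∫ q, f q * g q ∂μ| ≤ Real.sqrt (∫ q, f q ^ 2 ∂μ) * Real.sqrt (∫ q, g q ^ 2 ∂μ) := by
  set A := ∫ q, f q ^ 2 ∂μ with hA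
  set B := ∫ q, f q * g q ∂μ with hB
  set C := ∫ q, g q ^ 2 ∂μ with hC
  have hA0 : 0 ≤ A := integral_nonneg (fun q => sq_nonneg _)
  have hC0 : 0 ≤ C := integral_nonneg (fun q => sq_nonneg _)
  have key : ∀ t : ℝ, 0 ≤ A * t ^ 2 + 2 * B * t + C := by
    intro t
    have i2 : Integrable (fun q => t ^ 2 * f q ^ 2) μ := hf2.const_mul (t ^ 2)
    have i3 : Integrable (fun q => 2 * t * (f q * g q)) μ := hfg.const_mul (2 * t)
    have i1 : Integrable (fun q => t ^ 2 * f q ^ 2 + 2 * t * (f q * g q)) μ := i2.add i3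
    have hint : Integrable (fun q => (t * f q + g q) ^ 2) μ := by
      apply Integrable.congr (i1.add hg2)
      filter_upwards with q
      simp only [Pi.add_apply]
      ring
    have h0 : 0 ≤ ∫ q, (t * f q + g q) ^ 2 ∂μ := integral_nonneg (fun q => sq_nonneg _)
    have heq : ∫ q, (t * f q + g q) ^ 2 ∂μ
        = A * t ^ 2 + 2 * B * t + C := by
      have hfe : (fun q => (t * f q + g q) ^ 2)
          = fun q => t ^ 2 * f q ^ 2 + 2 * t * (f q * g q) + g q ^ 2 := by
        funext q; ring
      rw [hfe, integral_add i1 hg2, integral_add i2 i3,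
        integral_const_mul, integral_const_mul]
      ring
    linarith [heq ▸ h0]
  have hBsq : B ^ 2 ≤ A * C := by
    rcases eq_or_lt_of_le hA0 with hA0' | hA0'
    · -- A = 0 : show B = 0
      have hB0 : B = 0 := by
        by_contra hB0
        have h1 := key ((-(C + 1)) / (2 * B))
        rw [← hA0'] at h1
        have h2 : 2 * B * (-(C + 1) / (2 * B)) = -(C+1) := by
          field_simp
        rw [zero_mul, zero_add, h2] at h1
        linarith
      rw [hB0, ← hA0']
      simp
    · have h := key (-B / A)
      have heq2 : A * (-B / A) ^ 2 + 2 * B * (-B / A) + C = C - B ^ 2 / A := by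
        field_simp
        ring
      rw [heq2] at h
      have h2 : B ^ 2 / A ≤ C := by linarith
      calc B ^ 2 ≤ C * A := (div_le_iff₀ hA0').1 h2
        _ = A * C := mul_comm _ _
  calc |B| = Real.sqrt (B ^ 2) := (Real.sqrt_sq_eq_abs B).symm
    _ ≤ Real.sqrt (A * C) := Real.sqrt_le_sqrt hBsq
    _ = Real.sqrt A * Real.sqrt C := Real.sqrt_mul hA0 C


end
section
variable {d : ℕ} (μ : Measure ((Fin d → ℝ) × ℝ)) [IsProbabilityMeasure μ]

lemma sum_split (a b : Fin d → ℝ) (t : ℝ) (x : Fin d → ℝ) :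
    ∑ l, (a l + t * b l) * x l = (∑ l, a l * x l) + t * ∑ l, b l * x l := by
  rw [Finset.mul_sum, ← Finset.sum_add_distrib]
  congr 1; funext l; ring

lemma lin_sub (ca cz : Fin d → ℝ) (q : (Fin d → ℝ) × ℝ) :
    lin (ca - cz) q = lin ca q - lin cz q := by
  unfold lin
  rw [← Finset.sum_sub_distrib]
  congr 1; funext l; simp [sub_mul]

lemma lin_add_smul (cz cg : Fin d → ℝ) (t : ℝ) (q : (Fin d → ℝ) × ℝ) :
    lin (fun l => cz l + t * cg l) q = lin cz q + t * lin cg q := by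
  unfold lin
  rw [Finset.mul_sum, ← Finset.sum_add_distrib]
  congr 1; funext l; ring

lemma bce_lin (c : Fin d → ℝ) :
    bceLossFn μ (fun x => ∑ l, c l * x l) = ∫ q, (lf (lin c q) - q.2 * lin c q) ∂μ := rfl

variable (hX2int : ∀ l : Fin d, Integrable (fun q : (Fin d → ℝ) × ℝ => (q.1 l) ^ 2) μ)
  (hy : ∀ᵐ q ∂μ, q.2 = 0 ∨ q.2 = 1)
include hX2int hy

/-- First-order condition at a constrained minimum of the BCE loss. -/
lemma foc (cz cg : Fin d → ℝ)
    (hmin : ∀ t : ℝ, bceLossFn μ (fun x => ∑ l, cz l * x l)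
       ≤ bceLossFn μ (fun x => (∑ l, cz l * x l) + t * ∑ l, cg l * x l)) :
    ∫ q, (sigmoid (lin cz q) - q.2) * lin cg q ∂μ = 0 := by
  set I := ∫ q, (sigmoid (lin cz q) - q.2) * lin cg q ∂μ with hI
  set J := ∫ q, (lin cg q) ^ 2 ∂μ with hJdef
  have iI : Integrable (fun q => (sigmoid (lin cz q) - q.2) * lin cg q) μ :=
    integrable_resid_mul μ hX2int hy cz cg
  have iJ : Integrable (fun q => (lin cg q) ^ 2) μ := integrable_lin_sq μ hX2int cg
  have iL0 : Integrable (fun q => lf (lin cz q) - q.2 * lin cz q) μ :=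
    integrable_loss μ hX2int hy cz
  have key : ∀ t : ℝ, 0 ≤ t * I + t ^ 2 * J / 8 := by
    intro t
    have iLt : Integrable (fun q => lf (lin cz q + t * lin cg q)
        - q.2 * (lin cz q + t * lin cg q)) μ := by
      apply Integrable.congr (integrable_loss μ hX2int hy (fun l => cz l + t * cg l))
      filter_upwards with q
      rw [lin_add_smul]
    have h0 : bceLossFn μ (fun x => ∑ l, cz l * x l)
        ≤ bceLossFn μ (fun x => (∑ l, cz l * x l) + t * ∑ l, cg l * x l) := hmin t
    have hRHS : bceLossFn μ (fun x => (∑ l, cz l * x l) + t * ∑ l, cg l * x l)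
        = ∫ q, (lf (lin cz q + t * lin cg q) - q.2 * (lin cz q + t * lin cg q)) ∂μ := rfl
    rw [bce_lin, hRHS] at h0
    -- pointwise smoothness bound
    have hptw : ∀ q : (Fin d → ℝ) × ℝ,
        (lf (lin cz q + t * lin cg q) - q.2 * (lin cz q + t * lin cg q))
          - (lf (lin cz q) - q.2 * lin cz q)
        ≤ t * ((sigmoid (lin cz q) - q.2) * lin cg q) + t ^ 2 / 8 * (lin cg q) ^ 2 := by
      intro q
      have := lf_smooth (lin cz q) (lin cz q + t * lin cg q)
      nlinarith [this]
    have i5 : Integrable (fun q => t * ((sigmoid (lin cz q) - q.2) * lin cg q)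
        + t ^ 2 / 8 * (lin cg q) ^ 2) μ := (iI.const_mul t).add (iJ.const_mul (t ^ 2 / 8))
    have hmono : ∫ q, ((lf (lin cz q + t * lin cg q) - q.2 * (lin cz q + t * lin cg q))
          - (lf (lin cz q) - q.2 * lin cz q)) ∂μ
        ≤ ∫ q, (t * ((sigmoid (lin cz q) - q.2) * lin cg q)
          + t ^ 2 / 8 * (lin cg q) ^ 2) ∂μ :=
      integral_mono (iLt.sub iL0) i5 hptw
    rw [integral_sub iLt iL0] at hmono
    rw [integral_add (iI.const_mul t) (iJ.const_mul (t ^ 2 / 8)),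
      integral_const_mul, integral_const_mul] at hmono
    have : 0 ≤ t * I + t ^ 2 / 8 * J := by linarith
    linarith [this]
  have hJ0 : 0 ≤ J := integral_nonneg (fun q => sq_nonneg _)
  by_contra hI0
  have h8 : (0 : ℝ) < J + 8 := by linarith
  have h := key (-8 * I / (J + 8))
  have hIsq : 0 < I ^ 2 := by positivity
  have hexp : (-8 * I / (J + 8)) * I + (-8 * I / (J + 8)) ^ 2 * J / 8
      = -64 * I ^ 2 / (J + 8) ^ 2 := by
    field_simp
    ring
  rw [hexp] at h
  have : -64 * I ^ 2 / (J + 8) ^ 2 < 0 := by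
    apply div_neg_of_neg_of_pos _ (by positivity)
    nlinarith
  linarith

/-- Integrated co-coercivity step. -/
lemma coco_step (ca cz : Fin d → ℝ)
    (hfoc : ∫ q, (sigmoid (lin cz q) - q.2) * lin (ca - cz) q ∂μ = 0) :
    2 * ∫ q, (sigmoid (lin ca q) - sigmoid (lin cz q)) ^ 2 ∂μ
      ≤ (∫ q, (lf (lin ca q) - q.2 * lin ca q) ∂μ)
        - ∫ q, (lf (lin cz q) - q.2 * lin cz q) ∂μ := by
  have iΔ2 : Integrable (fun q => (sigmoid (lin ca q) - sigmoid (lin cz q)) ^ 2) μ := by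
    have ic : Integrable (fun _ : (Fin d → ℝ) × ℝ => (1:ℝ)) μ := integrable_const 1
    apply Integrable.mono' ic
      (((continuous_sigmoid.comp (continuous_lin ca)).sub
        (continuous_sigmoid.comp (continuous_lin cz))).pow 2).aestronglyMeasurable
    filter_upwards with q
    simp only [Function.comp_apply, Real.norm_eq_abs, Pi.pow_apply, Pi.sub_apply]
    have := abs_sigmoid_sub_le (lin ca q) (lin cz q)
    rw [abs_of_nonneg (sq_nonneg _), ← sq_abs]
    nlinarith [this, abs_nonneg (sigmoid (lin ca q) - sigmoid (lin cz q))]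
  have ia : Integrable (fun q => lf (lin ca q) - q.2 * lin ca q) μ :=
    integrable_loss μ hX2int hy ca
  have iz : Integrable (fun q => lf (lin cz q) - q.2 * lin cz q) μ :=
    integrable_loss μ hX2int hy cz
  have iM : Integrable (fun q => (sigmoid (lin cz q) - q.2) * lin (ca - cz) q) μ :=
    integrable_resid_mul μ hX2int hy cz (ca - cz)
  have hptw : ∀ q : (Fin d → ℝ) × ℝ,
      2 * ((sigmoid (lin ca q) - sigmoid (lin cz q)) ^ 2)
      ≤ ((lf (lin ca q) - q.2 * lin ca q) - (lf (lin cz q) - q.2 * lin cz q))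
        - (sigmoid (lin cz q) - q.2) * lin (ca - cz) q := by
    intro q
    rw [lin_sub]
    have := lf_coco (lin cz q) (lin ca q)
    nlinarith [this]
  have hmono : ∫ q, 2 * ((sigmoid (lin ca q) - sigmoid (lin cz q)) ^ 2) ∂μ
      ≤ ∫ q, (((lf (lin ca q) - q.2 * lin ca q) - (lf (lin cz q) - q.2 * lin cz q))
        - (sigmoid (lin cz q) - q.2) * lin (ca - cz) q) ∂μ :=
    integral_mono (iΔ2.const_mul 2) ((ia.sub iz).sub iM) hptw
  rw [integral_const_mul] at hmono
  have i_az : Integrable (fun q => (lf (lin ca q) - q.2 * lin ca q)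
      - (lf (lin cz q) - q.2 * lin cz q)) μ := ia.sub iz
  rw [integral_sub i_az iM, integral_sub ia iz, hfoc] at hmono
  linarith


omit hX2int hy in
lemma integrable_dsq (ca cz : Fin d → ℝ) :
    Integrable (fun q => (sigmoid (lin ca q) - sigmoid (lin cz q)) ^ 2) μ := by
  have ic : Integrable (fun _ : (Fin d → ℝ) × ℝ => (1:ℝ)) μ := integrable_const 1
  apply Integrable.mono' ic
    (((continuous_sigmoid.comp (continuous_lin ca)).sub
      (continuous_sigmoid.comp (continuous_lin cz))).pow 2).aestronglyMeasurable
  filter_upwards with q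
  simp only [Function.comp_apply, Real.norm_eq_abs, Pi.pow_apply, Pi.sub_apply]
  have := abs_sigmoid_sub_le (lin ca q) (lin cz q)
  rw [abs_of_nonneg (sq_nonneg _), ← sq_abs]
  nlinarith [this, abs_nonneg (sigmoid (lin ca q) - sigmoid (lin cz q))]


end
end RBPC


noncomputable def seqCoef {d : ℕ} (w : ℕ → Fin d → ℝ) (v : ℕ → ℝ) : ℕ → Fin d → ℝ
  | 0 => fun _ => 0
  | (i + 1) => fun l => w i l + v i * seqCoef w v i l

lemma seqLogit_eq {d : ℕ} (w : ℕ → Fin d → ℝ) (v : ℕ → ℝ) (i : ℕ) (x : Fin d → ℝ) :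
    seqLogit w v i x = ∑ l, seqCoef w v i l * x l := by
  induction i with
  | zero => simp [seqLogit, seqCoef]
  | succ i ih =>
      show (∑ l, w i l * x l) + v i * seqLogit w v i x = _
      rw [ih, show (∑ l, seqCoef w v (i+1) l * x l)
          = ∑ l, (w i l + v i * seqCoef w v i l) * x l from rfl,
        RBPC.sum_split (w i) (seqCoef w v i) (v i) x]

/-- Residual bound via path coverage: for the sequential logit-passing protocol on
feature subsets `S_1, …, S_k` covering all `d` features, any linear logit
`z_g(x) = Σ_l α_l x_l` with `Σ_l |α_l| ≤ B_g`, second moments `E[x_l²] ≤ B_X²`, and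
`ε ≥ L(p_1) − L(p_k)`, we have `|E[(p_k(x) − y) z_g(x)]| ≤ B_g B_X √(kε/2)`. -/
theorem residual_bound_via_path_coverage
    {d : ℕ} (μ : Measure ((Fin d → ℝ) × ℝ)) [IsProbabilityMeasure μ]
    (hy : ∀ᵐ q ∂μ, q.2 = 0 ∨ q.2 = 1)
    (BX : ℝ) (hBX : 0 ≤ BX)
    (hX2int : ∀ l : Fin d, Integrable (fun q : (Fin d → ℝ) × ℝ => (q.1 l) ^ 2) μ)
    (hX2 : ∀ l : Fin d, ∫ q, (q.1 l) ^ 2 ∂μ ≤ BX ^ 2)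
    (k : ℕ) (hk : 1 ≤ k) (S : ℕ → Finset (Fin d))
    (hcov : ∀ l : Fin d, ∃ i < k, l ∈ S i)
    (w : ℕ → Fin d → ℝ) (v : ℕ → ℝ)
    (hsupp : ∀ i < k, ∀ l ∉ S i, w i l = 0)
    (hmin : ∀ i < k, ∀ w' : Fin d → ℝ, (∀ l ∉ S i, w' l = 0) → ∀ v' : ℝ,
      bceLossFn μ (seqLogit w v (i + 1))
        ≤ bceLossFn μ (fun x => (∑ l, w' l * x l) + v' * seqLogit w v i x))
    (Bg : ℝ) (α : Fin d → ℝ) (hα : ∑ l, |α l| ≤ Bg)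
    (ε : ℝ) (hε : bceLossFn μ (seqLogit w v 1) - bceLossFn μ (seqLogit w v k) ≤ ε) :
    |∫ q, (sigmoid (seqLogit w v k q.1) - q.2) * (∑ l, α l * q.1 l) ∂μ|
      ≤ Bg * BX * Real.sqrt (k * ε / 2) := by
    classical
  set c : ℕ → Fin d → ℝ := seqCoef w v with hc
  have hseq : ∀ i, seqLogit w v i = fun x => ∑ l, c i l * x l :=
    fun i => funext (seqLogit_eq w v i)
  set L : ℕ → ℝ := fun i => ∫ q, (RBPC.lf (RBPC.lin (c i) q) - q.2 * RBPC.lin (c i) q) ∂μ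
    with hLdef
  have hbce : ∀ i, bceLossFn μ (seqLogit w v i) = L i := by
    intro i
    rw [hseq i]
    rfl
  set e : Fin d → Fin d → ℝ := fun l0 l => if l = l0 then (1:ℝ) else 0 with he
  have hlin_e : ∀ (l0 : Fin d) (q : (Fin d → ℝ) × ℝ), RBPC.lin (e l0) q = q.1 l0 := by
    intro l0 q
    simp [RBPC.lin, he, ite_mul]
  -- reduction of the protocol minimality to linear one-parameter perturbations
  have hminlin : ∀ i, i < k → ∀ u : Fin d → ℝ, (∀ l ∉ S i, u l = 0) → ∀ s : ℝ, ∀ t : ℝ,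
      bceLossFn μ (fun x => ∑ l, c (i+1) l * x l)
        ≤ bceLossFn μ (fun x => (∑ l, c (i+1) l * x l)
            + t * ∑ l, (u l + s * (c i l - c (i+1) l)) * x l) := by
    intro i hi u hu s t
    have h := hmin i hi (fun l => (1 - t * s) * w i l + t * u l)
      (fun l hl => by show (1 - t * s) * w i l + t * u l = 0; rw [hsupp i hi l hl, hu l hl]; ring) ((1 - t * s) * v i + t * s)
    have hL1 : bceLossFn μ (fun x => ∑ l, c (i+1) l * x l)
        = bceLossFn μ (seqLogit w v (i+1)) := by rw [hseq (i+1)]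
    have hR : (fun x => (∑ l, ((1 - t * s) * w i l + t * u l) * x l)
          + ((1 - t * s) * v i + t * s) * seqLogit w v i x)
        = (fun x => (∑ l, c (i+1) l * x l)
            + t * ∑ l, (u l + s * (c i l - c (i+1) l)) * x l) := by
      funext x
      rw [seqLogit_eq w v i x, Finset.mul_sum, Finset.mul_sum,
        ← Finset.sum_add_distrib, ← Finset.sum_add_distrib]
      apply Finset.sum_congr rfl
      intro l _
      have hce : c (i+1) l = w i l + v i * c i l := rfl
      rw [hce]
      ring
    rw [hL1]
    rw [hR] at h
    exact h
  -- first-order conditions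
  have hfoc : ∀ i, i < k → ∀ u : Fin d → ℝ, (∀ l ∉ S i, u l = 0) → ∀ s : ℝ,
      ∫ q, (sigmoid (RBPC.lin (c (i+1)) q) - q.2)
          * RBPC.lin (fun l => u l + s * (c i l - c (i+1) l)) q ∂μ = 0 :=
    fun i hi u hu s => RBPC.foc μ hX2int hy (c (i+1)) _ (hminlin i hi u hu s)
  -- per-step co-coercivity bound
  set D : ℕ → ℝ :=
    fun j => ∫ q, (sigmoid (RBPC.lin (c j) q) - sigmoid (RBPC.lin (c (j+1)) q)) ^ 2 ∂μ
    with hDdef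
  have hstep : ∀ j, j < k → 2 * D j ≤ L j - L (j+1) := by
    intro j hj
    have hf := hfoc j hj (fun _ => 0) (fun _ _ => rfl) 1
    have hf' : ∫ q, (sigmoid (RBPC.lin (c (j+1)) q) - q.2)
        * RBPC.lin (c j - c (j+1)) q ∂μ = 0 := by
      rw [← hf]
      apply integral_congr_ae
      filter_upwards with q
      congr 1
      unfold RBPC.lin
      apply Finset.sum_congr rfl
      intro l _
      show (c j l - c (j+1) l) * q.1 l = (0 + 1 * (c j l - c (j+1) l)) * q.1 l
      ring
    exact RBPC.coco_step μ hX2int hy (c j) (c (j+1)) hf'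
  have hD0 : ∀ j, 0 ≤ D j := fun j => integral_nonneg (fun q => sq_nonneg _)
  -- telescoping the losses
  have hteleL : ∑ j ∈ Finset.Ico 1 k, (L j - L (j+1)) = L 1 - L k := by
    have h1 : ∑ j ∈ Finset.Ico 1 k, ((fun n => -L n) (j+1) - (fun n => -L n) j)
        = ((fun n => -L n) k - (fun n => -L n) 0)
          - ((fun n => -L n) 1 - (fun n => -L n) 0) := by
      rw [Finset.sum_Ico_eq_sub _ hk, Finset.sum_range_sub (fun n => -L n),
        Finset.sum_range_sub (fun n => -L n)]
    have h2 : ∑ j ∈ Finset.Ico 1 k, (L j - L (j+1))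
        = ∑ j ∈ Finset.Ico 1 k, ((fun n => -L n) (j+1) - (fun n => -L n) j) := by
      apply Finset.sum_congr rfl
      intro j _
      simp only
      ring
    rw [h2, h1]
    simp only
    ring
  have hε' : L 1 - L k ≤ ε := by rw [← hbce 1, ← hbce k]; exact hε
  have hsumD : ∑ j ∈ Finset.Ico 1 k, D j ≤ ε / 2 := by
    have h2 : ∑ j ∈ Finset.Ico 1 k, (2 * D j) ≤ ∑ j ∈ Finset.Ico 1 k, (L j - L (j+1)) :=
      Finset.sum_le_sum (fun j hj => hstep j (Finset.mem_Ico.1 hj).2)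
    rw [hteleL] at h2
    rw [← Finset.mul_sum] at h2
    linarith
  have hε0 : 0 ≤ ε := by
    have := Finset.sum_nonneg (fun j (_ : j ∈ Finset.Ico 1 k) => hD0 j)
    linarith
  -- second moment bound for single features
  have hXe2 : ∀ l0 : Fin d, Integrable (fun q => (RBPC.lin (e l0) q) ^ 2) μ :=
    fun l0 => RBPC.integrable_lin_sq μ hX2int (e l0)
  have hsqrtXe : ∀ l0 : Fin d, Real.sqrt (∫ q, (RBPC.lin (e l0) q) ^ 2 ∂μ) ≤ BX := by
    intro l0
    have hEq : (∫ q, (RBPC.lin (e l0) q) ^ 2 ∂μ) = ∫ q, (q.1 l0) ^ 2 ∂μ :=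
      integral_congr_ae (Filter.Eventually.of_forall (fun q => by simp only; rw [hlin_e]))
    rw [hEq]
    calc Real.sqrt (∫ q, (q.1 l0) ^ 2 ∂μ) ≤ Real.sqrt (BX ^ 2) :=
          Real.sqrt_le_sqrt (hX2 l0)
      _ = BX := Real.sqrt_sq hBX
  have hDD : ∀ j, (∫ q, (sigmoid (RBPC.lin (c (j+1)) q) - sigmoid (RBPC.lin (c j) q)) ^ 2 ∂μ)
      = D j := by
    intro j
    apply integral_congr_ae
    filter_upwards with q
    ring
  -- per-coordinate residual bound
  have hcoord : ∀ l0 : Fin d,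
      |∫ q, (sigmoid (RBPC.lin (c k) q) - q.2) * RBPC.lin (e l0) q ∂μ|
        ≤ BX * Real.sqrt (↑k * ε / 2) := by
    intro l0
    obtain ⟨i, hik, hl0⟩ := hcov l0
    have hfe : ∫ q, (sigmoid (RBPC.lin (c (i+1)) q) - q.2) * RBPC.lin (e l0) q ∂μ = 0 := by
      have hf := hfoc i hik (e l0)
        (fun l hl => by
          simp only [he]
          rw [if_neg]
          intro h'
          exact hl (h' ▸ hl0)) 0
      rw [← hf]
      apply integral_congr_ae
      filter_upwards with q
      congr 1
      unfold RBPC.lin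
      apply Finset.sum_congr rfl
      intro l _
      show e l0 l * q.1 l = (e l0 l + 0 * (c i l - c (i+1) l)) * q.1 l
      ring
    have iA : Integrable (fun q => (sigmoid (RBPC.lin (c k) q)
        - sigmoid (RBPC.lin (c (i+1)) q)) * RBPC.lin (e l0) q) μ :=
      RBPC.integrable_bdd_mul μ hX2int
        (((RBPC.continuous_sigmoid.comp (RBPC.continuous_lin (c k))).sub
          (RBPC.continuous_sigmoid.comp (RBPC.continuous_lin (c (i+1))))).aestronglyMeasurable)
        (Filter.Eventually.of_forall (fun q => RBPC.abs_sigmoid_sub_le _ _)) (e l0)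
    have iB : Integrable (fun q => (sigmoid (RBPC.lin (c (i+1)) q) - q.2)
        * RBPC.lin (e l0) q) μ :=
      RBPC.integrable_resid_mul μ hX2int hy (c (i+1)) (e l0)
    have hsplit : ∫ q, (sigmoid (RBPC.lin (c k) q) - q.2) * RBPC.lin (e l0) q ∂μ
        = ∫ q, (sigmoid (RBPC.lin (c k) q) - sigmoid (RBPC.lin (c (i+1)) q))
            * RBPC.lin (e l0) q ∂μ := by
      have hpt : (fun q : (Fin d → ℝ) × ℝ =>
            (sigmoid (RBPC.lin (c k) q) - q.2) * RBPC.lin (e l0) q)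
          = fun q => (sigmoid (RBPC.lin (c k) q) - sigmoid (RBPC.lin (c (i+1)) q))
              * RBPC.lin (e l0) q
            + (sigmoid (RBPC.lin (c (i+1)) q) - q.2) * RBPC.lin (e l0) q := by
        funext q
        ring
      rw [hpt, integral_add iA iB, hfe, add_zero]
    have iT : ∀ j : ℕ, Integrable (fun q => (sigmoid (RBPC.lin (c (j+1)) q)
        - sigmoid (RBPC.lin (c j) q)) * RBPC.lin (e l0) q) μ := fun j =>
      RBPC.integrable_bdd_mul μ hX2int
        (((RBPC.continuous_sigmoid.comp (RBPC.continuous_lin (c (j+1)))).sub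
          (RBPC.continuous_sigmoid.comp (RBPC.continuous_lin (c j)))).aestronglyMeasurable)
        (Filter.Eventually.of_forall (fun q => RBPC.abs_sigmoid_sub_le _ _)) (e l0)
    have htel_pt : ∀ q : (Fin d → ℝ) × ℝ,
        sigmoid (RBPC.lin (c k) q) - sigmoid (RBPC.lin (c (i+1)) q)
          = ∑ j ∈ Finset.Ico (i+1) k,
              (sigmoid (RBPC.lin (c (j+1)) q) - sigmoid (RBPC.lin (c j) q)) := by
      intro q
      rw [Finset.sum_Ico_eq_sub _ (Nat.succ_le_of_lt hik),
        Finset.sum_range_sub (fun j => sigmoid (RBPC.lin (c j) q)),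
        Finset.sum_range_sub (fun j => sigmoid (RBPC.lin (c j) q))]
      ring
    have hsum : ∫ q, (sigmoid (RBPC.lin (c k) q) - sigmoid (RBPC.lin (c (i+1)) q))
          * RBPC.lin (e l0) q ∂μ
        = ∑ j ∈ Finset.Ico (i+1) k, ∫ q, (sigmoid (RBPC.lin (c (j+1)) q)
            - sigmoid (RBPC.lin (c j) q)) * RBPC.lin (e l0) q ∂μ := by
      have hpt2 : (fun q : (Fin d → ℝ) × ℝ =>
            (sigmoid (RBPC.lin (c k) q) - sigmoid (RBPC.lin (c (i+1)) q))
              * RBPC.lin (e l0) q)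
          = fun q => ∑ j ∈ Finset.Ico (i+1) k, ((sigmoid (RBPC.lin (c (j+1)) q)
              - sigmoid (RBPC.lin (c j) q)) * RBPC.lin (e l0) q) := by
        funext q
        rw [htel_pt q, Finset.sum_mul]
      rw [hpt2]
      exact integral_finset_sum _ (fun j _ => iT j)
    have hterm : ∀ j ∈ Finset.Ico (i+1) k,
        |∫ q, (sigmoid (RBPC.lin (c (j+1)) q) - sigmoid (RBPC.lin (c j) q))
            * RBPC.lin (e l0) q ∂μ| ≤ Real.sqrt (D j) * BX := by
      intro j _
      have hcs := RBPC.cs_integral μ (RBPC.integrable_dsq μ (c (j+1)) (c j))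
        (hXe2 l0) (iT j)
      rw [hDD j] at hcs
      exact hcs.trans (mul_le_mul_of_nonneg_left (hsqrtXe l0) (Real.sqrt_nonneg _))
    have hsum_bound :
        |∫ q, (sigmoid (RBPC.lin (c k) q) - q.2) * RBPC.lin (e l0) q ∂μ|
          ≤ (∑ j ∈ Finset.Ico (i+1) k, Real.sqrt (D j)) * BX := by
      rw [hsplit, hsum]
      calc |∑ j ∈ Finset.Ico (i+1) k, ∫ q, (sigmoid (RBPC.lin (c (j+1)) q)
              - sigmoid (RBPC.lin (c j) q)) * RBPC.lin (e l0) q ∂μ|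
          ≤ ∑ j ∈ Finset.Ico (i+1) k, |∫ q, (sigmoid (RBPC.lin (c (j+1)) q)
              - sigmoid (RBPC.lin (c j) q)) * RBPC.lin (e l0) q ∂μ| :=
            Finset.abs_sum_le_sum_abs _ _
        _ ≤ ∑ j ∈ Finset.Ico (i+1) k, Real.sqrt (D j) * BX := Finset.sum_le_sum hterm
        _ = (∑ j ∈ Finset.Ico (i+1) k, Real.sqrt (D j)) * BX := by rw [Finset.sum_mul]
    have hcard : (((Finset.Ico (i+1) k).card : ℕ) : ℝ) ≤ (k : ℝ) := by
      rw [Nat.card_Ico]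
      exact_mod_cast Nat.sub_le k (i+1)
    have hDsub : ∑ j ∈ Finset.Ico (i+1) k, D j ≤ ε / 2 := by
      have hsubset : Finset.Ico (i+1) k ⊆ Finset.Ico 1 k :=
        Finset.Ico_subset_Ico (by omega) le_rfl
      have := Finset.sum_le_sum_of_subset_of_nonneg hsubset (fun j _ _ => hD0 j)
      linarith
    have hsqD : (∑ j ∈ Finset.Ico (i+1) k, Real.sqrt (D j))
        ≤ Real.sqrt (↑k * ε / 2) := by
      have h1 : (∑ j ∈ Finset.Ico (i+1) k, Real.sqrt (D j)) ^ 2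
          ≤ (((Finset.Ico (i+1) k).card : ℕ) : ℝ)
            * ∑ j ∈ Finset.Ico (i+1) k, Real.sqrt (D j) ^ 2 :=
        sq_sum_le_card_mul_sum_sq
      have h2 : ∑ j ∈ Finset.Ico (i+1) k, Real.sqrt (D j) ^ 2
          = ∑ j ∈ Finset.Ico (i+1) k, D j :=
        Finset.sum_congr rfl (fun j _ => Real.sq_sqrt (hD0 j))
      have hsD0 : 0 ≤ ∑ j ∈ Finset.Ico (i+1) k, D j :=
        Finset.sum_nonneg (fun j _ => hD0 j)
      have h3 : (∑ j ∈ Finset.Ico (i+1) k, Real.sqrt (D j)) ^ 2 ≤ (k : ℝ) * (ε / 2) := by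
        calc (∑ j ∈ Finset.Ico (i+1) k, Real.sqrt (D j)) ^ 2
            ≤ (((Finset.Ico (i+1) k).card : ℕ) : ℝ) * ∑ j ∈ Finset.Ico (i+1) k, D j := by
              rw [← h2]; exact h1
          _ ≤ (k : ℝ) * (ε / 2) :=
              mul_le_mul hcard hDsub hsD0 (Nat.cast_nonneg k)
      have hs0 : 0 ≤ ∑ j ∈ Finset.Ico (i+1) k, Real.sqrt (D j) :=
        Finset.sum_nonneg (fun j _ => Real.sqrt_nonneg _)
      calc ∑ j ∈ Finset.Ico (i+1) k, Real.sqrt (D j)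
          = Real.sqrt ((∑ j ∈ Finset.Ico (i+1) k, Real.sqrt (D j)) ^ 2) :=
            (Real.sqrt_sq hs0).symm
        _ ≤ Real.sqrt ((k : ℝ) * (ε / 2)) := Real.sqrt_le_sqrt h3
        _ = Real.sqrt (↑k * ε / 2) := by rw [mul_div_assoc]
    calc |∫ q, (sigmoid (RBPC.lin (c k) q) - q.2) * RBPC.lin (e l0) q ∂μ|
        ≤ (∑ j ∈ Finset.Ico (i+1) k, Real.sqrt (D j)) * BX := hsum_bound
      _ ≤ Real.sqrt (↑k * ε / 2) * BX := mul_le_mul_of_nonneg_right hsqD hBX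
      _ = BX * Real.sqrt (↑k * ε / 2) := mul_comm _ _
  -- assemble the final bound
  have hgoal_eq : ∫ q, (sigmoid (seqLogit w v k q.1) - q.2) * (∑ l, α l * q.1 l) ∂μ
      = ∑ l, α l * ∫ q, (sigmoid (RBPC.lin (c k) q) - q.2) * RBPC.lin (e l) q ∂μ := by
    have hpt3 : (fun q : (Fin d → ℝ) × ℝ =>
          (sigmoid (seqLogit w v k q.1) - q.2) * (∑ l, α l * q.1 l))
        = fun q => ∑ l, α l * ((sigmoid (RBPC.lin (c k) q) - q.2) * RBPC.lin (e l) q) := by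
      funext q
      rw [hseq k, Finset.mul_sum]
      apply Finset.sum_congr rfl
      intro l _
      rw [hlin_e]
      show (sigmoid (∑ m, c k m * q.1 m) - q.2) * (α l * q.1 l)
          = α l * ((sigmoid (RBPC.lin (c k) q) - q.2) * q.1 l)
      show (sigmoid (RBPC.lin (c k) q) - q.2) * (α l * q.1 l)
          = α l * ((sigmoid (RBPC.lin (c k) q) - q.2) * q.1 l)
      ring
    rw [hpt3, integral_finset_sum _ (fun l _ =>
      ((RBPC.integrable_resid_mul μ hX2int hy (c k) (e l)).const_mul (α l)))]
    apply Finset.sum_congr rfl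
    intro l _
    exact integral_const_mul _ _
  rw [hgoal_eq]
  have hB0 : 0 ≤ BX * Real.sqrt (↑k * ε / 2) :=
    mul_nonneg hBX (Real.sqrt_nonneg _)
  calc |∑ l, α l * ∫ q, (sigmoid (RBPC.lin (c k) q) - q.2) * RBPC.lin (e l) q ∂μ|
      ≤ ∑ l, |α l * ∫ q, (sigmoid (RBPC.lin (c k) q) - q.2) * RBPC.lin (e l) q ∂μ| :=
        Finset.abs_sum_le_sum_abs _ _
    _ ≤ ∑ l, |α l| * (BX * Real.sqrt (↑k * ε / 2)) := by
        apply Finset.sum_le_sum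
        intro l _
        rw [abs_mul]
        exact mul_le_mul_of_nonneg_left (hcoord l) (abs_nonneg _)
    _ = (∑ l, |α l|) * (BX * Real.sqrt (↑k * ε / 2)) := by rw [Finset.sum_mul]
    _ ≤ Bg * (BX * Real.sqrt (↑k * ε / 2)) := mul_le_mul_of_nonneg_right hα hB0
    _ = Bg * BX * Real.sqrt (↑k * ε / 2) := by ring
end

section
/- Let 𝒟 be a probability distribution over (x,y) ∈ ℝ^d × {0,1} with E[x_l²] ≤ B_X² for all coordinates l. Let S_1, …, S_k ⊆ {1,…,d} with ∪_{i=1}^k S_i = {1,…,d}, and let p_1, …, p_k be produced by the sequential logit-passing protocol, each agent's minimizer assumed to exist. Let g = σ∘z_g be any logistic predictor with z_g(x) = Σ_{l=1}^d α_l x_l and Σ_{l=1}^d |α_l| ≤ B_g, and let ε ≥ L(p_1) − L(p_k). Then L(p_k) ≤ L(g) + B_g · B_X · √(kε/2), where L denotes expected BCE loss. -/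
open MeasureTheory ProbabilityTheory

namespace LBPC

noncomputable def lf (z : ℝ) : ℝ := Real.log (1 + Real.exp z)

lemma oneexp_pos (z : ℝ) : 0 < 1 + Real.exp z := by positivity

lemma sigmoid_eq (z : ℝ) : sigmoid z = Real.exp z / (1 + Real.exp z) := by
  unfold sigmoid
  rw [Real.exp_neg]
  have h := (Real.exp_pos z).ne'
  field_simp
  ring

lemma sigmoid_pos (z : ℝ) : 0 < sigmoid z := by
  rw [sigmoid_eq]; positivity

lemma sigmoid_lt_one (z : ℝ) : sigmoid z < 1 := by
  rw [sigmoid_eq, div_lt_one (oneexp_pos z)]; linarith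

lemma hasDerivAt_lf (z : ℝ) : HasDerivAt lf (sigmoid z) z := by
  have h : HasDerivAt (fun z : ℝ => 1 + Real.exp z) (Real.exp z) z :=
    (Real.hasDerivAt_exp z).const_add 1
  have := h.log (oneexp_pos z).ne'
  rw [sigmoid_eq]; exact this

lemma hasDerivAt_sigmoid (z : ℝ) :
    HasDerivAt sigmoid (sigmoid z * (1 - sigmoid z)) z := by
  have h0 : HasDerivAt (fun z : ℝ => -z) (-1) z := (hasDerivAt_id z).neg
  have h1 : HasDerivAt (fun z : ℝ => Real.exp (-z)) (-Real.exp (-z)) z := by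
    simpa [Function.comp_def] using (Real.hasDerivAt_exp (-z)).comp z h0
  have h2 : HasDerivAt (fun z : ℝ => 1 + Real.exp (-z)) (-Real.exp (-z)) z :=
    h1.const_add 1
  have h3 : (1 : ℝ) + Real.exp (-z) ≠ 0 := (oneexp_pos (-z)).ne'
  have h4 := (hasDerivAt_const z (1:ℝ)).div h2 h3
  have heq : (0 * (1 + Real.exp (-z)) - 1 * -Real.exp (-z)) / (1 + Real.exp (-z)) ^ 2
      = sigmoid z * (1 - sigmoid z) := by
    unfold sigmoid
    field_simp
    ring
  rw [heq] at h4
  exact h4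

lemma sigmoid_deriv_le (z : ℝ) : sigmoid z * (1 - sigmoid z) ≤ 1/4 := by
  nlinarith [sq_nonneg (sigmoid z - 1/2)]

lemma sigmoid_deriv_nonneg (z : ℝ) : 0 ≤ sigmoid z * (1 - sigmoid z) := by
  have := sigmoid_pos z
  have := sigmoid_lt_one z
  nlinarith

lemma sigmoid_mono : Monotone sigmoid :=
  monotone_of_hasDerivAt_nonneg hasDerivAt_sigmoid sigmoid_deriv_nonneg

lemma sigmoid_lip {a b : ℝ} (h : a ≤ b) : sigmoid b - sigmoid a ≤ (b - a) / 4 := by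
  have hA : Antitone (fun t => sigmoid t - t / 4) := by
    apply antitone_of_hasDerivAt_nonpos (f' := fun t => sigmoid t * (1 - sigmoid t) - 1/4)
    · intro t
      exact (hasDerivAt_sigmoid t).sub ((hasDerivAt_id t).div_const 4)
    · intro t
      show sigmoid t * (1 - sigmoid t) - 1/4 ≤ 0
      have := sigmoid_deriv_le t
      linarith
  have := hA h
  simp only at this
  linarith

/-- helper: function with derivative nonneg left of a, nonpos right of a, has max at a -/
lemma le_of_deriv_sign {f f' : ℝ → ℝ} (hf : ∀ x, HasDerivAt f (f' x) x) (a : ℝ)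
    (h1 : ∀ t, t ≤ a → 0 ≤ f' t) (h2 : ∀ t, a ≤ t → f' t ≤ 0) (b : ℝ) : f b ≤ f a := by
  rcases le_total b a with hb | hb
  · have hm : MonotoneOn f (Set.Iic a) := by
      apply monotoneOn_of_deriv_nonneg (convex_Iic a)
      · exact (Differentiable.continuous (fun x => (hf x).differentiableAt)).continuousOn
      · intro x hx
        exact (hf x).differentiableAt.differentiableWithinAt
      · intro x hx
        rw [(hf x).deriv]
        exact h1 x (le_of_lt (by simpa using hx))
    exact hm (Set.mem_Iic.2 hb) (Set.mem_Iic.2 le_rfl) hb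
  · have hm : AntitoneOn f (Set.Ici a) := by
      apply antitoneOn_of_deriv_nonpos (convex_Ici a)
      · exact (Differentiable.continuous (fun x => (hf x).differentiableAt)).continuousOn
      · intro x hx
        exact (hf x).differentiableAt.differentiableWithinAt
      · intro x hx
        rw [(hf x).deriv]
        exact h2 x (le_of_lt (by simpa using hx))
    exact hm (Set.mem_Ici.2 le_rfl) (Set.mem_Ici.2 hb) hb

/-- convexity: tangent line below -/
lemma lf_tangent (a b : ℝ) : sigmoid a * (b - a) ≤ lf b - lf a := by
  have key : ∀ x, (fun t => sigmoid a * t - lf t) x ≤ (fun t => sigmoid a * t - lf t) a := by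
    apply le_of_deriv_sign (f' := fun t => sigmoid a - sigmoid t)
    · intro t
      simpa [Pi.sub_def] using ((hasDerivAt_id t).const_mul (sigmoid a)).sub (hasDerivAt_lf t)
    · intro t ht
      have := sigmoid_mono ht; linarith
    · intro t ht
      have := sigmoid_mono ht; linarith
  have := key b
  simp only at this
  linarith


lemma lf_smooth (a b : ℝ) : lf b ≤ lf a + sigmoid a * (b - a) + (b - a)^2 / 8 := by
  have key : ∀ x, (fun t => lf t - sigmoid a * t - (t - a)^2/8) x
      ≤ (fun t => lf t - sigmoid a * t - (t - a)^2/8) a := by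
    apply le_of_deriv_sign (f' := fun t => sigmoid t - sigmoid a - (t - a)/4)
    · intro t
      have h1 : HasDerivAt (fun t : ℝ => (t - a)^2/8) (2*(t-a)/8) t := by
        simpa using (((hasDerivAt_id t).sub_const a).pow 2).div_const 8
      have h2 := ((hasDerivAt_lf t).sub ((hasDerivAt_id t).const_mul (sigmoid a))).sub h1
      convert h2 using 1
      · rfl
      · rfl
      · rfl
      · ring
    · intro t ht
      have := sigmoid_lip ht
      linarith
    · intro t ht
      have := sigmoid_lip ht
      linarith
  have := key b
  simp only at this
  nlinarith [this]

lemma lf_coco (a b : ℝ) :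
    2*(sigmoid a - sigmoid b)^2 ≤ lf a - lf b - sigmoid b * (a - b) := by
  have h1 := lf_smooth a (a - 4*(sigmoid a - sigmoid b))
  have h2 := lf_tangent b (a - 4*(sigmoid a - sigmoid b))
  nlinarith [h1, h2]

lemma lf_nonneg (z : ℝ) : 0 ≤ lf z :=
  Real.log_nonneg (by have := Real.exp_pos z; linarith)

lemma lf_le (z : ℝ) : lf z ≤ |z| + Real.log 2 := by
  have hb : 1 + Real.exp z ≤ Real.exp |z| * 2 := by
    rcases le_total z 0 with hz | hz
    · have h1 : Real.exp z ≤ 1 := Real.exp_le_one_iff.2 hz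
      have h2 : (1:ℝ) ≤ Real.exp |z| := Real.one_le_exp (abs_nonneg z)
      linarith
    · rw [abs_of_nonneg hz]
      have h2 : (1:ℝ) ≤ Real.exp z := Real.one_le_exp hz
      linarith
  have := Real.log_le_log (oneexp_pos z) hb
  rw [Real.log_mul (Real.exp_pos _).ne' (by norm_num), Real.log_exp] at this
  unfold lf
  linarith

lemma sigmoid_continuous : Continuous sigmoid :=
  Differentiable.continuous fun x => (hasDerivAt_sigmoid x).differentiableAt

lemma lf_continuous : Continuous lf :=
  Differentiable.continuous fun x => (hasDerivAt_lf x).differentiableAt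

lemma pt_smooth (z u t y : ℝ) :
    lf (z + t*u) - y*(z + t*u)
      ≤ (lf z - y*z) + t*((sigmoid z - y)*u) + t^2 * (u^2/8) := by
  nlinarith [lf_smooth z (z + t*u)]

lemma pt_convex (a b y : ℝ) :
    (lf a - y*a) - (lf b - y*b) ≤ (sigmoid a - y)*(a - b) := by
  nlinarith [lf_tangent a b]

lemma pt_gapid (a b y : ℝ) :
    2*(sigmoid a - sigmoid b)^2
      ≤ ((lf a - y*a) - (lf b - y*b)) - (sigmoid b - y)*(a - b) := by
  nlinarith [lf_coco a b]

lemma quad_zero {G A : ℝ} (hA : 0 ≤ A) (h : ∀ t : ℝ, 0 ≤ t * G + t^2 * A) : G = 0 := by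
  by_contra hG
  have ht := h (-G / (A + 1))
  have hA1 : (0:ℝ) < A + 1 := by linarith
  have key : -G / (A + 1) * G + (-G / (A + 1))^2 * A < 0 := by
    rw [div_pow, neg_pow]
    have hG2 : 0 < G^2 := by positivity
    rw [div_mul_eq_mul_div, div_mul_eq_mul_div]
    rw [div_add_div _ _ (ne_of_gt hA1) (ne_of_gt (by positivity : (0:ℝ) < (A+1)^2))]
    apply div_neg_of_neg_of_pos _ (by positivity)
    ring_nf
    nlinarith [hG2, hA1]
  linarith


section Helpers
variable {α : Type*} {m : MeasurableSpace α} {μ : Measure α}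

lemma integrable_mul_memL2 {f g : α → ℝ} (hf : MemLp f 2 μ) (hg : MemLp g 2 μ) :
    Integrable (fun x => f x * g x) μ := by
  refine ((hf.integrable_sq.add hg.integrable_sq).div_const 2).mono' (hf.1.mul hg.1) ?_
  filter_upwards with x
  rw [Real.norm_eq_abs, abs_mul]
  simp only [Pi.add_apply]
  nlinarith [sq_nonneg (|f x| - |g x|), sq_abs (f x), sq_abs (g x),
    abs_nonneg (f x), abs_nonneg (g x)]

lemma integral_cs {f g : α → ℝ} (hf : MemLp f 2 μ) (hg : MemLp g 2 μ) :
    |∫ x, f x * g x ∂μ| ≤ Real.sqrt (∫ x, f x^2 ∂μ) * Real.sqrt (∫ x, g x^2 ∂μ) := by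
  have hC : 0 ≤ ∫ x, f x^2 ∂μ := integral_nonneg fun x => sq_nonneg _
  have key : ∀ t : ℝ, 0 ≤ (∫ x, g x^2 ∂μ) * (t*t) + (2 * ∫ x, f x * g x ∂μ) * t
      + (∫ x, f x^2 ∂μ) := by
    intro t
    have hint1 := hf.integrable_sq
    have hint2 := (integrable_mul_memL2 hf hg).const_mul (2*t)
    have hint3 := hg.integrable_sq.const_mul (t^2)
    have hexp : (fun x => (f x + t * g x)^2)
        = fun x => f x^2 + ((2*t) * (f x * g x) + t^2 * g x^2) := by
      funext x; ring
    have h0 : 0 ≤ ∫ x, (f x + t * g x)^2 ∂μ := integral_nonneg fun x => sq_nonneg _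
    have hint23 : Integrable (fun x => 2 * t * (f x * g x) + t ^ 2 * g x ^ 2) μ :=
      hint2.add hint3
    rw [hexp, integral_add hint1 hint23, integral_add hint2 hint3,
      integral_const_mul, integral_const_mul] at h0
    nlinarith [h0]
  have hd := discrim_le_zero key
  rw [discrim] at hd
  have hB2 : (∫ x, f x * g x ∂μ)^2 ≤ (∫ x, f x^2 ∂μ) * (∫ x, g x^2 ∂μ) := by nlinarith [hd]
  calc |∫ x, f x * g x ∂μ| = Real.sqrt ((∫ x, f x * g x ∂μ)^2) := (Real.sqrt_sq_eq_abs _).symm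
    _ ≤ Real.sqrt ((∫ x, f x^2 ∂μ) * (∫ x, g x^2 ∂μ)) := Real.sqrt_le_sqrt hB2
    _ = _ := Real.sqrt_mul hC _

end Helpers

lemma sum_tele (g : ℕ → ℝ) (m : ℕ) : ∀ n, m ≤ n →
    (∑ j ∈ Finset.Ico m n, (g (j+1) - g j)) = g n - g m := by
  intro n hn
  induction n with
  | zero =>
    have hm : m = 0 := by omega
    subst hm; simp
  | succ n ih =>
    rcases Nat.lt_or_ge n m with h | h
    · have hm : m = n + 1 := by omega
      subst hm; simp
    · rw [Finset.sum_Ico_succ_top h, ih h]; ring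

end LBPC

/-- For the sequential logit-passing protocol on feature subsets `S_1, …, S_k` covering all
`d` features, any logistic predictor `g = σ∘z_g` with `z_g(x) = Σ_l α_l x_l`,
`Σ_l |α_l| ≤ B_g`, second moments `E[x_l²] ≤ B_X²`, and `ε ≥ L(p_1) − L(p_k)`:
`L(p_k) ≤ L(g) + B_g B_X √(kε/2)`. -/


theorem loss_bound_via_path_coverage
    {d : ℕ} (μ : Measure ((Fin d → ℝ) × ℝ)) [IsProbabilityMeasure μ]
    (hy : ∀ᵐ q ∂μ, q.2 = 0 ∨ q.2 = 1)
    (BX : ℝ) (hBX : 0 ≤ BX)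
    (hX2int : ∀ l : Fin d, Integrable (fun q : (Fin d → ℝ) × ℝ => (q.1 l) ^ 2) μ)
    (hX2 : ∀ l : Fin d, ∫ q, (q.1 l) ^ 2 ∂μ ≤ BX ^ 2)
    (k : ℕ) (hk : 1 ≤ k) (S : ℕ → Finset (Fin d))
    (hcov : ∀ l : Fin d, ∃ i < k, l ∈ S i)
    (w : ℕ → Fin d → ℝ) (v : ℕ → ℝ)
    (hsupp : ∀ i < k, ∀ l ∉ S i, w i l = 0)
    (hmin : ∀ i < k, ∀ w' : Fin d → ℝ, (∀ l ∉ S i, w' l = 0) → ∀ v' : ℝ,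
      bceLossFn μ (seqLogit w v (i + 1))
        ≤ bceLossFn μ (fun x => (∑ l, w' l * x l) + v' * seqLogit w v i x))
    (Bg : ℝ) (α : Fin d → ℝ) (hα : ∑ l, |α l| ≤ Bg)
    (ε : ℝ) (hε : bceLossFn μ (seqLogit w v 1) - bceLossFn μ (seqLogit w v k) ≤ ε) :
    bceLossFn μ (seqLogit w v k)
      ≤ bceLossFn μ (fun x => ∑ l, α l * x l) + Bg * BX * Real.sqrt (k * ε / 2) := by
  classical
  -- basic measurability / L² facts
  have hXm : ∀ l : Fin d, AEStronglyMeasurable (fun q : (Fin d → ℝ) × ℝ => q.1 l) μ :=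
    fun l => ((measurable_pi_apply l).comp measurable_fst).aestronglyMeasurable
  have hXmem : ∀ l : Fin d, MemLp (fun q : (Fin d → ℝ) × ℝ => q.1 l) 2 μ :=
    fun l => (memLp_two_iff_integrable_sq (hXm l)).2 (hX2int l)
  have hlinmem : ∀ c : Fin d → ℝ,
      MemLp (fun q : (Fin d → ℝ) × ℝ => ∑ l, c l * q.1 l) 2 μ := by
    intro c
    have h := memLp_finset_sum (μ := μ) (p := 2) Finset.univ
      (f := fun (l : Fin d) (q : (Fin d → ℝ) × ℝ) => c l * q.1 l)
      (fun l _ => (hXmem l).const_mul (c l))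
    simpa using h
  have hZrep : ∀ i : ℕ, ∃ c : Fin d → ℝ, ∀ x : Fin d → ℝ,
      seqLogit w v i x = ∑ l, c l * x l := by
    intro i
    induction i with
    | zero => exact ⟨fun _ => 0, fun x => by simp [seqLogit]⟩
    | succ i ih =>
      obtain ⟨c, hc⟩ := ih
      refine ⟨fun l => w i l + v i * c l, fun x => ?_⟩
      simp only [seqLogit]
      rw [hc x, Finset.mul_sum, ← Finset.sum_add_distrib]
      exact Finset.sum_congr rfl fun l _ => by ring
  have hZmem : ∀ i : ℕ, MemLp (fun q : (Fin d → ℝ) × ℝ => seqLogit w v i q.1) 2 μ := by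
    intro i
    obtain ⟨c, hc⟩ := hZrep i
    have he : (fun q : (Fin d → ℝ) × ℝ => seqLogit w v i q.1)
        = fun q => ∑ l, c l * q.1 l := funext fun q => hc q.1
    rw [he]; exact hlinmem c
  have hZmeas : ∀ i : ℕ,
      AEStronglyMeasurable (fun q : (Fin d → ℝ) × ℝ => seqLogit w v i q.1) μ :=
    fun i => (hZmem i).1
  have hRmeas : ∀ i : ℕ, AEStronglyMeasurable
      (fun q : (Fin d → ℝ) × ℝ => sigmoid (seqLogit w v i q.1) - q.2) μ :=
    fun i => (LBPC.sigmoid_continuous.comp_aestronglyMeasurable (hZmeas i)).sub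
      measurable_snd.aestronglyMeasurable
  have hRbdd : ∀ i : ℕ, ∀ᵐ q ∂μ, |sigmoid (seqLogit w v i q.1) - q.2| ≤ 1 := by
    intro i
    filter_upwards [hy] with q hq
    have h1 := LBPC.sigmoid_pos (seqLogit w v i q.1)
    have h2 := LBPC.sigmoid_lt_one (seqLogit w v i q.1)
    rcases hq with h | h <;> rw [h, abs_le] <;> constructor <;> linarith
  -- integrability of loss integrands
  have hLossInt : ∀ z : ((Fin d → ℝ) × ℝ) → ℝ, MemLp z 2 μ →
      Integrable (fun q => LBPC.lf (z q) - q.2 * z q) μ := by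
    intro z hz
    have hz1 : Integrable z μ := hz.integrable one_le_two
    have habs : Integrable (fun q => |z q| + Real.log 2) μ :=
      hz1.abs.add (integrable_const (Real.log 2))
    have h1 : Integrable (fun q => LBPC.lf (z q)) μ := by
      refine habs.mono' (LBPC.lf_continuous.comp_aestronglyMeasurable hz.1) ?_
      filter_upwards with q
      rw [Real.norm_eq_abs, abs_of_nonneg (LBPC.lf_nonneg _)]
      exact LBPC.lf_le _
    have h2 : Integrable (fun q => q.2 * z q) μ := by
      refine hz1.abs.mono' (measurable_snd.aestronglyMeasurable.mul hz.1) ?_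
      filter_upwards [hy] with q hq
      rcases hq with h | h <;> simp [h, Real.norm_eq_abs, abs_mul, abs_nonneg]
    exact h1.sub h2
  have hbce : ∀ zf : (Fin d → ℝ) → ℝ,
      bceLossFn μ zf = ∫ q, (LBPC.lf (zf q.1) - q.2 * zf q.1) ∂μ := fun _ => rfl
  -- bounded-times-L² products are integrable
  have hmulR : ∀ (i : ℕ) (u : ((Fin d → ℝ) × ℝ) → ℝ), MemLp u 2 μ →
      Integrable (fun q => (sigmoid (seqLogit w v i q.1) - q.2) * u q) μ := by
    intro i u hu
    refine (hu.integrable one_le_two).abs.mono' ((hRmeas i).mul hu.1) ?_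
    filter_upwards [hRbdd i] with q hq
    rw [Real.norm_eq_abs, abs_mul]
    calc |sigmoid (seqLogit w v i q.1) - q.2| * |u q| ≤ 1 * |u q| :=
          mul_le_mul_of_nonneg_right hq (abs_nonneg _)
      _ = |u q| := one_mul _
  -- stationarity of each minimizer
  have hstat : ∀ i, i < k → ∀ c : Fin d → ℝ, (∀ l ∉ S i, c l = 0) → ∀ ρ : ℝ,
      ∫ q, (sigmoid (seqLogit w v (i+1) q.1) - q.2)
        * ((∑ l, c l * q.1 l) + ρ * seqLogit w v i q.1) ∂μ = 0 := by
    intro i hik c hc ρ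
    have hUmem : MemLp (fun q : (Fin d → ℝ) × ℝ =>
        (∑ l, c l * q.1 l) + ρ * seqLogit w v i q.1) 2 μ :=
      (hlinmem c).add ((hZmem i).const_mul ρ)
    have hAnn : (0:ℝ) ≤ (∫ q, ((∑ l, c l * q.1 l) + ρ * seqLogit w v i q.1)^2 ∂μ) / 8 := by
      have := integral_nonneg (μ := μ)
        (f := fun q : (Fin d → ℝ) × ℝ =>
          ((∑ l, c l * q.1 l) + ρ * seqLogit w v i q.1)^2) fun q => sq_nonneg _
      linarith
    refine LBPC.quad_zero hAnn ?_
    intro t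
    have hw' : ∀ l ∉ S i, (fun l => w i l + t * c l) l = 0 := fun l hl => by
      simp only; rw [hsupp i hik l hl, hc l hl]; ring
    have hmin' := hmin i hik (fun l => w i l + t * c l) hw' (v i + t * ρ)
    have hfeq : (fun x => (∑ l, (fun l => w i l + t * c l) l * x l)
          + (v i + t * ρ) * seqLogit w v i x)
        = fun x => seqLogit w v (i+1) x
            + t * ((∑ l, c l * x l) + ρ * seqLogit w v i x) := by
      funext x
      simp only [seqLogit]
      rw [show (∑ l, (w i l + t * c l) * x l)
          = (∑ l, w i l * x l) + t * ∑ l, c l * x l by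
        rw [Finset.mul_sum, ← Finset.sum_add_distrib]
        exact Finset.sum_congr rfl fun l _ => by ring]
      ring
    rw [hfeq] at hmin'
    have hcomp : MemLp (fun q : (Fin d → ℝ) × ℝ =>
        seqLogit w v (i+1) q.1
          + t * ((∑ l, c l * q.1 l) + ρ * seqLogit w v i q.1)) 2 μ :=
      (hZmem (i+1)).add (hUmem.const_mul t)
    have hint1 := hLossInt _ (hZmem (i+1))
    have hint2 : Integrable (fun q : (Fin d → ℝ) × ℝ =>
        t * ((sigmoid (seqLogit w v (i+1) q.1) - q.2)
          * ((∑ l, c l * q.1 l) + ρ * seqLogit w v i q.1))) μ :=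
      (hmulR (i+1) _ hUmem).const_mul t
    have hint3 : Integrable (fun q : (Fin d → ℝ) × ℝ =>
        t^2 * (((∑ l, c l * q.1 l) + ρ * seqLogit w v i q.1)^2 / 8)) μ :=
      (hUmem.integrable_sq.div_const 8).const_mul (t^2)
    have hint23 : Integrable (fun q : (Fin d → ℝ) × ℝ =>
        t * ((sigmoid (seqLogit w v (i+1) q.1) - q.2)
          * ((∑ l, c l * q.1 l) + ρ * seqLogit w v i q.1))
        + t^2 * (((∑ l, c l * q.1 l) + ρ * seqLogit w v i q.1)^2 / 8)) μ :=
      hint2.add hint3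
    have hptw : (fun q : (Fin d → ℝ) × ℝ =>
          LBPC.lf (seqLogit w v (i+1) q.1
              + t * ((∑ l, c l * q.1 l) + ρ * seqLogit w v i q.1))
            - q.2 * (seqLogit w v (i+1) q.1
              + t * ((∑ l, c l * q.1 l) + ρ * seqLogit w v i q.1)))
        ≤ᵐ[μ] fun q =>
          (LBPC.lf (seqLogit w v (i+1) q.1) - q.2 * seqLogit w v (i+1) q.1)
          + (t * ((sigmoid (seqLogit w v (i+1) q.1) - q.2)
              * ((∑ l, c l * q.1 l) + ρ * seqLogit w v i q.1))
            + t^2 * (((∑ l, c l * q.1 l) + ρ * seqLogit w v i q.1)^2 / 8)) := by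
      filter_upwards with q
      have := LBPC.pt_smooth (seqLogit w v (i+1) q.1)
        ((∑ l, c l * q.1 l) + ρ * seqLogit w v i q.1) t q.2
      linarith
    have hint123 : Integrable (fun q : (Fin d → ℝ) × ℝ =>
        (LBPC.lf (seqLogit w v (i+1) q.1) - q.2 * seqLogit w v (i+1) q.1)
        + (t * ((sigmoid (seqLogit w v (i+1) q.1) - q.2)
            * ((∑ l, c l * q.1 l) + ρ * seqLogit w v i q.1))
          + t^2 * (((∑ l, c l * q.1 l) + ρ * seqLogit w v i q.1)^2 / 8))) μ :=
      hint1.add hint23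
    have hmono := integral_mono_ae (hLossInt _ hcomp) hint123 hptw
    rw [integral_add hint1 hint23, integral_add hint2 hint3,
      integral_const_mul, integral_const_mul] at hmono
    have hdiv : ∫ q, ((∑ l, c l * q.1 l) + ρ * seqLogit w v i q.1)^2 / 8 ∂μ
        = (∫ q, ((∑ l, c l * q.1 l) + ρ * seqLogit w v i q.1)^2 ∂μ) / 8 :=
      integral_div 8 _
    rw [hdiv] at hmono
    have hL1 : bceLossFn μ (seqLogit w v (i+1))
        = ∫ q, (LBPC.lf (seqLogit w v (i+1) q.1) - q.2 * seqLogit w v (i+1) q.1) ∂μ :=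
      hbce _
    have hL2 : bceLossFn μ (fun x => seqLogit w v (i+1) x
          + t * ((∑ l, c l * x l) + ρ * seqLogit w v i x))
        = ∫ q, (LBPC.lf (seqLogit w v (i+1) q.1
              + t * ((∑ l, c l * q.1 l) + ρ * seqLogit w v i q.1))
            - q.2 * (seqLogit w v (i+1) q.1
              + t * ((∑ l, c l * q.1 l) + ρ * seqLogit w v i q.1))) ∂μ :=
      hbce _
    rw [hL1] at hmin'
    rw [hL2] at hmin'
    linarith
  -- each-step loss is nonincreasing
  have hLdec : ∀ j, j < k → bceLossFn μ (seqLogit w v (j+1)) ≤ bceLossFn μ (seqLogit w v j) := by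
    intro j hjk
    have h := hmin j hjk (fun _ => 0) (fun _ _ => rfl) 1
    have he : (fun x => (∑ l, (fun _ : Fin d => (0:ℝ)) l * x l) + 1 * seqLogit w v j x)
        = seqLogit w v j := by
      funext x; simp
    rwa [he] at h
  -- gap lemma
  have hgap : ∀ j, j < k →
      ∫ q, (sigmoid (seqLogit w v j q.1) - sigmoid (seqLogit w v (j+1) q.1))^2 ∂μ
        ≤ (bceLossFn μ (seqLogit w v j) - bceLossFn μ (seqLogit w v (j+1))) / 2 := by
    intro j hjk
    have hz : ∫ q, (sigmoid (seqLogit w v (j+1) q.1) - q.2)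
        * ((∑ l, w j l * q.1 l) + (v j - 1) * seqLogit w v j q.1) ∂μ = 0 :=
      hstat j hjk (w j) (hsupp j hjk) (v j - 1)
    have hIsq : Integrable (fun q : (Fin d → ℝ) × ℝ =>
        (sigmoid (seqLogit w v j q.1) - sigmoid (seqLogit w v (j+1) q.1))^2) μ := by
      refine (integrable_const (1:ℝ)).mono' ?_ ?_
      · have hm : AEStronglyMeasurable (fun q : (Fin d → ℝ) × ℝ =>
            sigmoid (seqLogit w v j q.1) - sigmoid (seqLogit w v (j+1) q.1)) μ :=
          (LBPC.sigmoid_continuous.comp_aestronglyMeasurable (hZmeas j)).sub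
            (LBPC.sigmoid_continuous.comp_aestronglyMeasurable (hZmeas (j+1)))
        exact hm.mul hm |>.congr (Filter.Eventually.of_forall fun q => by
          simp only [Pi.mul_apply]; exact (sq _).symm)
      · filter_upwards with q
        rw [Real.norm_eq_abs, abs_of_nonneg (sq_nonneg _)]
        nlinarith [LBPC.sigmoid_pos (seqLogit w v j q.1),
          LBPC.sigmoid_lt_one (seqLogit w v j q.1),
          LBPC.sigmoid_pos (seqLogit w v (j+1) q.1),
          LBPC.sigmoid_lt_one (seqLogit w v (j+1) q.1)]
    have hImul : Integrable (fun q : (Fin d → ℝ) × ℝ =>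
        (sigmoid (seqLogit w v (j+1) q.1) - q.2)
          * ((∑ l, w j l * q.1 l) + (v j - 1) * seqLogit w v j q.1)) μ :=
      hmulR (j+1) _ ((hlinmem (w j)).add ((hZmem j).const_mul (v j - 1)))
    have hlhsInt : Integrable (fun q : (Fin d → ℝ) × ℝ =>
        2 * (sigmoid (seqLogit w v j q.1) - sigmoid (seqLogit w v (j+1) q.1))^2
        - (sigmoid (seqLogit w v (j+1) q.1) - q.2)
          * ((∑ l, w j l * q.1 l) + (v j - 1) * seqLogit w v j q.1)) μ :=
      (hIsq.const_mul 2).sub hImul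
    have hrhsInt : Integrable (fun q : (Fin d → ℝ) × ℝ =>
        (LBPC.lf (seqLogit w v j q.1) - q.2 * seqLogit w v j q.1)
        - (LBPC.lf (seqLogit w v (j+1) q.1) - q.2 * seqLogit w v (j+1) q.1)) μ :=
      (hLossInt _ (hZmem j)).sub (hLossInt _ (hZmem (j+1)))
    have hptw : (fun q : (Fin d → ℝ) × ℝ =>
          2 * (sigmoid (seqLogit w v j q.1) - sigmoid (seqLogit w v (j+1) q.1))^2
          - (sigmoid (seqLogit w v (j+1) q.1) - q.2)
            * ((∑ l, w j l * q.1 l) + (v j - 1) * seqLogit w v j q.1))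
        ≤ᵐ[μ] fun q =>
          (LBPC.lf (seqLogit w v j q.1) - q.2 * seqLogit w v j q.1)
          - (LBPC.lf (seqLogit w v (j+1) q.1) - q.2 * seqLogit w v (j+1) q.1) := by
      filter_upwards with q
      have hab : seqLogit w v j q.1 - seqLogit w v (j+1) q.1
          = -((∑ l, w j l * q.1 l) + (v j - 1) * seqLogit w v j q.1) := by
        simp only [seqLogit]; ring
      have h := LBPC.pt_gapid (seqLogit w v j q.1) (seqLogit w v (j+1) q.1) q.2
      rw [hab] at h
      nlinarith [h]
    have hmono := integral_mono_ae hlhsInt hrhsInt hptw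
    rw [integral_sub (hIsq.const_mul 2) hImul, integral_const_mul, hz,
      integral_sub (hLossInt _ (hZmem j)) (hLossInt _ (hZmem (j+1)))] at hmono
    rw [hbce (seqLogit w v j), hbce (seqLogit w v (j+1))]
    linarith
  -- telescoping and nonnegativity
  have htel : (∑ j ∈ Finset.Ico 1 k,
        (bceLossFn μ (seqLogit w v j) - bceLossFn μ (seqLogit w v (j+1))))
      = bceLossFn μ (seqLogit w v 1) - bceLossFn μ (seqLogit w v k) := by
    have h := LBPC.sum_tele (fun j => - bceLossFn μ (seqLogit w v j)) 1 k hk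
    have h2 : (∑ j ∈ Finset.Ico 1 k,
          (bceLossFn μ (seqLogit w v j) - bceLossFn μ (seqLogit w v (j+1))))
        = ∑ j ∈ Finset.Ico 1 k,
          ((fun j => - bceLossFn μ (seqLogit w v j)) (j+1)
            - (fun j => - bceLossFn μ (seqLogit w v j)) j) :=
      Finset.sum_congr rfl fun j _ => by simp only; ring
    rw [h2, h]; ring
  have hDnn : ∀ j ∈ Finset.Ico 1 k,
      0 ≤ bceLossFn μ (seqLogit w v j) - bceLossFn μ (seqLogit w v (j+1)) := by
    intro j hj
    rw [Finset.mem_Ico] at hj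
    linarith [hLdec j hj.2]
  have hsum_le : (∑ j ∈ Finset.Ico 1 k,
      (bceLossFn μ (seqLogit w v j) - bceLossFn μ (seqLogit w v (j+1)))) ≤ ε := by
    rw [htel]; exact hε
  have hε0 : 0 ≤ ε := le_trans (Finset.sum_nonneg hDnn) hsum_le
  -- MemLp of sigmoid differences
  have hσmem : ∀ j : ℕ, MemLp (fun q : (Fin d → ℝ) × ℝ =>
      sigmoid (seqLogit w v (j+1) q.1) - sigmoid (seqLogit w v j q.1)) 2 μ := by
    intro j
    refine MemLp.of_bound
      ((LBPC.sigmoid_continuous.comp_aestronglyMeasurable (hZmeas (j+1))).sub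
        (LBPC.sigmoid_continuous.comp_aestronglyMeasurable (hZmeas j))) 1 ?_
    filter_upwards with q
    rw [Real.norm_eq_abs, abs_le]
    constructor <;>
      nlinarith [LBPC.sigmoid_pos (seqLogit w v j q.1),
        LBPC.sigmoid_lt_one (seqLogit w v j q.1),
        LBPC.sigmoid_pos (seqLogit w v (j+1) q.1),
        LBPC.sigmoid_lt_one (seqLogit w v (j+1) q.1)]
  -- per-step per-coordinate bound
  have hterm : ∀ (l : Fin d) (j : ℕ), j < k →
      |∫ q, (sigmoid (seqLogit w v (j+1) q.1) - sigmoid (seqLogit w v j q.1)) * q.1 l ∂μ|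
        ≤ BX * Real.sqrt
            ((bceLossFn μ (seqLogit w v j) - bceLossFn μ (seqLogit w v (j+1))) / 2) := by
    intro l j hjk
    have hcs := LBPC.integral_cs (hσmem j) (hXmem l)
    have hflip : (∫ q, (sigmoid (seqLogit w v (j+1) q.1) - sigmoid (seqLogit w v j q.1))^2 ∂μ)
        = ∫ q, (sigmoid (seqLogit w v j q.1) - sigmoid (seqLogit w v (j+1) q.1))^2 ∂μ := by
      congr 1
      funext q
      ring
    have h1 : Real.sqrt (∫ q,
          (sigmoid (seqLogit w v (j+1) q.1) - sigmoid (seqLogit w v j q.1))^2 ∂μ)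
        ≤ Real.sqrt ((bceLossFn μ (seqLogit w v j) - bceLossFn μ (seqLogit w v (j+1))) / 2) := by
      apply Real.sqrt_le_sqrt
      rw [hflip]
      linarith [hgap j hjk]
    have h2 : Real.sqrt (∫ q, (q.1 l)^2 ∂μ) ≤ BX := by
      calc Real.sqrt (∫ q, (q.1 l)^2 ∂μ) ≤ Real.sqrt (BX^2) := Real.sqrt_le_sqrt (hX2 l)
        _ = BX := Real.sqrt_sq hBX
    calc |∫ q, (sigmoid (seqLogit w v (j+1) q.1) - sigmoid (seqLogit w v j q.1)) * q.1 l ∂μ|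
        ≤ Real.sqrt (∫ q,
            (sigmoid (seqLogit w v (j+1) q.1) - sigmoid (seqLogit w v j q.1))^2 ∂μ)
          * Real.sqrt (∫ q, (q.1 l)^2 ∂μ) := hcs
      _ ≤ Real.sqrt ((bceLossFn μ (seqLogit w v j) - bceLossFn μ (seqLogit w v (j+1))) / 2)
          * BX := mul_le_mul h1 h2 (Real.sqrt_nonneg _) (Real.sqrt_nonneg _)
      _ = BX * Real.sqrt
            ((bceLossFn μ (seqLogit w v j) - bceLossFn μ (seqLogit w v (j+1))) / 2) :=
          mul_comm _ _
  -- sum of square roots bound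
  have hsumt : ∀ i : ℕ, i < k →
      (∑ j ∈ Finset.Ico (i+1) k, Real.sqrt
        ((bceLossFn μ (seqLogit w v j) - bceLossFn μ (seqLogit w v (j+1))) / 2))
      ≤ Real.sqrt (k * ε / 2) := by
    intro i hik
    have hkε : (0:ℝ) ≤ k * ε / 2 := by positivity
    refine (Real.le_sqrt (Finset.sum_nonneg fun j _ => Real.sqrt_nonneg _) hkε).2 ?_
    have hDnn' : ∀ j ∈ Finset.Ico (i+1) k,
        0 ≤ (bceLossFn μ (seqLogit w v j) - bceLossFn μ (seqLogit w v (j+1))) / 2 := by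
      intro j hj
      have := hLdec j (Finset.mem_Ico.1 hj).2
      linarith
    calc (∑ j ∈ Finset.Ico (i+1) k, Real.sqrt
          ((bceLossFn μ (seqLogit w v j) - bceLossFn μ (seqLogit w v (j+1))) / 2))^2
        ≤ (Finset.Ico (i+1) k).card * ∑ j ∈ Finset.Ico (i+1) k, (Real.sqrt
          ((bceLossFn μ (seqLogit w v j) - bceLossFn μ (seqLogit w v (j+1))) / 2))^2 :=
          sq_sum_le_card_mul_sum_sq
      _ = (Finset.Ico (i+1) k).card * ∑ j ∈ Finset.Ico (i+1) k,
            ((bceLossFn μ (seqLogit w v j) - bceLossFn μ (seqLogit w v (j+1))) / 2) := by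
          congr 1
          exact Finset.sum_congr rfl fun j hj => Real.sq_sqrt (hDnn' j hj)
      _ ≤ k * (ε / 2) := by
          have hcard : (((Finset.Ico (i+1) k).card : ℕ) : ℝ) ≤ (k : ℝ) := by
            rw [Nat.card_Ico]
            exact_mod_cast Nat.sub_le k (i+1)
          have hsub : (∑ j ∈ Finset.Ico (i+1) k,
                (bceLossFn μ (seqLogit w v j) - bceLossFn μ (seqLogit w v (j+1))))
              ≤ ∑ j ∈ Finset.Ico 1 k,
                (bceLossFn μ (seqLogit w v j) - bceLossFn μ (seqLogit w v (j+1))) :=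
            Finset.sum_le_sum_of_subset_of_nonneg
              (Finset.Ico_subset_Ico (by omega) le_rfl) (fun j hj _ => hDnn j hj)
          have hsum2 : (∑ j ∈ Finset.Ico (i+1) k,
              ((bceLossFn μ (seqLogit w v j) - bceLossFn μ (seqLogit w v (j+1))) / 2))
              ≤ ε / 2 := by
            rw [← Finset.sum_div]
            linarith [hsum_le]
          have hsumnn : (0:ℝ) ≤ ∑ j ∈ Finset.Ico (i+1) k,
              ((bceLossFn μ (seqLogit w v j) - bceLossFn μ (seqLogit w v (j+1))) / 2) :=
            Finset.sum_nonneg hDnn'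
          calc ((Finset.Ico (i+1) k).card : ℝ) * ∑ j ∈ Finset.Ico (i+1) k,
                ((bceLossFn μ (seqLogit w v j) - bceLossFn μ (seqLogit w v (j+1))) / 2)
              ≤ (k : ℝ) * ∑ j ∈ Finset.Ico (i+1) k,
                ((bceLossFn μ (seqLogit w v j) - bceLossFn μ (seqLogit w v (j+1))) / 2) :=
              mul_le_mul_of_nonneg_right hcard hsumnn
            _ ≤ (k : ℝ) * (ε / 2) := mul_le_mul_of_nonneg_left hsum2 (by positivity)
      _ = k * ε / 2 := by ring
  -- per-coordinate gradient bound at the final logit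
  have hgrad : ∀ l : Fin d,
      |∫ q, (sigmoid (seqLogit w v k q.1) - q.2) * q.1 l ∂μ|
        ≤ BX * Real.sqrt (k * ε / 2) := by
    intro l
    obtain ⟨i, hik, hil⟩ := hcov l
    have h0 : ∫ q, (sigmoid (seqLogit w v (i+1) q.1) - q.2) * q.1 l ∂μ = 0 := by
      have h := hstat i hik (Pi.single l 1)
        (fun l' hl' => by
          have hne : l' ≠ l := fun he => hl' (by rw [he]; exact hil)
          exact Pi.single_eq_of_ne hne 1) 0
      have he : (fun q : (Fin d → ℝ) × ℝ =>
          (sigmoid (seqLogit w v (i+1) q.1) - q.2)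
            * ((∑ l', (Pi.single l (1:ℝ) : Fin d → ℝ) l' * q.1 l') + 0 * seqLogit w v i q.1))
          = fun q => (sigmoid (seqLogit w v (i+1) q.1) - q.2) * q.1 l := by
        funext q
        have hs : (∑ l', (Pi.single l (1:ℝ) : Fin d → ℝ) l' * q.1 l') = q.1 l := by
          rw [Finset.sum_eq_single l]
          · simp
          · intro b _ hb
            rw [Pi.single_eq_of_ne hb]
            ring
          · intro hl
            exact absurd (Finset.mem_univ l) hl
        rw [hs]
        ring
      rwa [he] at h
    have hdiff : (fun q : (Fin d → ℝ) × ℝ => (sigmoid (seqLogit w v k q.1) - q.2) * q.1 l)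
        = fun q => (sigmoid (seqLogit w v (i+1) q.1) - q.2) * q.1 l
          + ∑ j ∈ Finset.Ico (i+1) k,
              (sigmoid (seqLogit w v (j+1) q.1) - sigmoid (seqLogit w v j q.1)) * q.1 l := by
      funext q
      rw [← Finset.sum_mul,
        LBPC.sum_tele (fun j => sigmoid (seqLogit w v j q.1)) (i+1) k hik]
      ring
    have hIone : Integrable (fun q : (Fin d → ℝ) × ℝ =>
        (sigmoid (seqLogit w v (i+1) q.1) - q.2) * q.1 l) μ :=
      hmulR (i+1) _ (hXmem l)
    have hIterm : ∀ j ∈ Finset.Ico (i+1) k, Integrable (fun q : (Fin d → ℝ) × ℝ =>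
        (sigmoid (seqLogit w v (j+1) q.1) - sigmoid (seqLogit w v j q.1)) * q.1 l) μ :=
      fun j _ => LBPC.integrable_mul_memL2 (hσmem j) (hXmem l)
    have hIeq : ∫ q, (sigmoid (seqLogit w v k q.1) - q.2) * q.1 l ∂μ
        = (∫ q, (sigmoid (seqLogit w v (i+1) q.1) - q.2) * q.1 l ∂μ)
          + ∑ j ∈ Finset.Ico (i+1) k,
              ∫ q, (sigmoid (seqLogit w v (j+1) q.1) - sigmoid (seqLogit w v j q.1))
                * q.1 l ∂μ := by
      rw [hdiff, integral_add hIone (integrable_finset_sum _ hIterm),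
        integral_finset_sum _ hIterm]
    rw [hIeq, h0, zero_add]
    calc |∑ j ∈ Finset.Ico (i+1) k,
          ∫ q, (sigmoid (seqLogit w v (j+1) q.1) - sigmoid (seqLogit w v j q.1)) * q.1 l ∂μ|
        ≤ ∑ j ∈ Finset.Ico (i+1) k,
          |∫ q, (sigmoid (seqLogit w v (j+1) q.1) - sigmoid (seqLogit w v j q.1)) * q.1 l ∂μ| :=
          Finset.abs_sum_le_sum_abs _ _
      _ ≤ ∑ j ∈ Finset.Ico (i+1) k, BX * Real.sqrt
            ((bceLossFn μ (seqLogit w v j) - bceLossFn μ (seqLogit w v (j+1))) / 2) :=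
          Finset.sum_le_sum fun j hj => hterm l j (Finset.mem_Ico.1 hj).2
      _ = BX * ∑ j ∈ Finset.Ico (i+1) k, Real.sqrt
            ((bceLossFn μ (seqLogit w v j) - bceLossFn μ (seqLogit w v (j+1))) / 2) := by
          rw [Finset.mul_sum]
      _ ≤ BX * Real.sqrt (k * ε / 2) := mul_le_mul_of_nonneg_left (hsumt i hik) hBX
  -- convexity comparison with g
  have hZgmem := hlinmem α
  have hZkgmem : MemLp (fun q : (Fin d → ℝ) × ℝ =>
      seqLogit w v k q.1 - ∑ l, α l * q.1 l) 2 μ := (hZmem k).sub hZgmem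
  have hconv : bceLossFn μ (seqLogit w v k) - bceLossFn μ (fun x => ∑ l, α l * x l)
      ≤ ∫ q, (sigmoid (seqLogit w v k q.1) - q.2)
          * (seqLogit w v k q.1 - ∑ l, α l * q.1 l) ∂μ := by
    rw [hbce (seqLogit w v k), hbce (fun x => ∑ l, α l * x l),
      ← integral_sub (hLossInt _ (hZmem k)) (hLossInt _ hZgmem)]
    refine integral_mono_ae ((hLossInt _ (hZmem k)).sub (hLossInt _ hZgmem))
      (hmulR k _ hZkgmem) ?_
    filter_upwards with q
    exact LBPC.pt_convex (seqLogit w v k q.1) (∑ l, α l * q.1 l) q.2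
  have hRZk_split : ∫ q, (sigmoid (seqLogit w v k q.1) - q.2)
        * (seqLogit w v k q.1 - ∑ l, α l * q.1 l) ∂μ
      = (∫ q, (sigmoid (seqLogit w v k q.1) - q.2) * seqLogit w v k q.1 ∂μ)
        - ∫ q, (sigmoid (seqLogit w v k q.1) - q.2) * (∑ l, α l * q.1 l) ∂μ := by
    rw [show (fun q : (Fin d → ℝ) × ℝ => (sigmoid (seqLogit w v k q.1) - q.2)
          * (seqLogit w v k q.1 - ∑ l, α l * q.1 l))
        = fun q => (sigmoid (seqLogit w v k q.1) - q.2) * seqLogit w v k q.1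
          - (sigmoid (seqLogit w v k q.1) - q.2) * (∑ l, α l * q.1 l) from
        funext fun q => by ring]
    exact integral_sub (hmulR k _ (hZmem k)) (hmulR k _ hZgmem)
  obtain ⟨k', rfl⟩ : ∃ k'', k = k'' + 1 := ⟨k - 1, by omega⟩
  have hRZk : ∫ q, (sigmoid (seqLogit w v (k'+1) q.1) - q.2)
      * seqLogit w v (k'+1) q.1 ∂μ = 0 := by
    have h := hstat k' (Nat.lt_succ_self k') (w k') (hsupp k' (Nat.lt_succ_self k')) (v k')
    have he : (fun q : (Fin d → ℝ) × ℝ =>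
        (sigmoid (seqLogit w v (k'+1) q.1) - q.2)
          * ((∑ l, w k' l * q.1 l) + v k' * seqLogit w v k' q.1))
        = fun q => (sigmoid (seqLogit w v (k'+1) q.1) - q.2) * seqLogit w v (k'+1) q.1 := by
      funext q
      simp only [seqLogit]
    rwa [he] at h
  have hRZg : ∫ q, (sigmoid (seqLogit w v (k'+1) q.1) - q.2) * (∑ l, α l * q.1 l) ∂μ
      = ∑ l, α l * ∫ q, (sigmoid (seqLogit w v (k'+1) q.1) - q.2) * q.1 l ∂μ := by
    rw [show (fun q : (Fin d → ℝ) × ℝ => (sigmoid (seqLogit w v (k'+1) q.1) - q.2)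
          * (∑ l, α l * q.1 l))
        = fun q => ∑ l, α l * ((sigmoid (seqLogit w v (k'+1) q.1) - q.2) * q.1 l) from
        funext fun q => by
          rw [Finset.mul_sum]
          exact Finset.sum_congr rfl fun l _ => by ring]
    rw [integral_finset_sum _ (fun l _ => ((hmulR (k'+1) _ (hXmem l)).const_mul (α l)))]
    exact Finset.sum_congr rfl fun l _ => integral_const_mul _ _
  have habs : |∑ l, α l * ∫ q, (sigmoid (seqLogit w v (k'+1) q.1) - q.2) * q.1 l ∂μ|
      ≤ Bg * (BX * Real.sqrt ((k'+1 : ℕ) * ε / 2)) := by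
    have hnn : (0:ℝ) ≤ BX * Real.sqrt ((k'+1 : ℕ) * ε / 2) := by positivity
    calc |∑ l, α l * ∫ q, (sigmoid (seqLogit w v (k'+1) q.1) - q.2) * q.1 l ∂μ|
        ≤ ∑ l, |α l * ∫ q, (sigmoid (seqLogit w v (k'+1) q.1) - q.2) * q.1 l ∂μ| :=
          Finset.abs_sum_le_sum_abs _ _
      _ ≤ ∑ l, |α l| * (BX * Real.sqrt ((k'+1 : ℕ) * ε / 2)) :=
          Finset.sum_le_sum fun l _ => by
            rw [abs_mul]
            exact mul_le_mul_of_nonneg_left (hgrad l) (abs_nonneg _)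
      _ = (∑ l, |α l|) * (BX * Real.sqrt ((k'+1 : ℕ) * ε / 2)) := (Finset.sum_mul _ _ _).symm
      _ ≤ Bg * (BX * Real.sqrt ((k'+1 : ℕ) * ε / 2)) := mul_le_mul_of_nonneg_right hα hnn
  have hneg : -(∑ l, α l * ∫ q, (sigmoid (seqLogit w v (k'+1) q.1) - q.2) * q.1 l ∂μ)
      ≤ |∑ l, α l * ∫ q, (sigmoid (seqLogit w v (k'+1) q.1) - q.2) * q.1 l ∂μ| :=
    neg_le_abs _
  rw [hRZk_split, hRZk, hRZg, zero_sub] at hconv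
  have hassoc : Bg * (BX * Real.sqrt ((k'+1 : ℕ) * ε / 2))
      = Bg * BX * Real.sqrt ((k'+1 : ℕ) * ε / 2) := (mul_assoc _ _ _).symm
  linarith [hconv, hneg, habs]
end

section
/- (Global convergence rate.) Let 𝒟 be a probability distribution over (x,y) ∈ ℝ^d × {0,1} with E[x_l²] ≤ B_X² for all coordinates l. Let S_1, …, S_D ⊆ {1,…,d} satisfy the M-coverage condition, and let p_1, …, p_D be produced by the sequential logit-passing protocol, each agent's minimizer assumed to exist. Let p* = σ∘z* be the globally optimal logistic predictor, where z*(x) = Σ_{l=1}^d α_l x_l minimizes expected BCE loss over all linear logits and ‖α‖₁ ≤ B_{p*}. Then the excess loss of the final agent satisfies L(p_D) − L(p*) ≤ B_{p*} · B_X · M/√D. -/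
open MeasureTheory ProbabilityTheory

namespace SeqAux

noncomputable def lse (z : ℝ) : ℝ := Real.log (1 + Real.exp z)

lemma one_add_exp_pos (z : ℝ) : (0:ℝ) < 1 + Real.exp z := by positivity

lemma sigmoid_pos (z : ℝ) : 0 < sigmoid z := by
  unfold sigmoid; positivity

lemma sigmoid_lt_one (z : ℝ) : sigmoid z < 1 := by
  unfold sigmoid
  rw [div_lt_one (one_add_exp_pos (-z))]
  nlinarith [Real.exp_pos (-z)]

lemma abs_sigmoid_le (z : ℝ) : |sigmoid z| ≤ 1 := by
  rw [abs_le]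
  constructor
  · linarith [sigmoid_pos z]
  · linarith [sigmoid_lt_one z]

lemma sigmoid_eq (z : ℝ) : sigmoid z = Real.exp z / (1 + Real.exp z) := by
  unfold sigmoid
  rw [Real.exp_neg]
  field_simp
  ring

lemma hasDerivAt_lse (z : ℝ) : HasDerivAt lse (sigmoid z) z := by
  have h1 : HasDerivAt (fun z : ℝ => 1 + Real.exp z) (Real.exp z) z :=
    (Real.hasDerivAt_exp z).const_add 1
  have h2 := h1.log (ne_of_gt (one_add_exp_pos z))
  rw [sigmoid_eq]
  exact h2

lemma continuous_lse : Continuous lse :=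
  Differentiable.continuous (fun z => (hasDerivAt_lse z).differentiableAt)

lemma hasDerivAt_sigmoid (z : ℝ) :
    HasDerivAt sigmoid (Real.exp (-z) / (1 + Real.exp (-z)) ^ 2) z := by
  have h1 : HasDerivAt (fun z : ℝ => 1 + Real.exp (-z)) (-Real.exp (-z)) z := by
    have := (Real.hasDerivAt_exp (-z)).comp z (hasDerivAt_neg z)
    simpa using (this.const_add 1)
  have h2 := h1.inv (ne_of_gt (one_add_exp_pos (-z)))
  have h3 : sigmoid = fun z : ℝ => (1 + Real.exp (-z))⁻¹ := by
    funext t; simp [sigmoid, one_div]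
  rw [h3]
  rw [neg_neg] at h2
  exact h2

lemma sigmoid_deriv_bound (z : ℝ) :
    |Real.exp (-z) / (1 + Real.exp (-z)) ^ 2| ≤ 1 / 4 := by
  have h := Real.exp_pos (-z)
  rw [abs_of_nonneg (by positivity)]
  rw [div_le_div_iff₀ (by positivity) (by norm_num)]
  nlinarith [sq_nonneg (1 - Real.exp (-z))]

lemma sigmoid_lipschitz (a b : ℝ) : |sigmoid b - sigmoid a| ≤ |b - a| / 4 := by
  have h := Convex.norm_image_sub_le_of_norm_hasDerivWithin_le
    (f := sigmoid) (f' := fun z => Real.exp (-z) / (1 + Real.exp (-z)) ^ 2)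
    (s := Set.univ) (C := 1/4)
    (fun x _ => (hasDerivAt_sigmoid x).hasDerivWithinAt)
    (fun x _ => by rw [Real.norm_eq_abs]; exact sigmoid_deriv_bound x)
    convex_univ (Set.mem_univ a) (Set.mem_univ b)
  rw [Real.norm_eq_abs, Real.norm_eq_abs] at h
  linarith

lemma sigmoid_mono : Monotone sigmoid := by
  intro a b hab
  unfold sigmoid
  apply one_div_le_one_div_of_le (one_add_exp_pos (-b))
  have := Real.exp_le_exp.mpr (neg_le_neg hab)
  linarith

/-- gradient inequality for lse (convexity). -/
lemma grad_ineq (a b : ℝ) : lse a - lse b ≤ sigmoid a * (a - b) := by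
  rcases lt_trichotomy a b with h | h | h
  · obtain ⟨c, hc, hslope⟩ := exists_hasDerivAt_eq_slope lse sigmoid h
      (continuous_lse.continuousOn) (fun x _ => hasDerivAt_lse x)
    rw [eq_div_iff (sub_ne_zero.mpr h.ne')] at hslope
    have hmono : sigmoid a ≤ sigmoid c := sigmoid_mono (le_of_lt hc.1)
    nlinarith
  · subst h; simp
  · obtain ⟨c, hc, hslope⟩ := exists_hasDerivAt_eq_slope lse sigmoid h
      (continuous_lse.continuousOn) (fun x _ => hasDerivAt_lse x)
    rw [eq_div_iff (sub_ne_zero.mpr h.ne')] at hslope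
    have hmono : sigmoid c ≤ sigmoid a := sigmoid_mono (le_of_lt hc.2)
    nlinarith

/-- 1/4-smoothness: quadratic upper bound with constant 1/8. -/
lemma smooth_ineq (a b : ℝ) : lse b ≤ lse a + sigmoid a * (b - a) + (b - a) ^ 2 / 8 := by
  have hd : ∀ t : ℝ, HasDerivAt (fun t : ℝ => t ^ 2 / 8 - (lse (a + t) - lse a - sigmoid a * t))
      (t / 4 - (sigmoid (a + t) - sigmoid a)) t := by
    intro t
    have h1 : HasDerivAt (fun t : ℝ => lse (a + t)) (sigmoid (a + t)) t := by
      exact HasDerivAt.comp_const_add a t (hasDerivAt_lse (a + t))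
    have h2 : HasDerivAt (fun t : ℝ => t ^ 2 / 8) (t / 4) t := by
      have := (hasDerivAt_pow 2 t).div_const 8
      refine this.congr_deriv ?_
      simp; ring
    have h3 : HasDerivAt (fun t : ℝ => lse (a + t) - lse a - sigmoid a * t)
        (sigmoid (a + t) - sigmoid a) t := by
      have h4 : HasDerivAt (fun t : ℝ => sigmoid a * t) (sigmoid a) t := by
        simpa using (hasDerivAt_id t).const_mul (sigmoid a)
      have := (h1.sub_const (lse a)).sub h4
      exact this
    exact h2.sub h3
  set φ : ℝ → ℝ := fun t => t ^ 2 / 8 - (lse (a + t) - lse a - sigmoid a * t) with hφ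
  have hdiff : Differentiable ℝ φ := fun t => (hd t).differentiableAt
  have key : ∀ t : ℝ, 0 ≤ φ t := by
    intro t
    rcases le_or_gt 0 t with ht | ht
    · have hmono : MonotoneOn φ (Set.Ici 0) := by
        apply monotoneOn_of_deriv_nonneg (convex_Ici 0) hdiff.continuous.continuousOn
          (hdiff.differentiableOn)
        intro x hx
        rw [(hd x).deriv]
        have hx0 : 0 < x := by simpa using hx
        have hlip := sigmoid_lipschitz a (a + x)
        rw [abs_le] at hlip
        have h2 : |a + x - a| = x := by
          rw [show a + x - a = x by ring, abs_of_pos hx0]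
        rw [h2] at hlip
        linarith [hlip.2]
      have h0 : φ 0 ≤ φ t := hmono (Set.mem_Ici.mpr le_rfl) (Set.mem_Ici.mpr ht) ht
      have : φ 0 = 0 := by simp [hφ]
      linarith
    · have hmono : AntitoneOn φ (Set.Iic 0) := by
        apply antitoneOn_of_deriv_nonpos (convex_Iic 0) hdiff.continuous.continuousOn
          (hdiff.differentiableOn)
        intro x hx
        rw [(hd x).deriv]
        have hx0 : x < 0 := by simpa using hx
        have hlip := sigmoid_lipschitz a (a + x)
        rw [abs_le] at hlip
        have h2 : |a + x - a| = -x := by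
          rw [show a + x - a = x by ring, abs_of_neg hx0]
        rw [h2] at hlip
        linarith [hlip.1]
      have h0 : φ 0 ≤ φ t := hmono (Set.mem_Iic.mpr (le_of_lt ht)) (Set.mem_Iic.mpr le_rfl)
        (le_of_lt ht)
      have : φ 0 = 0 := by simp [hφ]
      linarith
  have hkey := key (b - a)
  simp only [hφ] at hkey
  rw [show a + (b - a) = b by ring] at hkey
  linarith

/-- cogradient inequality. -/
lemma cograd_ineq (a b : ℝ) :
    (sigmoid a - sigmoid b) ^ 2 ≤ (lse a - lse b - sigmoid b * (a - b)) / 2 := by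
  have h1 := grad_ineq b (a - 4 * (sigmoid a - sigmoid b))
  have h2 := smooth_ineq a (a - 4 * (sigmoid a - sigmoid b))
  nlinarith [h1, h2, sq_nonneg (sigmoid a - sigmoid b)]

lemma lse_pos (z : ℝ) : 0 < lse z := by
  unfold lse
  apply Real.log_pos
  nlinarith [Real.exp_pos z]

lemma lse_sub_self_pos (z : ℝ) : 0 < lse z - z := by
  have h : lse z - z = lse (-z) := by
    unfold lse
    rw [← Real.log_exp z, ← Real.log_div (by positivity) (by positivity)]
    congr 1
    rw [Real.exp_neg]
    field_simp
    rw [Real.log_exp]; ring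
  rw [h]
  exact lse_pos (-z)

lemma lse_le (z : ℝ) : lse z ≤ Real.log 2 + |z| := by
  unfold lse
  have h2 : (1 : ℝ) + Real.exp z ≤ 2 * Real.exp |z| := by
    rcases le_or_gt z 0 with h | h
    · have h0 := Real.exp_le_one_iff.mpr h
      have h1 : (1:ℝ) ≤ Real.exp |z| := Real.one_le_exp (abs_nonneg z)
      nlinarith
    · rw [abs_of_pos h]
      nlinarith [Real.exp_pos z, Real.one_le_exp (le_of_lt h)]
  calc Real.log (1 + Real.exp z) ≤ Real.log (2 * Real.exp |z|) :=
        Real.log_le_log (by positivity) h2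
    _ = Real.log 2 + |z| := by rw [Real.log_mul (by norm_num) (by positivity), Real.log_exp]

lemma log_two_pos' : (0:ℝ) < Real.log 2 := Real.log_pos (by norm_num)

/-- pointwise loss bound: for y ∈ {0,1}, |lse z - y z| ≤ log 2 + 2|z|. -/
lemma loss_abs_le {y : ℝ} (hy : y = 0 ∨ y = 1) (z : ℝ) :
    |lse z - y * z| ≤ Real.log 2 + 2 * |z| := by
  rcases hy with h | h <;> subst h
  · simp only [zero_mul, sub_zero]
    rw [abs_of_pos (lse_pos z)]
    linarith [abs_nonneg z, lse_le z]
  · simp only [one_mul]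
    rw [abs_le]
    constructor
    · linarith [lse_sub_self_pos z, log_two_pos', abs_nonneg z]
    · linarith [lse_le z, neg_abs_le z]

lemma loss_nonneg {y : ℝ} (hy : y = 0 ∨ y = 1) (z : ℝ) : 0 ≤ lse z - y * z := by
  rcases hy with h | h <;> subst h
  · simpa using le_of_lt (lse_pos z)
  · simpa using le_of_lt (lse_sub_self_pos z)

lemma telescope_Ico (f : ℕ → ℝ) {m n : ℕ} (h : m ≤ n) :
    ∑ k ∈ Finset.Ico m n, (f (k + 1) - f k) = f n - f m := by
  rw [Finset.sum_Ico_eq_sub _ h, Finset.sum_range_sub f, Finset.sum_range_sub f]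
  ring

end SeqAux

namespace SeqAux

open MeasureTheory

variable {d : ℕ}

noncomputable def linF (c : Fin d → ℝ) (q : (Fin d → ℝ) × ℝ) : ℝ := ∑ l, c l * q.1 l

noncomputable def lossF (c : Fin d → ℝ) (q : (Fin d → ℝ) × ℝ) : ℝ :=
  lse (linF c q) - q.2 * linF c q

noncomputable def gF (c c' : Fin d → ℝ) (q : (Fin d → ℝ) × ℝ) : ℝ :=
  (sigmoid (linF c q) - q.2) * linF c' q

lemma measurable_linF (c : Fin d → ℝ) : Measurable (linF c) := by
  unfold linF
  exact Finset.measurable_sum _ fun l _ =>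
    by fun_prop

lemma continuous_sigmoid : Continuous sigmoid :=
  Differentiable.continuous (fun z => (hasDerivAt_sigmoid z).differentiableAt)

lemma measurable_lossF (c : Fin d → ℝ) : Measurable (lossF c) := by
  unfold lossF
  exact (continuous_lse.measurable.comp (measurable_linF c)).sub
    (measurable_snd.mul (measurable_linF c))

lemma measurable_gF (c c' : Fin d → ℝ) : Measurable (gF c c') := by
  unfold gF
  exact ((continuous_sigmoid.measurable.comp (measurable_linF c)).sub measurable_snd).mul
    (measurable_linF c')

variable (μ : Measure ((Fin d → ℝ) × ℝ)) [IsProbabilityMeasure μ]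

section Integrability

variable (hX2int : ∀ l : Fin d, Integrable (fun q : (Fin d → ℝ) × ℝ => (q.1 l) ^ 2) μ)

include hX2int

lemma int_x (l : Fin d) : Integrable (fun q : (Fin d → ℝ) × ℝ => q.1 l) μ := by
  refine Integrable.mono' (g := fun q => (1 + (q.1 l) ^ 2) / 2)
    (((integrable_const 1).add (hX2int l)).div_const 2)
    ((measurable_pi_apply l).comp measurable_fst).aestronglyMeasurable ?_
  filter_upwards with q
  rw [Real.norm_eq_abs]
  nlinarith [sq_nonneg (|q.1 l| - 1), sq_abs (q.1 l), abs_nonneg (q.1 l)]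

lemma int_xx (l m : Fin d) :
    Integrable (fun q : (Fin d → ℝ) × ℝ => q.1 l * q.1 m) μ := by
  refine Integrable.mono' (g := fun q => ((q.1 l) ^ 2 + (q.1 m) ^ 2) / 2)
    (((hX2int l).add (hX2int m)).div_const 2)
    (((measurable_pi_apply l).comp measurable_fst).mul
      ((measurable_pi_apply m).comp measurable_fst)).aestronglyMeasurable ?_
  filter_upwards with q
  rw [Real.norm_eq_abs, abs_mul]
  nlinarith [sq_nonneg (|q.1 l| - |q.1 m|), sq_abs (q.1 l), sq_abs (q.1 m),
    abs_nonneg (q.1 l), abs_nonneg (q.1 m)]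

lemma int_lin (c : Fin d → ℝ) : Integrable (linF c) μ := by
  unfold linF
  exact integrable_finset_sum _ fun l _ => (int_x μ hX2int l).const_mul (c l)

lemma int_linmul (c c' : Fin d → ℝ) :
    Integrable (fun q => linF c q * linF c' q) μ := by
  have h : (fun q => linF c q * linF c' q)
      = fun q : (Fin d → ℝ) × ℝ => ∑ l, ∑ m, (c l * c' m) * (q.1 l * q.1 m) := by
    funext q
    unfold linF
    rw [Finset.sum_mul_sum]
    exact Finset.sum_congr rfl fun l _ => Finset.sum_congr rfl fun m _ => by ring
  rw [h]
  exact integrable_finset_sum _ fun l _ =>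
    integrable_finset_sum _ fun m _ => (int_xx μ hX2int l m).const_mul _

lemma int_linsq (c : Fin d → ℝ) :
    Integrable (fun q => (linF c q) ^ 2) μ := by
  have h : (fun q => (linF c q) ^ 2) = fun q => linF c q * linF c q := by
    funext q; ring
  rw [h]; exact int_linmul μ hX2int c c

end Integrability

lemma integral_cs {X : Type*} [MeasurableSpace X] (ν : Measure X) (f g : X → ℝ)
    (hf2 : Integrable (fun q => f q ^ 2) ν) (hg2 : Integrable (fun q => g q ^ 2) ν)
    (hfg : Integrable (fun q => f q * g q) ν) :
    (∫ q, f q * g q ∂ν) ^ 2 ≤ (∫ q, f q ^ 2 ∂ν) * ∫ q, g q ^ 2 ∂ν := by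
  set A := ∫ q, f q ^ 2 ∂ν with hA
  set B := ∫ q, f q * g q ∂ν with hB
  set C := ∫ q, g q ^ 2 ∂ν with hC
  have key : ∀ t : ℝ, 0 ≤ A * (t * t) + (2 * B) * t + C := by
    intro t
    have h1 : 0 ≤ ∫ q, (t * f q + g q) ^ 2 ∂ν := integral_nonneg fun q => sq_nonneg _
    have h2 : ∫ q, (t * f q + g q) ^ 2 ∂ν = A * (t * t) + (2 * B) * t + C := by
      have hh : (fun q => (t * f q + g q) ^ 2)
          = fun q => (t * t) * f q ^ 2 + (2 * t) * (f q * g q) + g q ^ 2 := by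
        funext q; ring
      have i1 : Integrable (fun q => (t * t) * f q ^ 2) ν := hf2.const_mul _
      have i2 : Integrable (fun q => (2 * t) * (f q * g q)) ν := hfg.const_mul _
      have i12 : Integrable (fun q => (t * t) * f q ^ 2 + (2 * t) * (f q * g q)) ν := i1.add i2
      rw [hh, integral_add i12 hg2, integral_add i1 i2, integral_const_mul, integral_const_mul]
      ring
    linarith [h2 ▸ h1]
  have hd := discrim_le_zero key
  rw [discrim] at hd
  nlinarith [hd]

section WithHy

variable (hy : ∀ᵐ q ∂μ, q.2 = 0 ∨ q.2 = 1)
variable (hX2int : ∀ l : Fin d, Integrable (fun q : (Fin d → ℝ) × ℝ => (q.1 l) ^ 2) μ)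

include hX2int

include hy in
lemma int_loss (c : Fin d → ℝ) : Integrable (lossF c) μ := by
  refine Integrable.mono' (g := fun q => Real.log 2 + 2 * |linF c q|)
    ((integrable_const _).add (((int_lin μ hX2int c).abs).const_mul 2))
    (measurable_lossF c).aestronglyMeasurable ?_
  filter_upwards [hy] with q hq
  rw [Real.norm_eq_abs]
  exact loss_abs_le hq _

include hy in
lemma int_g (c c' : Fin d → ℝ) : Integrable (gF c c') μ := by
  refine Integrable.mono' (g := fun q => 2 * |linF c' q|)
    (((int_lin μ hX2int c').abs).const_mul 2)
    (measurable_gF c c').aestronglyMeasurable ?_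
  filter_upwards [hy] with q hq
  rw [Real.norm_eq_abs, gF, abs_mul]
  have h1 : |sigmoid (linF c q) - q.2| ≤ 2 := by
    rcases hq with h | h <;> rw [h] <;>
      [simpa using le_trans (abs_sigmoid_le _) one_le_two;
       skip]
    have := abs_sigmoid_le (linF c q)
    rw [abs_sub_comm]
    calc |1 - sigmoid (linF c q)| ≤ |(1:ℝ)| + |sigmoid (linF c q)| := abs_sub _ _
      _ ≤ 2 := by rw [abs_one]; linarith
  have h2 : (0:ℝ) ≤ |linF c' q| := abs_nonneg _
  nlinarith [abs_nonneg (sigmoid (linF c q) - q.2)]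

lemma int_dsig_mul (c₁ c₂ c' : Fin d → ℝ) :
    Integrable (fun q => (sigmoid (linF c₁ q) - sigmoid (linF c₂ q)) * linF c' q) μ := by
  refine Integrable.mono' (g := fun q => 2 * |linF c' q|)
    (((int_lin μ hX2int c').abs).const_mul 2)
    (((continuous_sigmoid.measurable.comp (measurable_linF c₁)).sub
      (continuous_sigmoid.measurable.comp (measurable_linF c₂))).mul
        (measurable_linF c')).aestronglyMeasurable ?_
  filter_upwards with q
  rw [Real.norm_eq_abs, abs_mul]
  have h1 : |sigmoid (linF c₁ q) - sigmoid (linF c₂ q)| ≤ 2 := by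
    calc |sigmoid (linF c₁ q) - sigmoid (linF c₂ q)|
        ≤ |sigmoid (linF c₁ q)| + |sigmoid (linF c₂ q)| := abs_sub _ _
      _ ≤ 2 := by linarith [abs_sigmoid_le (linF c₁ q), abs_sigmoid_le (linF c₂ q)]
  nlinarith [abs_nonneg (linF c' q), abs_nonneg (sigmoid (linF c₁ q) - sigmoid (linF c₂ q))]

omit hX2int in
lemma int_dsig_sq (c₁ c₂ : Fin d → ℝ) :
    Integrable (fun q => (sigmoid (linF c₁ q) - sigmoid (linF c₂ q)) ^ 2) μ := by
  refine Integrable.mono' (g := fun _ => 4) (integrable_const _)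
    (((continuous_sigmoid.measurable.comp (measurable_linF c₁)).sub
      (continuous_sigmoid.measurable.comp (measurable_linF c₂))).pow_const
        2).aestronglyMeasurable ?_
  filter_upwards with q
  rw [Real.norm_eq_abs, abs_pow]
  have h1 : |sigmoid (linF c₁ q) - sigmoid (linF c₂ q)| ≤ 2 := by
    calc |sigmoid (linF c₁ q) - sigmoid (linF c₂ q)|
        ≤ |sigmoid (linF c₁ q)| + |sigmoid (linF c₂ q)| := abs_sub _ _
      _ ≤ 2 := by linarith [abs_sigmoid_le (linF c₁ q), abs_sigmoid_le (linF c₂ q)]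
  nlinarith [abs_nonneg (sigmoid (linF c₁ q) - sigmoid (linF c₂ q))]

/-- second moment bound for linear functions. -/
lemma int_linsq_le {BX : ℝ} (hBX : 0 ≤ BX)
    (hX2 : ∀ l : Fin d, ∫ q, (q.1 l) ^ 2 ∂μ ≤ BX ^ 2) (c : Fin d → ℝ) :
    ∫ q, (linF c q) ^ 2 ∂μ ≤ ((∑ l, |c l|) * BX) ^ 2 := by
  have hxx : ∀ l m : Fin d, |∫ q, q.1 l * q.1 m ∂μ| ≤ BX ^ 2 := by
    intro l m
    have habs : |∫ q, q.1 l * q.1 m ∂μ| ≤ ∫ q, |q.1 l| * |q.1 m| ∂μ := by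
      have hn := norm_integral_le_integral_norm (μ := μ) (fun q : (Fin d → ℝ) × ℝ => q.1 l * q.1 m)
      rw [Real.norm_eq_abs] at hn
      refine le_trans hn (le_of_eq ?_)
      congr 1
      funext q
      rw [Real.norm_eq_abs, abs_mul]
    have hcs := integral_cs μ (fun q => |q.1 l|) (fun q => |q.1 m|) ?_ ?_ ?_
    · have h1 : ∫ q, |q.1 l| ^ 2 ∂μ = ∫ q, (q.1 l) ^ 2 ∂μ := by
        congr 1; funext q; rw [sq_abs]
      have h2 : ∫ q, |q.1 m| ^ 2 ∂μ = ∫ q, (q.1 m) ^ 2 ∂μ := by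
        congr 1; funext q; rw [sq_abs]
      rw [h1, h2] at hcs
      have h3 : ∫ q, |q.1 l| * |q.1 m| ∂μ ≤ BX ^ 2 := by
        have hnn : 0 ≤ ∫ q, |q.1 l| * |q.1 m| ∂μ :=
          integral_nonneg fun q => mul_nonneg (abs_nonneg _) (abs_nonneg _)
        nlinarith [hcs, hX2 l, hX2 m, integral_nonneg (μ := μ) (f := fun q : (Fin d → ℝ) × ℝ => (q.1 l) ^ 2)
          (fun q : (Fin d → ℝ) × ℝ => sq_nonneg (q.1 l)),
          integral_nonneg (μ := μ) (f := fun q : (Fin d → ℝ) × ℝ => (q.1 m) ^ 2) (fun q : (Fin d → ℝ) × ℝ => sq_nonneg (q.1 m)), sq_nonneg BX]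
      linarith
    · have : Integrable (fun q : (Fin d → ℝ) × ℝ => (q.1 l) ^ 2) μ := hX2int l
      simpa [sq_abs] using this
    · have : Integrable (fun q : (Fin d → ℝ) × ℝ => (q.1 m) ^ 2) μ := hX2int m
      simpa [sq_abs] using this
    · have : Integrable (fun q : (Fin d → ℝ) × ℝ => |q.1 l * q.1 m|) μ :=
        (int_xx μ hX2int l m).abs
      simpa [abs_mul] using this
  have hexp : ∫ q, (linF c q) ^ 2 ∂μ
      = ∑ l, ∑ m, (c l * c m) * ∫ q, q.1 l * q.1 m ∂μ := by
    have h : (fun q => (linF c q) ^ 2)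
        = fun q : (Fin d → ℝ) × ℝ => ∑ l, ∑ m, (c l * c m) * (q.1 l * q.1 m) := by
      funext q
      unfold linF
      rw [sq, Finset.sum_mul_sum]
      exact Finset.sum_congr rfl fun l _ => Finset.sum_congr rfl fun m _ => by ring
    rw [h, integral_finset_sum _ fun l _ => integrable_finset_sum _ fun m _ =>
      (int_xx μ hX2int l m).const_mul _]
    exact Finset.sum_congr rfl fun l _ => by
      rw [integral_finset_sum _ fun m _ => (int_xx μ hX2int l m).const_mul _]
      exact Finset.sum_congr rfl fun m _ => integral_const_mul _ _
  rw [hexp]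
  have hrhs : ((∑ l, |c l|) * BX) ^ 2 = ∑ l, ∑ m, (|c l| * |c m|) * BX ^ 2 := by
    rw [mul_pow, sq, Finset.sum_mul_sum, Finset.sum_mul]
    exact Finset.sum_congr rfl fun l _ => by rw [Finset.sum_mul]
  rw [hrhs]
  apply Finset.sum_le_sum
  intro l _
  apply Finset.sum_le_sum
  intro m _
  calc (c l * c m) * ∫ q, q.1 l * q.1 m ∂μ
      ≤ |(c l * c m) * ∫ q, q.1 l * q.1 m ∂μ| := le_abs_self _
    _ = |c l| * |c m| * |∫ q, q.1 l * q.1 m ∂μ| := by rw [abs_mul, abs_mul]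
    _ ≤ |c l| * |c m| * BX ^ 2 := by
        apply mul_le_mul_of_nonneg_left _ (mul_nonneg (abs_nonneg _) (abs_nonneg _))
        rw [abs_le]
        constructor
        · linarith [neg_abs_le (∫ q, q.1 l * q.1 m ∂μ), hxx l m]
        · linarith [le_abs_self (∫ q, q.1 l * q.1 m ∂μ), hxx l m]
    _ = (|c l| * |c m|) * BX ^ 2 := by ring

end WithHy


end SeqAux

namespace SeqAux
open MeasureTheory
variable {d : ℕ} (μ : Measure ((Fin d → ℝ) × ℝ)) [IsProbabilityMeasure μ]

section Integrated

variable (hy : ∀ᵐ q ∂μ, q.2 = 0 ∨ q.2 = 1)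
variable (hX2int : ∀ l : Fin d, Integrable (fun q : (Fin d → ℝ) × ℝ => (q.1 l) ^ 2) μ)

include hy hX2int

lemma integrated_smooth (a u : Fin d → ℝ) (η : ℝ) :
    ∫ q, lossF (fun l => a l + η * u l) q ∂μ
      ≤ ∫ q, lossF a q ∂μ + η * ∫ q, gF a u q ∂μ
        + η ^ 2 / 8 * ∫ q, (linF u q) ^ 2 ∂μ := by
  have hlin : ∀ q : (Fin d → ℝ) × ℝ,
      linF (fun l => a l + η * u l) q = linF a q + η * linF u q := by
    intro q
    unfold linF
    rw [Finset.mul_sum, ← Finset.sum_add_distrib]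
    exact Finset.sum_congr rfl fun l _ => by ring
  have hpt : ∀ q, lossF (fun l => a l + η * u l) q
      ≤ lossF a q + η * gF a u q + η ^ 2 / 8 * (linF u q) ^ 2 := by
    intro q
    have hs := smooth_ineq (linF a q) (linF a q + η * linF u q)
    simp only [lossF, gF, hlin]
    nlinarith [hs]
  have hInt1 : Integrable (lossF (fun l => a l + η * u l)) μ := int_loss μ hy hX2int _
  have i1 : Integrable (lossF a) μ := int_loss μ hy hX2int a
  have i2 : Integrable (fun q => η * gF a u q) μ := (int_g μ hy hX2int a u).const_mul η
  have i3 : Integrable (fun q => η ^ 2 / 8 * (linF u q) ^ 2) μ :=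
    (int_linsq μ hX2int u).const_mul _
  have i12 : Integrable (fun q => lossF a q + η * gF a u q) μ := i1.add i2
  have hmono := integral_mono hInt1 (i12.add i3) hpt
  simp only [Pi.add_apply] at hmono
  rw [integral_add i12 i3, integral_add i1 i2, integral_const_mul, integral_const_mul] at hmono
  linarith

lemma integrated_grad (a b : Fin d → ℝ) :
    ∫ q, lossF a q ∂μ - ∫ q, lossF b q ∂μ
      ≤ ∫ q, gF a a q ∂μ - ∫ q, gF a b q ∂μ := by
  have hpt : ∀ q, lossF a q - lossF b q ≤ gF a a q - gF a b q := by
    intro q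
    have h := grad_ineq (linF a q) (linF b q)
    simp only [lossF, gF]
    nlinarith [h]
  have i1 : Integrable (lossF a) μ := int_loss μ hy hX2int a
  have i2 : Integrable (lossF b) μ := int_loss μ hy hX2int b
  have i3 : Integrable (gF a a) μ := int_g μ hy hX2int a a
  have i4 : Integrable (gF a b) μ := int_g μ hy hX2int a b
  have i12 : Integrable (fun q => lossF a q - lossF b q) μ := i1.sub i2
  have i34 : Integrable (fun q => gF a a q - gF a b q) μ := i3.sub i4
  have hmono := integral_mono i12 i34 hpt
  rw [integral_sub i1 i2, integral_sub i3 i4] at hmono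
  exact hmono

lemma integrated_cograd (a b : Fin d → ℝ) :
    ∫ q, (sigmoid (linF a q) - sigmoid (linF b q)) ^ 2 ∂μ
      ≤ (∫ q, lossF a q ∂μ - ∫ q, lossF b q ∂μ
          - (∫ q, gF b a q ∂μ - ∫ q, gF b b q ∂μ)) / 2 := by
  have hpt : ∀ q, (sigmoid (linF a q) - sigmoid (linF b q)) ^ 2
      ≤ (lossF a q - lossF b q - (gF b a q - gF b b q)) / 2 := by
    intro q
    have h := cograd_ineq (linF a q) (linF b q)
    simp only [lossF, gF]
    nlinarith [h]
  have i1 : Integrable (lossF a) μ := int_loss μ hy hX2int a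
  have i2 : Integrable (lossF b) μ := int_loss μ hy hX2int b
  have i3 : Integrable (gF b a) μ := int_g μ hy hX2int b a
  have i4 : Integrable (gF b b) μ := int_g μ hy hX2int b b
  have i12 : Integrable (fun q => lossF a q - lossF b q) μ := i1.sub i2
  have i34 : Integrable (fun q => gF b a q - gF b b q) μ := i3.sub i4
  have icomb : Integrable (fun q => (lossF a q - lossF b q - (gF b a q - gF b b q)) / 2) μ :=
    (i12.sub i34).div_const 2
  have hmono := integral_mono (int_dsig_sq μ a b) icomb hpt
  rw [integral_div, integral_sub i12 i34, integral_sub i1 i2,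
    integral_sub i3 i4] at hmono
  exact hmono

end Integrated

noncomputable def zcoef (w : ℕ → Fin d → ℝ) (v : ℕ → ℝ) : ℕ → Fin d → ℝ
  | 0 => fun _ => 0
  | (k + 1) => fun l => w k l + v k * zcoef w v k l

lemma seqLogit_eq (w : ℕ → Fin d → ℝ) (v : ℕ → ℝ) (k : ℕ) (x : Fin d → ℝ) :
    seqLogit w v k x = ∑ l, zcoef w v k l * x l := by
  induction k with
  | zero => simp [seqLogit, zcoef]
  | succ k ih =>
    show (∑ l, w k l * x l) + v k * seqLogit w v k x = _
    rw [ih, Finset.mul_sum, ← Finset.sum_add_distrib]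
    refine Finset.sum_congr rfl fun l _ => ?_
    show w k l * x l + v k * (zcoef w v k l * x l) = (w k l + v k * zcoef w v k l) * x l
    ring

lemma bce_eq (c : Fin d → ℝ) :
    bceLossFn μ (fun x => ∑ l, c l * x l) = ∫ q, lossF c q ∂μ := rfl

lemma bce_seq (w : ℕ → Fin d → ℝ) (v : ℕ → ℝ) (k : ℕ) :
    bceLossFn μ (seqLogit w v k) = ∫ q, lossF (zcoef w v k) q ∂μ := by
  rw [show seqLogit w v k = fun x => ∑ l, zcoef w v k l * x l from funext (seqLogit_eq w v k)]
  rfl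

end SeqAux

/-- Global convergence rate: for the sequential logit-passing protocol on feature subsets
`S_1, …, S_D` satisfying the `M`-coverage condition (every `M` contiguous subsets cover all
`d` features), with second moments `E[x_l²] ≤ B_X²` and a globally optimal linear logit
`z*(x) = Σ_l α_l x_l` with `‖α‖₁ ≤ B_{p*}`, the excess loss of the final agent satisfies
`L(p_D) − L(p*) ≤ B_{p*} B_X M / √D`. -/
theorem global_convergence_rate
    {d : ℕ} (μ : Measure ((Fin d → ℝ) × ℝ)) [IsProbabilityMeasure μ]
    (hy : ∀ᵐ q ∂μ, q.2 = 0 ∨ q.2 = 1)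
    (BX : ℝ) (hBX : 0 ≤ BX)
    (hX2int : ∀ l : Fin d, Integrable (fun q : (Fin d → ℝ) × ℝ => (q.1 l) ^ 2) μ)
    (hX2 : ∀ l : Fin d, ∫ q, (q.1 l) ^ 2 ∂μ ≤ BX ^ 2)
    (D M : ℕ) (hM : 1 ≤ M) (hMD : M ≤ D)
    (S : ℕ → Finset (Fin d))
    (hcov : ∀ i : ℕ, i + M ≤ D → ∀ l : Fin d, ∃ j < M, l ∈ S (i + j))
    (w : ℕ → Fin d → ℝ) (v : ℕ → ℝ)
    (hsupp : ∀ i < D, ∀ l ∉ S i, w i l = 0)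
    (hmin : ∀ i < D, ∀ w' : Fin d → ℝ, (∀ l ∉ S i, w' l = 0) → ∀ v' : ℝ,
      bceLossFn μ (seqLogit w v (i + 1))
        ≤ bceLossFn μ (fun x => (∑ l, w' l * x l) + v' * seqLogit w v i x))
    (Bp : ℝ) (α : Fin d → ℝ)
    (hαopt : ∀ θ : Fin d → ℝ,
      bceLossFn μ (fun x => ∑ l, α l * x l) ≤ bceLossFn μ (fun x => ∑ l, θ l * x l))
    (hα1 : ∑ l, |α l| ≤ Bp) :
    bceLossFn μ (seqLogit w v D) - bceLossFn μ (fun x => ∑ l, α l * x l)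
      ≤ Bp * BX * M / Real.sqrt D := by
  classical
  open SeqAux in
  set Z : ℕ → Fin d → ℝ := SeqAux.zcoef w v with hZdef
  set LL : (Fin d → ℝ) → ℝ := fun c => ∫ q, SeqAux.lossF c q ∂μ with hLLdef
  set G : (Fin d → ℝ) → (Fin d → ℝ) → ℝ :=
    fun c c' => ∫ q, SeqAux.gF c c' q ∂μ with hGdef
  have hBp : 0 ≤ Bp := le_trans (Finset.sum_nonneg fun l _ => abs_nonneg _) hα1
  have hD0 : 0 < D := lt_of_lt_of_le hM hMD
  have hZsucc : ∀ k, Z (k + 1) = fun l => w k l + v k * Z k l := fun k => rfl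
  -- first-order conditions
  have foc : ∀ k, k < D → ∀ c : Fin d → ℝ, (∀ l ∉ S k, c l = 0) → ∀ t : ℝ,
      G (Z (k + 1)) (fun l => c l + t * Z k l) = 0 := by
    intro k hk c hc t
    set u : Fin d → ℝ := fun l => c l + t * Z k l with hu
    have competitor : ∀ η : ℝ,
        ∫ q, SeqAux.lossF (Z (k + 1)) q ∂μ
          ≤ ∫ q, SeqAux.lossF (fun l => Z (k + 1) l + η * u l) q ∂μ := by
      intro η
      have h := hmin k hk (fun l => w k l + η * c l)
        (fun l hl => by
          show w k l + η * c l = 0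
          rw [hsupp k hk l hl, hc l hl]; ring) (v k + η * t)
      have hfun : (fun x : Fin d → ℝ =>
          (∑ l, (w k l + η * c l) * x l) + (v k + η * t) * seqLogit w v k x)
          = fun x => ∑ l, (Z (k + 1) l + η * u l) * x l := by
        funext x
        rw [SeqAux.seqLogit_eq w v k x, Finset.mul_sum, ← Finset.sum_add_distrib]
        refine Finset.sum_congr rfl fun l _ => ?_
        have hz : Z (k + 1) l = w k l + v k * Z k l := by rw [hZsucc k]
        rw [hu, hz]
        ring
      rw [hfun] at h
      rw [SeqAux.bce_seq μ w v (k + 1), SeqAux.bce_eq μ] at h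
      exact h
    have hq : ∀ η : ℝ, 0 ≤ η * (∫ q, SeqAux.gF (Z (k + 1)) u q ∂μ)
        + η ^ 2 / 8 * ∫ q, (SeqAux.linF u q) ^ 2 ∂μ := by
      intro η
      have h1 := competitor η
      have h2 := SeqAux.integrated_smooth μ hy hX2int (Z (k + 1)) u η
      linarith
    set A : ℝ := ∫ q, (SeqAux.linF u q) ^ 2 ∂μ with hA
    set B : ℝ := ∫ q, SeqAux.gF (Z (k + 1)) u q ∂μ with hB
    have key : ∀ x : ℝ, 0 ≤ (A / 8) * (x * x) + B * x + 0 := by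
      intro x
      have h := hq x
      nlinarith [h]
    have hd := discrim_le_zero key
    rw [discrim] at hd
    have hB2 : B ^ 2 ≤ 0 := by nlinarith [hd]
    have hB0 : B = 0 := by
      have := sq_nonneg B
      nlinarith
    rw [hGdef]
    simp only
    exact hB0
  have focz : ∀ k, k < D → G (Z (k + 1)) (Z (k + 1)) = 0 := by
    intro k hk
    have h := foc k hk (w k) (hsupp k hk) (v k)
    have he : (fun l => w k l + v k * Z k l) = Z (k + 1) := (hZsucc k).symm
    rwa [he] at h
  have focp : ∀ k, k < D → G (Z (k + 1)) (Z k) = 0 := by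
    intro k hk
    have h := foc k hk (fun _ => 0) (fun l _ => rfl) 1
    have he : (fun l => (0 : ℝ) + 1 * Z k l) = Z k := by funext l; ring
    rwa [he] at h
  -- loss decrease
  have hdec : ∀ k, k < D → LL (Z (k + 1)) ≤ LL (Z k) := by
    intro k hk
    have h := hmin k hk (fun _ => 0) (fun l _ => rfl) 1
    have hfun : (fun x : Fin d → ℝ => (∑ l, (0 : ℝ) * x l) + 1 * seqLogit w v k x)
        = fun x => ∑ l, Z k l * x l := by
      funext x
      rw [SeqAux.seqLogit_eq w v k x]
      simp [hZdef]
    rw [hfun] at h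
    rw [SeqAux.bce_seq μ w v (k + 1), SeqAux.bce_eq μ] at h
    exact h
  have hmono : ∀ a n, a + n ≤ D → LL (Z (a + n)) ≤ LL (Z a) := by
    intro a n
    induction n with
    | zero => intro _; simp
    | succ n ih =>
      intro h
      have h1 : a + n < D := by omega
      have h2 := hdec (a + n) h1
      have h3 := ih (by omega)
      have he : a + (n + 1) = (a + n) + 1 := by omega
      rw [he]
      exact le_trans h2 h3
  have hLL0 : LL (Z 0) = Real.log 2 := by
    rw [hLLdef]
    simp only
    have hfun : (fun q : (Fin d → ℝ) × ℝ => SeqAux.lossF (Z 0) q)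
        = fun _ => Real.log 2 := by
      funext q
      have hz : SeqAux.linF (Z 0) q = 0 := by
        simp [SeqAux.linF, hZdef, SeqAux.zcoef]
      simp [SeqAux.lossF, hz, SeqAux.lse]
      norm_num
    rw [hfun]
    simp
  have hLLD : 0 ≤ LL (Z D) := by
    rw [hLLdef]
    apply integral_nonneg_of_ae
    filter_upwards [hy] with q hq
    exact SeqAux.loss_nonneg hq _
  -- per-step bregman bound
  have hbreg : ∀ k, k < D →
      ∫ q, (sigmoid (SeqAux.linF (Z (k + 1)) q) - sigmoid (SeqAux.linF (Z k) q)) ^ 2 ∂μ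
        ≤ (LL (Z k) - LL (Z (k + 1))) / 2 := by
    intro k hk
    have h := SeqAux.integrated_cograd μ hy hX2int (Z k) (Z (k + 1))
    have hsq : (fun q => (sigmoid (SeqAux.linF (Z (k + 1)) q)
        - sigmoid (SeqAux.linF (Z k) q)) ^ 2)
        = fun q => (sigmoid (SeqAux.linF (Z k) q) - sigmoid (SeqAux.linF (Z (k + 1)) q)) ^ 2 := by
      funext q; ring
    rw [hsq]
    have h1 := focp k hk
    have h2 := focz k hk
    rw [hGdef] at h1 h2
    simp only at h1 h2
    rw [hLLdef]
    simp only
    linarith [h]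
  -- main block bound
  have block : ∀ i, i + M ≤ D →
      LL (Z D) - LL α ≤ Bp * BX *
        ∑ k ∈ Finset.Ico 1 M, Real.sqrt ((LL (Z (i + k)) - LL (Z (i + k + 1))) / 2) := by
    intro i hiM
    set T : ℝ := ∑ k ∈ Finset.Ico 1 M,
      Real.sqrt ((LL (Z (i + k)) - LL (Z (i + k + 1))) / 2) with hT
    have hTnonneg : 0 ≤ T :=
      Finset.sum_nonneg fun k _ => Real.sqrt_nonneg _
    set n := i + M with hn
    have h0 : LL (Z D) ≤ LL (Z n) := by
      have h := hmono n (D - n) (by omega)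
      rwa [show n + (D - n) = D from by omega] at h
    obtain ⟨k0, hk0⟩ : ∃ k0, n = k0 + 1 := ⟨n - 1, by omega⟩
    have hk0D : k0 < D := by omega
    have hgrad : LL (Z n) - LL α ≤ - G (Z n) α := by
      have h := SeqAux.integrated_grad μ hy hX2int (Z n) α
      have h2 : G (Z n) (Z n) = 0 := by rw [hk0]; exact focz k0 hk0D
      rw [hGdef] at h2
      simp only at h2
      rw [hGdef, hLLdef]
      simp only
      linarith [h, h2]
    have hex : ∀ l : Fin d, ∃ j, j < M ∧ l ∈ S (i + j) := by
      intro l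
      obtain ⟨j, hj1, hj2⟩ := hcov i hiM l
      exact ⟨j, hj1, hj2⟩
    set J : Fin d → ℕ := fun l => Nat.find (hex l) with hJ
    have hJspec : ∀ l, J l < M ∧ l ∈ S (i + J l) := fun l => Nat.find_spec (hex l)
    set cα : ℕ → Fin d → ℝ := fun j l => if J l = j then α l else 0 with hcα
    have hsum_cα : ∀ l, ∑ j ∈ Finset.range M, cα j l = α l := by
      intro l
      rw [hcα]
      simp only
      rw [Finset.sum_ite_eq (Finset.range M) (J l) (fun _ => α l),
        if_pos (Finset.mem_range.mpr (hJspec l).1)]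
    have hsupp_cα : ∀ j, ∀ l, l ∉ S (i + j) → cα j l = 0 := by
      intro j l hl
      rw [hcα]
      simp only
      apply if_neg
      intro hJl
      exact hl (hJl ▸ (hJspec l).2)
    have hlin_decomp : ∀ q : (Fin d → ℝ) × ℝ,
        ∑ j ∈ Finset.range M, SeqAux.linF (cα j) q = SeqAux.linF α q := by
      intro q
      unfold SeqAux.linF
      rw [Finset.sum_comm]
      refine Finset.sum_congr rfl fun l _ => ?_
      rw [← Finset.sum_mul, hsum_cα l]
    have hGdecomp : G (Z n) α = ∑ j ∈ Finset.range M, G (Z n) (cα j) := by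
      rw [hGdef]
      simp only
      rw [← integral_finset_sum _ (fun j _ => SeqAux.int_g μ hy hX2int (Z n) (cα j))]
      congr 1
      funext q
      unfold SeqAux.gF
      rw [← Finset.mul_sum, hlin_decomp q]
    have hjbound : ∀ j, j < M →
        - G (Z n) (cα j) ≤ (∑ l, |cα j l|) * BX * T := by
      intro j hjM
      have hAjnn : 0 ≤ ∑ l, |cα j l| := Finset.sum_nonneg fun l _ => abs_nonneg _
      have hfj : G (Z (i + j + 1)) (cα j) = 0 := by
        have h := foc (i + j) (by omega) (cα j) (hsupp_cα j) 0
        have he : (fun l => cα j l + 0 * Z (i + j) l) = cα j := by funext l; ring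
        rwa [he] at h
      have htel : G (Z n) (cα j)
          = ∑ k ∈ Finset.Ico (j + 1) M,
              (G (Z (i + k + 1)) (cα j) - G (Z (i + k)) (cα j)) := by
        have h1 := SeqAux.telescope_Ico (fun k => G (Z (i + k)) (cα j))
          (show j + 1 ≤ M by omega)
        have h2 : ∑ k ∈ Finset.Ico (j + 1) M,
            (G (Z (i + k + 1)) (cα j) - G (Z (i + k)) (cα j))
            = ∑ k ∈ Finset.Ico (j + 1) M,
              (G (Z (i + (k + 1))) (cα j) - G (Z (i + k)) (cα j)) :=
          Finset.sum_congr rfl fun k _ =>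
            by rw [show i + (k + 1) = i + k + 1 from rfl]
        rw [h2, h1, hn, show i + (j + 1) = i + j + 1 from rfl, hfj, sub_zero]
      have hterm : ∀ k ∈ Finset.Ico (j + 1) M,
          G (Z (i + k + 1)) (cα j) - G (Z (i + k)) (cα j)
            ≥ -(Real.sqrt ((LL (Z (i + k)) - LL (Z (i + k + 1))) / 2)
                * ((∑ l, |cα j l|) * BX)) := by
        intro k hkmem
        rw [Finset.mem_Ico] at hkmem
        have hkD : i + k < D := by omega
        have hdiff : G (Z (i + k + 1)) (cα j) - G (Z (i + k)) (cα j)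
            = ∫ q, (sigmoid (SeqAux.linF (Z (i + k + 1)) q)
                - sigmoid (SeqAux.linF (Z (i + k)) q)) * SeqAux.linF (cα j) q ∂μ := by
          rw [hGdef]
          simp only
          rw [← integral_sub (SeqAux.int_g μ hy hX2int _ _) (SeqAux.int_g μ hy hX2int _ _)]
          congr 1
          funext q
          unfold SeqAux.gF
          ring
        have hcs := SeqAux.integral_cs μ
          (fun q => sigmoid (SeqAux.linF (Z (i + k + 1)) q)
            - sigmoid (SeqAux.linF (Z (i + k)) q))
          (fun q => SeqAux.linF (cα j) q)
          (SeqAux.int_dsig_sq μ _ _) (SeqAux.int_linsq μ hX2int _)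
          (SeqAux.int_dsig_mul μ hX2int _ _ _)
        have hAnn : 0 ≤ ∫ q, (sigmoid (SeqAux.linF (Z (i + k + 1)) q)
            - sigmoid (SeqAux.linF (Z (i + k)) q)) ^ 2 ∂μ :=
          integral_nonneg fun q => sq_nonneg _
        have habs : |∫ q, (sigmoid (SeqAux.linF (Z (i + k + 1)) q)
                - sigmoid (SeqAux.linF (Z (i + k)) q)) * SeqAux.linF (cα j) q ∂μ|
            ≤ Real.sqrt (∫ q, (sigmoid (SeqAux.linF (Z (i + k + 1)) q)
                - sigmoid (SeqAux.linF (Z (i + k)) q)) ^ 2 ∂μ)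
              * Real.sqrt (∫ q, (SeqAux.linF (cα j) q) ^ 2 ∂μ) := by
          rw [← Real.sqrt_sq_eq_abs, ← Real.sqrt_mul hAnn]
          exact Real.sqrt_le_sqrt hcs
        have hA := hbreg (i + k) hkD
        have hC := SeqAux.int_linsq_le μ hX2int hBX hX2 (cα j)
        have hCs : Real.sqrt (∫ q, (SeqAux.linF (cα j) q) ^ 2 ∂μ)
            ≤ (∑ l, |cα j l|) * BX := by
          calc Real.sqrt (∫ q, (SeqAux.linF (cα j) q) ^ 2 ∂μ)
              ≤ Real.sqrt (((∑ l, |cα j l|) * BX) ^ 2) := Real.sqrt_le_sqrt hC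
            _ = (∑ l, |cα j l|) * BX := Real.sqrt_sq (by positivity)
        have hfin : |G (Z (i + k + 1)) (cα j) - G (Z (i + k)) (cα j)|
            ≤ Real.sqrt ((LL (Z (i + k)) - LL (Z (i + k + 1))) / 2)
              * ((∑ l, |cα j l|) * BX) := by
          rw [hdiff]
          calc |∫ q, (sigmoid (SeqAux.linF (Z (i + k + 1)) q)
                - sigmoid (SeqAux.linF (Z (i + k)) q)) * SeqAux.linF (cα j) q ∂μ|
              ≤ Real.sqrt (∫ q, (sigmoid (SeqAux.linF (Z (i + k + 1)) q)
                - sigmoid (SeqAux.linF (Z (i + k)) q)) ^ 2 ∂μ)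
                * Real.sqrt (∫ q, (SeqAux.linF (cα j) q) ^ 2 ∂μ) := habs
            _ ≤ Real.sqrt ((LL (Z (i + k)) - LL (Z (i + k + 1))) / 2)
                * ((∑ l, |cα j l|) * BX) := by
                apply mul_le_mul (Real.sqrt_le_sqrt hA) hCs (Real.sqrt_nonneg _)
                  (Real.sqrt_nonneg _)
        have := neg_abs_le (G (Z (i + k + 1)) (cα j) - G (Z (i + k)) (cα j))
        linarith [hfin, this]
      have hsum1 : - G (Z n) (cα j)
          ≤ ∑ k ∈ Finset.Ico (j + 1) M,
              Real.sqrt ((LL (Z (i + k)) - LL (Z (i + k + 1))) / 2)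
                * ((∑ l, |cα j l|) * BX) := by
        rw [htel, ← Finset.sum_neg_distrib]
        apply Finset.sum_le_sum
        intro k hk
        have := hterm k hk
        linarith
      have hsum2 : ∑ k ∈ Finset.Ico (j + 1) M,
            Real.sqrt ((LL (Z (i + k)) - LL (Z (i + k + 1))) / 2)
              * ((∑ l, |cα j l|) * BX)
          ≤ ∑ k ∈ Finset.Ico 1 M,
            Real.sqrt ((LL (Z (i + k)) - LL (Z (i + k + 1))) / 2)
              * ((∑ l, |cα j l|) * BX) := by
        apply Finset.sum_le_sum_of_subset_of_nonneg
        · apply Finset.Ico_subset_Ico (by omega) le_rfl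
        · intro k _ _
          positivity
      have hsum3 : ∑ k ∈ Finset.Ico 1 M,
            Real.sqrt ((LL (Z (i + k)) - LL (Z (i + k + 1))) / 2)
              * ((∑ l, |cα j l|) * BX)
          = (∑ l, |cα j l|) * BX * T := by
        rw [hT, Finset.mul_sum]
        exact Finset.sum_congr rfl fun k _ => by ring
      linarith [hsum1, hsum2, hsum3.le, hsum3.ge]
    have hsumAj : ∑ j ∈ Finset.range M, (∑ l, |cα j l|) = ∑ l, |α l| := by
      rw [Finset.sum_comm]
      refine Finset.sum_congr rfl fun l _ => ?_
      rw [hcα]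
      simp only
      have hite : ∀ j, |if J l = j then α l else 0| = if J l = j then |α l| else 0 := by
        intro j
        split <;> simp
      simp_rw [hite]
      rw [Finset.sum_ite_eq (Finset.range M) (J l) (fun _ => |α l|),
        if_pos (Finset.mem_range.mpr (hJspec l).1)]
    have hfinal : - G (Z n) α ≤ Bp * BX * T := by
      rw [hGdecomp, ← Finset.sum_neg_distrib]
      calc ∑ j ∈ Finset.range M, - G (Z n) (cα j)
          ≤ ∑ j ∈ Finset.range M, (∑ l, |cα j l|) * BX * T :=
            Finset.sum_le_sum fun j hj => hjbound j (Finset.mem_range.mp hj)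
        _ = (∑ j ∈ Finset.range M, (∑ l, |cα j l|)) * (BX * T) := by
            rw [Finset.sum_mul]
            exact Finset.sum_congr rfl fun j _ => by ring
        _ = (∑ l, |α l|) * (BX * T) := by rw [hsumAj]
        _ ≤ Bp * (BX * T) := by
            apply mul_le_mul_of_nonneg_right hα1
            positivity
        _ = Bp * BX * T := by ring
    linarith [h0, hgrad, hfinal]
  -- rewrite the goal
  have goal_eq1 : bceLossFn μ (seqLogit w v D) = LL (Z D) := by
    rw [SeqAux.bce_seq μ w v D]
  have goal_eq2 : bceLossFn μ (fun x => ∑ l, α l * x l) = LL α := by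
    rw [SeqAux.bce_eq μ α]
  rw [goal_eq1, goal_eq2]
  -- pigeonhole over disjoint blocks
  set Dk : ℕ → ℝ := fun k => LL (Z k) - LL (Z (k + 1)) with hDkdef
  have hDknn : ∀ k, k < D → 0 ≤ Dk k := by
    intro k hk
    rw [hDkdef]
    simp only
    linarith [hdec k hk]
  set K := D / M with hKdef
  have hM0 : 0 < M := hM
  have hK1 : 1 ≤ K := (Nat.one_le_div_iff hM0).mpr hMD
  have hKM : K * M ≤ D := by
    have h := Nat.div_mul_le_self D M
    rw [hKdef]
    exact h
  have hDlt : D < (K + 1) * M := by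
    have h1 : M * K + D % M = D := by rw [hKdef]; exact Nat.div_add_mod D M
    have h2 : D % M < M := Nat.mod_lt D hM0
    have h3 : (K + 1) * M = M * K + M := by ring
    linarith
  have hD2KM : D ≤ 2 * K * M := by
    have h1 : (K + 1) * M ≤ 2 * K * M := Nat.mul_le_mul_right M (by omega)
    omega
  have hblocks : ∀ N : ℕ,
      ∑ t ∈ Finset.range N, (∑ k ∈ Finset.Ico (t * M) (t * M + M), Dk k)
        = ∑ k ∈ Finset.range (N * M), Dk k := by
    intro N
    induction N with
    | zero => simp
    | succ m ih =>
      rw [Finset.sum_range_succ, ih, Finset.range_eq_Ico,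
        show (m + 1) * M = m * M + M from by ring]
      rw [Finset.range_eq_Ico]; exact Finset.sum_Ico_consecutive Dk (Nat.zero_le _) (Nat.le_add_right _ _)
  have hbudget : ∑ t ∈ Finset.range K, (∑ k ∈ Finset.Ico (t * M) (t * M + M), Dk k)
      ≤ Real.log 2 := by
    rw [hblocks K]
    have hs : ∑ k ∈ Finset.range (K * M), Dk k ≤ ∑ k ∈ Finset.range D, Dk k := by
      apply Finset.sum_le_sum_of_subset_of_nonneg (Finset.range_subset_range.mpr hKM)
      intro k hk _
      exact hDknn k (Finset.mem_range.mp hk)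
    have htot : ∑ k ∈ Finset.range D, Dk k = LL (Z 0) - LL (Z D) :=
      Finset.sum_range_sub' (fun k => LL (Z k)) D
    rw [htot] at hs
    linarith [hLL0, hLLD]
  have hK0 : (K : ℝ) ≠ 0 := by
    have : 0 < K := hK1
    positivity
  obtain ⟨t, htK, htle⟩ := Finset.exists_le_of_sum_le
    (s := Finset.range K)
    (f := fun t => ∑ k ∈ Finset.Ico (t * M) (t * M + M), Dk k)
    (g := fun _ => Real.log 2 / K)
    (Finset.nonempty_range_iff.mpr (by omega : K ≠ 0))
    (by
      rw [Finset.sum_const, Finset.card_range, nsmul_eq_mul]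
      have hc : (K : ℝ) * (Real.log 2 / K) = Real.log 2 := by field_simp
      rw [hc]
      exact hbudget)
  rw [Finset.mem_range] at htK
  have hiM : t * M + M ≤ D := by
    have h1 : (t + 1) * M ≤ K * M := Nat.mul_le_mul_right M (by omega)
    have h2 : (t + 1) * M = t * M + M := by ring
    omega
  have hblk := block (t * M) hiM
  set T : ℝ := ∑ k ∈ Finset.Ico 1 M,
    Real.sqrt ((LL (Z (t * M + k)) - LL (Z (t * M + k + 1))) / 2) with hTdef
  have hTnn : 0 ≤ T := Finset.sum_nonneg fun k _ => Real.sqrt_nonneg _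
  -- bound T via Cauchy-Schwarz
  have hTsq : T ^ 2 ≤ (M : ℝ) * ∑ k ∈ Finset.Ico 1 M, (Dk (t * M + k) / 2) := by
    have hcs := Finset.sum_mul_sq_le_sq_mul_sq (Finset.Ico 1 M) (fun _ => (1 : ℝ))
      (fun k => Real.sqrt ((LL (Z (t * M + k)) - LL (Z (t * M + k + 1))) / 2))
    have h1 : ∑ k ∈ Finset.Ico 1 M,
        (1 : ℝ) * Real.sqrt ((LL (Z (t * M + k)) - LL (Z (t * M + k + 1))) / 2) = T := by
      rw [hTdef]
      exact Finset.sum_congr rfl fun k _ => one_mul _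
    have h2 : ∑ k ∈ Finset.Ico 1 M, ((1 : ℝ)) ^ 2 ≤ (M : ℝ) := by
      rw [Finset.sum_const, Nat.card_Ico, nsmul_eq_mul, one_pow, mul_one]
      exact_mod_cast Nat.sub_le M 1
    have h3 : ∑ k ∈ Finset.Ico 1 M,
        (Real.sqrt ((LL (Z (t * M + k)) - LL (Z (t * M + k + 1))) / 2)) ^ 2
        = ∑ k ∈ Finset.Ico 1 M, (Dk (t * M + k) / 2) := by
      refine Finset.sum_congr rfl fun k hk => ?_
      rw [Finset.mem_Ico] at hk
      have hkD : t * M + k < D := by omega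
      rw [Real.sq_sqrt (by linarith [hDknn _ hkD, hdec _ hkD] :
        0 ≤ (LL (Z (t * M + k)) - LL (Z (t * M + k + 1))) / 2)]
    rw [h1, h3] at hcs
    have hsumnn : 0 ≤ ∑ k ∈ Finset.Ico 1 M, (Dk (t * M + k) / 2) := by
      apply Finset.sum_nonneg
      intro k hk
      rw [Finset.mem_Ico] at hk
      have hkD : t * M + k < D := by omega
      have := hDknn (t * M + k) hkD
      positivity
    exact le_trans hcs (mul_le_mul_of_nonneg_right h2 hsumnn)
  -- reindex and bound block sum
  have hreindex : ∑ k ∈ Finset.Ico 1 M, Dk (t * M + k)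
      ≤ ∑ k ∈ Finset.Ico (t * M) (t * M + M), Dk k := by
    have h1 : ∑ k ∈ Finset.Ico 1 M, Dk (t * M + k)
        = ∑ k ∈ Finset.Ico (t * M + 1) (t * M + M), Dk k := by
      rw [Finset.sum_Ico_eq_sum_range, Finset.sum_Ico_eq_sum_range]
      rw [show t * M + M - (t * M + 1) = M - 1 from by omega]
      refine Finset.sum_congr rfl fun r _ => ?_
      rw [show t * M + (1 + r) = t * M + 1 + r from by omega]
    rw [h1]
    apply Finset.sum_le_sum_of_subset_of_nonneg (Finset.Ico_subset_Ico (by omega) le_rfl)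
    intro k hk _
    rw [Finset.mem_Ico] at hk
    exact hDknn k (by omega)
  have hTsum : ∑ k ∈ Finset.Ico 1 M, (Dk (t * M + k) / 2) ≤ Real.log 2 / K / 2 := by
    rw [← Finset.sum_div]
    have := le_trans hreindex htle
    linarith
  -- numeric endgame
  have hD0r : (0 : ℝ) < D := by exact_mod_cast hD0
  have hsqrtD : 0 < Real.sqrt D := Real.sqrt_pos.mpr hD0r
  have hlog1 : Real.log 2 ≤ 1 := by
    have := Real.log_two_lt_d9
    linarith
  have hKr : (0 : ℝ) < K := by exact_mod_cast hK1
  have hMr : (0 : ℝ) < M := by exact_mod_cast hM0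
  have hD2KMr : (D : ℝ) ≤ 2 * K * M := by exact_mod_cast hD2KM
  have hRle : (M : ℝ) * (Real.log 2 / K / 2) ≤ (M : ℝ) ^ 2 / D := by
    have heq : (M : ℝ) * (Real.log 2 / K / 2) = ((M : ℝ) * Real.log 2) / (2 * K) := by
      field_simp
    rw [heq, div_le_div_iff₀ (by positivity) hD0r]
    have s1 : (M : ℝ) * Real.log 2 * D ≤ (M : ℝ) * 1 * D :=
      mul_le_mul_of_nonneg_right (mul_le_mul_of_nonneg_left hlog1 hMr.le) hD0r.le
    have s2 : (M : ℝ) * 1 * D ≤ (M : ℝ) * (2 * K * M) := by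
      rw [mul_one]
      exact mul_le_mul_of_nonneg_left hD2KMr hMr.le
    have s3 : (M : ℝ) * (2 * K * M) = (M : ℝ) ^ 2 * (2 * K) := by ring
    linarith
  have hTle : T ≤ (M : ℝ) / Real.sqrt D := by
    have h1 : T = Real.sqrt (T ^ 2) := (Real.sqrt_sq hTnn).symm
    have h2 : T ^ 2 ≤ (M : ℝ) ^ 2 / D := by
      calc T ^ 2 ≤ (M : ℝ) * ∑ k ∈ Finset.Ico 1 M, (Dk (t * M + k) / 2) := hTsq
        _ ≤ (M : ℝ) * (Real.log 2 / K / 2) := by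
            apply mul_le_mul_of_nonneg_left hTsum hMr.le
        _ ≤ (M : ℝ) ^ 2 / D := hRle
    rw [h1]
    calc Real.sqrt (T ^ 2) ≤ Real.sqrt ((M : ℝ) ^ 2 / D) := Real.sqrt_le_sqrt h2
      _ = (M : ℝ) / Real.sqrt D := by
          rw [Real.sqrt_div (sq_nonneg _), Real.sqrt_sq hMr.le]
  calc LL (Z D) - LL α ≤ Bp * BX * T := hblk
    _ ≤ Bp * BX * ((M : ℝ) / Real.sqrt D) := by
        apply mul_le_mul_of_nonneg_left hTle (by positivity)
    _ = Bp * BX * M / Real.sqrt D := by ring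
end
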